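/- arXiv:2110.07945 — 8 statements merged into one kernel-verified Lean document; each statement's English description precedes it below -/
import Mathlib

section
/- For every coloring c : 2^{<ω} → 2 there exist a perfect tree p ⊆ 2^{<ω} and an infinite set A ⊆ ω such that c is constant on p↾A. Equivalently, the family [ω]^ω of all infinite subsets of ω is a Halpern–Läuchli family. -/
open Set

/-- `p ⊆ 2^{<ω}` is a tree: nonempty, closed under initial segments,
without maximal elements. -/
def IsTree (p : Set (List Bool)) : Prop :=
  p.Nonempty ∧ (∀ s ∈ p, ∀ t : List Bool, t <+: s → t ∈ p) ∧
    ∀ s ∈ p, ∃ t ∈ p, s <+: t ∧ s ≠ t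

/-- `p` is a perfect tree: a tree in which every node has two
incomparable extensions in `p`. -/
def IsPerfectTree (p : Set (List Bool)) : Prop :=
  IsTree p ∧ ∀ s ∈ p, ∃ t₀ ∈ p, ∃ t₁ ∈ p,
    s <+: t₀ ∧ s <+: t₁ ∧ ¬ t₀ <+: t₁ ∧ ¬ t₁ <+: t₀

/-- `p↾A`: the nodes of `p` whose length belongs to `A`. -/
def restrictTree (p : Set (List Bool)) (A : Set ℕ) : Set (List Bool) :=
  {s ∈ p | s.length ∈ A}

/-- `R` is a Halpern–Läuchli family: for every coloring `c : 2^{<ω} → 2`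
there are a perfect tree `p` and `A ∈ R` with `c` constant on `p↾A`. -/
def IsHLFamily (R : Set (Set ℕ)) : Prop :=
  ∀ c : List Bool → Bool, ∃ p : Set (List Bool), ∃ A ∈ R,
    IsPerfectTree p ∧ ∃ i : Bool, ∀ s ∈ restrictTree p A, c s = i

/-- `x ∈ 2^ω` is a branch of `p`. -/
def IsBranch (p : Set (List Bool)) (x : ℕ → Bool) : Prop :=
  ∀ n : ℕ, (List.ofFn fun i : Fin n => x i) ∈ p

/-- `R` is a reaping family. -/
def IsReapingFamily (R : Set (Set ℕ)) : Prop :=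
  ∀ B : Set ℕ, B.Infinite → ∃ A ∈ R, A ⊆ B ∨ A ∩ B = ∅

/-- `I` is an ideal on `X`: contains all finite sets, is proper, and is
closed under subsets and finite unions. -/
def IsIdealOn {X : Type*} (I : Set (Set X)) : Prop :=
  (∀ A : Set X, A.Finite → A ∈ I) ∧ (univ : Set X) ∉ I ∧
    (∀ A B : Set X, A ⊆ B → B ∈ I → A ∈ I) ∧
    ∀ A B : Set X, A ∈ I → B ∈ I → A ∪ B ∈ I

/-- An ideal `I` on `ω` is HL if the family of infinite sets in `I⁺` is
a Halpern–Läuchli family. -/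
def IsHLIdeal (I : Set (Set ℕ)) : Prop :=
  IsHLFamily {A | A ∉ I ∧ A.Infinite}

/-- An ideal on a countable set `X` is HL if its image under some
(equivalently, any) bijection `X ≃ ℕ` is an HL ideal on `ω`. -/
def IsHLIdealOnCountable {X : Type*} (I : Set (Set X)) : Prop :=
  ∃ e : X ≃ ℕ, IsHLIdeal ((fun A : Set X => e '' A) '' I)

/-- The Katětov order on ideals. -/
def KatetovLE {X Y : Type*} (I : Set (Set X)) (J : Set (Set Y)) : Prop :=
  ∃ f : Y → X, ∀ A ∈ I, f ⁻¹' A ∈ J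

/-- The reaping number `𝔯`. -/
noncomputable def frakR : Cardinal :=
  sInf {κ | ∃ R : Set (Set ℕ), (∀ A ∈ R, A.Infinite) ∧ IsReapingFamily R ∧
    κ = Cardinal.mk ↥R}

/-- The density zero ideal `Z`. -/
def densityZero : Set (Set ℕ) :=
  {A | Filter.Tendsto (fun n : ℕ => ((A ∩ Iio n).ncard : ℝ) / (n : ℝ))
    Filter.atTop (nhds 0)}



namespace HLaux

/-- Two comparable lists of equal length are equal helpers. -/
lemma prefix_antisymm_len {u v : List Bool} (h : u <+: v ∨ v <+: u)
    (hl : u.length = v.length) : u = v := by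
  rcases h with h | h
  · exact h.eq_of_length hl
  · exact (h.eq_of_length hl.symm).symm

lemma not_prefix_of_ne_append {w : List Bool} {a b : Bool} (hab : a ≠ b) :
    ¬ (w ++ [a]) <+: (w ++ [b]) := by
  intro h
  have := h.eq_of_length (by simp)
  simp at this
  exact hab this

/-- The set of one-step extensions of members of `S`. -/
def childrenF (S : Finset (List Bool)) : Finset (List Bool) :=
  S.image (· ++ [false]) ∪ S.image (· ++ [true])

lemma mem_childrenF {S : Finset (List Bool)} {u : List Bool} :
    u ∈ childrenF S ↔ ∃ t ∈ S, ∃ b : Bool, u = t ++ [b] := by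
  simp only [childrenF, Finset.mem_union, Finset.mem_image]
  constructor
  · rintro (⟨t, ht, rfl⟩ | ⟨t, ht, rfl⟩)
    · exact ⟨t, ht, false, rfl⟩
    · exact ⟨t, ht, true, rfl⟩
  · rintro ⟨t, ht, b, rfl⟩
    cases b
    · exact Or.inl ⟨t, ht, rfl⟩
    · exact Or.inr ⟨t, ht, rfl⟩

variable (T : Finset (List Bool) → List Bool → List Bool)

/-- Levels of the fusion construction. -/
noncomputable def hlSeq : ℕ → Finset (List Bool)
  | 0 => ({[]} : Finset (List Bool)).image (T {[]})
  | k+1 => (childrenF (hlSeq k)).image (T (childrenF (hlSeq k)))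

variable (N : Finset (List Bool) → ℕ)

noncomputable def hlLvl : ℕ → ℕ
  | 0 => N {[]}
  | k+1 => N (childrenF (hlSeq T k))

variable {T N} {c : List Bool → Bool}
variable (hT : ∀ F : Finset (List Bool), ∀ s ∈ F,
    s <+: T F s ∧ (T F s).length = N F ∧ c (T F s) = false)

include hT

lemma hl_mem (k : ℕ) : ∀ t ∈ hlSeq T k, t.length = hlLvl T N k ∧ c t = false := by
  cases k with
  | zero =>
    intro t ht
    simp only [hlSeq, Finset.mem_image, Finset.mem_singleton] at ht
    obtain ⟨s, rfl, rfl⟩ := ht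
    exact ⟨(hT _ _ (Finset.mem_singleton_self _)).2.1,
      (hT _ _ (Finset.mem_singleton_self _)).2.2⟩
  | succ k =>
    intro t ht
    simp only [hlSeq, Finset.mem_image] at ht
    obtain ⟨s, hs, rfl⟩ := ht
    exact ⟨(hT _ _ hs).2.1, (hT _ _ hs).2.2⟩


lemma hl_nonempty (k : ℕ) : (hlSeq T k).Nonempty := by
  induction k with
  | zero => exact Finset.Nonempty.image ⟨[], Finset.mem_singleton_self _⟩ _
  | succ k ih =>
    obtain ⟨t, ht⟩ := ih
    exact Finset.Nonempty.image ⟨t ++ [false],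
      mem_childrenF.2 ⟨t, ht, false, rfl⟩⟩ _

lemma hl_succ (k : ℕ) {t : List Bool} (ht : t ∈ hlSeq T k) (b : Bool) :
    ∃ u ∈ hlSeq T (k+1), t ++ [b] <+: u := by
  have hs : t ++ [b] ∈ childrenF (hlSeq T k) := mem_childrenF.2 ⟨t, ht, b, rfl⟩
  exact ⟨T (childrenF (hlSeq T k)) (t ++ [b]),
    by simp only [hlSeq, Finset.mem_image]; exact ⟨_, hs, rfl⟩,
    (hT _ _ hs).1⟩

lemma hl_pred (k : ℕ) {u : List Bool} (hu : u ∈ hlSeq T (k+1)) :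
    ∃ t ∈ hlSeq T k, ∃ b : Bool, t ++ [b] <+: u := by
  simp only [hlSeq, Finset.mem_image] at hu
  obtain ⟨s, hs, rfl⟩ := hu
  obtain ⟨t, ht, b, rfl⟩ := mem_childrenF.1 hs
  exact ⟨t, ht, b, (hT _ _ hs).1⟩

lemma hl_lvl_lt (k : ℕ) : hlLvl T N k < hlLvl T N (k+1) := by
  obtain ⟨t, ht⟩ := hl_nonempty hT k
  obtain ⟨u, hu, hpre⟩ := hl_succ hT k ht false
  have h1 := (hl_mem hT k t ht).1
  have h2 := (hl_mem hT (k+1) u hu).1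
  have := hpre.length_le
  simp only [List.length_append, List.length_cons, List.length_nil] at this
  omega

lemma hl_lvl_mono : StrictMono (hlLvl T N) :=
  strictMono_nat_of_lt_succ (hl_lvl_lt hT)

lemma hl_proj : ∀ m k, k ≤ m → ∀ t ∈ hlSeq T m, ∀ u : List Bool,
    u <+: t → u.length = hlLvl T N k → u ∈ hlSeq T k := by
  intro m
  induction m with
  | zero =>
    intro k hk t ht u hut hlen
    interval_cases k
    have := (hl_mem hT 0 t ht).1
    rwa [hut.eq_of_length (by omega)]
  | succ m ih =>
    intro k hk t ht u hut hlen
    rcases Nat.lt_or_ge k (m+1) with hk' | hk'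
    · obtain ⟨t', ht', b, hpre⟩ := hl_pred hT m ht
      have ht'l := (hl_mem hT m t' ht').1
      have hle : u.length ≤ t'.length := by
        rw [hlen, ht'l]
        exact (hl_lvl_mono hT).monotone (Nat.lt_succ_iff.1 hk')
      have hcomp := List.prefix_or_prefix_of_prefix hut
        ((List.prefix_append t' [b]).trans hpre)
      have hut' : u <+: t' := by
        rcases hcomp with h | h
        · exact h
        · rw [prefix_antisymm_len (Or.inr h) (le_antisymm h.length_le hle).symm]
      exact ih k (Nat.lt_succ_iff.1 hk') t' ht' u hut' hlen
    · have hk2 : k = m + 1 := le_antisymm hk hk'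
      subst hk2
      have := (hl_mem hT (m+1) t ht).1
      rwa [hut.eq_of_length (by omega)]

end HLaux

/-- The Halpern–Läuchli theorem for one tree: the family of all infinite
subsets of `ω` is a Halpern–Läuchli family. -/
theorem stmt0 : ∀ c : List Bool → Bool, ∃ p : Set (List Bool), ∃ A : Set ℕ,
    IsPerfectTree p ∧ A.Infinite ∧ ∃ i : Bool, ∀ s ∈ restrictTree p A, c s = i := by
  intro c
  by_cases h : ∀ F : Finset (List Bool), ∃ n : ℕ, ∀ s ∈ F, ∃ t : List Bool,
      s <+: t ∧ t.length = n ∧ c t = false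
  · -- color `false` is "winning": build a strong subtree colored `false`.
    choose N hN using h
    choose T hT0 using fun F s (hs : s ∈ F) => hN F s hs
    set T' : Finset (List Bool) → List Bool → List Bool :=
      fun F s => if hs : s ∈ F then T F s hs else [] with hT'def
    have hT : ∀ F : Finset (List Bool), ∀ s ∈ F,
        s <+: T' F s ∧ (T' F s).length = N F ∧ c (T' F s) = false := by
      intro F s hs
      simp only [hT'def, dif_pos hs]
      exact hT0 F s hs
    set S := HLaux.hlSeq T' with hSdef
    set n := HLaux.hlLvl T' N with hndef
    refine ⟨{u | ∃ k, ∃ t ∈ S k, u <+: t}, Set.range n, ⟨⟨?_, ?_, ?_⟩, ?_⟩,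
      Set.infinite_range_of_injective (HLaux.hl_lvl_mono hT).injective,
      false, ?_⟩
    · obtain ⟨t, ht⟩ := HLaux.hl_nonempty (T := T') (N := N) hT 0
      exact ⟨t, 0, t, ht, List.prefix_rfl⟩
    · rintro s ⟨k, t, ht, hst⟩ u hus
      exact ⟨k, t, ht, hus.trans hst⟩
    · rintro s ⟨k, t, ht, hst⟩
      obtain ⟨u, hu, hpre⟩ := HLaux.hl_succ hT k ht false
      refine ⟨u, ⟨k+1, u, hu, List.prefix_rfl⟩,
        hst.trans ((List.prefix_append t [false]).trans hpre), ?_⟩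
      rintro rfl
      have h1 := hst.length_le
      have h2 := hpre.length_le
      simp only [List.length_append, List.length_cons, List.length_nil] at h2
      omega
    · rintro s ⟨k, t, ht, hst⟩
      obtain ⟨u₀, hu₀, hpre₀⟩ := HLaux.hl_succ hT k ht false
      obtain ⟨u₁, hu₁, hpre₁⟩ := HLaux.hl_succ hT k ht true
      refine ⟨u₀, ⟨k+1, u₀, hu₀, List.prefix_rfl⟩,
        u₁, ⟨k+1, u₁, hu₁, List.prefix_rfl⟩,
        hst.trans ((List.prefix_append t [false]).trans hpre₀),
        hst.trans ((List.prefix_append t [true]).trans hpre₁), ?_, ?_⟩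
      · intro hcon
        have := HLaux.prefix_antisymm_len
          (List.prefix_or_prefix_of_prefix (hpre₀.trans hcon) hpre₁) (by simp)
        simp at this
      · intro hcon
        have := HLaux.prefix_antisymm_len
          (List.prefix_or_prefix_of_prefix (hpre₁.trans hcon) hpre₀) (by simp)
        simp at this
    · rintro s ⟨⟨m, t, ht, hst⟩, k, hk⟩
      have htl := (HLaux.hl_mem hT m t ht).1
      rw [← hndef] at htl
      have hsl := hst.length_le
      have hkm : k ≤ m := by
        have h1 : n k ≤ n m := by omega
        exact ((HLaux.hl_lvl_mono hT).le_iff_le).1 h1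
      exact (HLaux.hl_mem hT k s
        (HLaux.hl_proj hT m k hkm t ht s hst hk.symm)).2
  · -- otherwise some node has a cone of extensions colored `true` on many levels.
    push_neg at h
    obtain ⟨F, hF⟩ := h
    have hF' : ∀ n : ℕ, ∃ s, s ∈ F ∧ ∀ t : List Bool,
        s <+: t → t.length = n → c t = true := by
      intro n
      obtain ⟨s, hs, hst⟩ := hF n
      exact ⟨s, hs, fun t h1 h2 => by
        have := hst t h1 h2
        simpa using this⟩
    choose g hg1 hg2 using hF'
    have hfib : ∃ y : {s // s ∈ F},
        ((fun n => (⟨g n, hg1 n⟩ : {s // s ∈ F})) ⁻¹' {y}).Infinite := by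
      obtain ⟨y, hy⟩ := Finite.exists_infinite_fiber
        (fun n => (⟨g n, hg1 n⟩ : {s // s ∈ F}))
      exact ⟨y, Set.infinite_coe_iff.1 hy⟩
    obtain ⟨⟨s, hsF⟩, hinf⟩ := hfib
    set A : Set ℕ := ((fun n => (⟨g n, hg1 n⟩ : {s // s ∈ F})) ⁻¹' {⟨s, hsF⟩})
      \ Set.Iio s.length with hAdef
    have hAinf : A.Infinite := hinf.diff (Set.finite_Iio _)
    have hAs : ∀ m ∈ A, g m = s ∧ s.length ≤ m := by
      intro m hm
      obtain ⟨h1, h2⟩ := hm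
      simp only [Set.mem_preimage, Set.mem_singleton_iff, Subtype.mk.injEq] at h1
      simp only [Set.mem_Iio, not_lt] at h2
      exact ⟨h1, h2⟩
    have hcone : ∀ t : List Bool, t <+: s ∨ s <+: t →
        ∃ w : List Bool, s <+: w ∧ t <+: w := by
      rintro t (ht | ht)
      · exact ⟨s, List.prefix_rfl, ht⟩
      · exact ⟨t, ht, List.prefix_rfl⟩
    refine ⟨{t | t <+: s ∨ s <+: t}, A, ⟨⟨⟨s, Or.inl List.prefix_rfl⟩, ?_, ?_⟩, ?_⟩,
      hAinf, true, ?_⟩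
    · rintro t (ht | ht) u hut
      · exact Or.inl (hut.trans ht)
      · rcases List.prefix_or_prefix_of_prefix hut ht with h | h
        · exact Or.inl h
        · exact Or.inr h
    · intro t ht
      obtain ⟨w, hw1, hw2⟩ := hcone t ht
      refine ⟨w ++ [false], Or.inr (hw1.trans (List.prefix_append w [false])),
        hw2.trans (List.prefix_append w [false]), ?_⟩
      intro hcon
      have h1 := hw2.length_le
      have := congrArg List.length hcon
      simp at this
      omega
    · intro t ht
      obtain ⟨w, hw1, hw2⟩ := hcone t ht
      refine ⟨w ++ [false], Or.inr (hw1.trans (List.prefix_append w [false])),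
        w ++ [true], Or.inr (hw1.trans (List.prefix_append w [true])),
        hw2.trans (List.prefix_append w [false]),
        hw2.trans (List.prefix_append w [true]),
        HLaux.not_prefix_of_ne_append (by simp),
        HLaux.not_prefix_of_ne_append (by simp)⟩
    · rintro t ⟨ht, htA⟩
      obtain ⟨h1, h2⟩ := hAs _ htA
      have hst : s <+: t := by
        rcases ht with ht | ht
        · have := ht.length_le
          rw [ht.eq_of_length (by omega)]
        · exact ht
      have := hg2 t.length t (by rw [h1]; exact hst) rfl
      exact this
end

section
/- Every reaping family R ⊆ [ω]^ω of cardinality strictly less than the continuum 𝔠 = 2^{ℵ₀} is a Halpern–Läuchli family. -/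
open Set

/-- The length-`n` initial segment of a branch. -/
def seg (x : ℕ → Bool) (n : ℕ) : List Bool := List.ofFn fun i : Fin n => x i

@[simp] lemma seg_length (x : ℕ → Bool) (n : ℕ) : (seg x n).length = n := by
  simp [seg]

@[simp] lemma seg_getElem (x : ℕ → Bool) (n i : ℕ) (h : i < (seg x n).length) :
    (seg x n)[i] = x i := by
  simp [seg]

lemma seg_prefix (x : ℕ → Bool) {m n : ℕ} (h : m ≤ n) : seg x m <+: seg x n := by
  have : seg x m = (seg x n).take m := by
    apply List.ext_getElem <;> simp [h, List.getElem_take]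
  rw [this]
  exact List.take_prefix _ _

lemma seg_congr {x y : ℕ → Bool} {n : ℕ} (h : ∀ i < n, x i = y i) : seg x n = seg y n := by
  apply List.ext_getElem <;> simp_all

lemma prefix_eq_of_length {s t u : List Bool} (hs : s <+: u) (ht : t <+: u)
    (h : s.length = t.length) : s = t := by
  have := List.prefix_of_prefix_length_le hs ht h.le
  exact this.eq_of_length h

/-- The tree of initial segments of members of `P`. -/
def branchTree (P : Set (ℕ → Bool)) : Set (List Bool) :=
  {s | ∃ x ∈ P, s = seg x s.length}

lemma seg_mem_branchTree {P : Set (ℕ → Bool)} {x : ℕ → Bool} (hx : x ∈ P) (n : ℕ) :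
    seg x n ∈ branchTree P := ⟨x, hx, by rw [seg_length]⟩

lemma nbhd_basic {x : ℕ → Bool} (n : ℕ) :
    {y : ℕ → Bool | ∀ i < n, y i = x i} ∈ nhds x := by
  have hopen : IsOpen {y : ℕ → Bool | ∀ i < n, y i = x i} := by
    have : {y : ℕ → Bool | ∀ i < n, y i = x i} = (Iio n).pi fun i => {x i} := by
      ext y; simp [Set.mem_pi]
    rw [this]
    exact isOpen_set_pi (finite_Iio n) fun i _ => isOpen_discrete _
  exact hopen.mem_nhds fun i _ => rfl

lemma branchTree_perfect {P : Set (ℕ → Bool)} (hP : Perfect P) (hne : P.Nonempty) :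
    IsPerfectTree (branchTree P) := by
  obtain ⟨z, hz⟩ := hne
  have hsplit : ∀ s ∈ branchTree P, ∃ t₀ ∈ branchTree P, ∃ t₁ ∈ branchTree P,
      s <+: t₀ ∧ s <+: t₁ ∧ ¬ t₀ <+: t₁ ∧ ¬ t₁ <+: t₀ := by
    rintro s ⟨x, hx, hs⟩
    obtain ⟨n, rfl⟩ : ∃ n, s = seg x n := ⟨s.length, hs⟩
    have hacc := accPt_iff_nhds.mp (hP.acc x hx)
    obtain ⟨y, ⟨hyU, hyP⟩, hyx⟩ := hacc _ (nbhd_basic n)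
    have hex : ∃ m, y m ≠ x m := by
      by_contra h
      push_neg at h
      exact hyx (funext h)
    set m := Nat.find hex with hm
    have hmspec : y m ≠ x m := Nat.find_spec hex
    have hmmin : ∀ k < m, y k = x k := fun k hk => by
      have := Nat.find_min hex hk
      simpa using this
    have hnm : n ≤ m := by
      by_contra h
      push_neg at h
      exact hmspec (hyU m h)
    refine ⟨seg x (m + 1), seg_mem_branchTree hx _, seg y (m + 1),
      seg_mem_branchTree hyP _, seg_prefix x (by omega), ?_, ?_, ?_⟩
    · have : seg x n = seg y n := seg_congr fun i hi => (hmmin i (by omega)).symm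
      rw [this]
      exact seg_prefix y (by omega)
    · intro hpre
      have heq : seg x (m + 1) = seg y (m + 1) :=
        hpre.eq_of_length (by simp)
      have : x m = y m := by
        have h1 := List.getElem_of_eq heq (show m < (seg x (m+1)).length by simp)
        simpa using h1
      exact hmspec this.symm
    · intro hpre
      have heq : seg y (m + 1) = seg x (m + 1) :=
        hpre.eq_of_length (by simp)
      have : y m = x m := by
        have h1 := List.getElem_of_eq heq (show m < (seg y (m+1)).length by simp)
        simpa using h1
      exact hmspec this
  refine ⟨⟨⟨seg z 0, seg_mem_branchTree hz 0⟩, ?_, ?_⟩, hsplit⟩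
  · rintro s ⟨x, hx, hs⟩ t ht
    obtain ⟨n, rfl⟩ : ∃ n, s = seg x n := ⟨s.length, hs⟩
    have h1 : seg x t.length <+: seg x n := seg_prefix x (by simpa using ht.length_le)
    have h2 : t = seg x t.length :=
      prefix_eq_of_length ht h1 (by simp)
    exact h2 ▸ seg_mem_branchTree hx _
  · rintro s ⟨x, hx, hs⟩
    obtain ⟨n, rfl⟩ : ∃ n, s = seg x n := ⟨s.length, hs⟩
    exact ⟨seg x (n + 1), seg_mem_branchTree hx _, seg_prefix x (by omega),
      fun h => by have := congrArg List.length h; simp at this⟩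

/-- The set of branches on which `c` has value `i` at all levels in `A`. -/
def segSet (c : List Bool → Bool) (A : Set ℕ) (i : Bool) : Set (ℕ → Bool) :=
  {x | ∀ n ∈ A, c (seg x n) = i}

lemma segSet_closed (c : List Bool → Bool) (A : Set ℕ) (i : Bool) :
    IsClosed (segSet c A i) := by
  have : segSet c A i = ⋂ n ∈ A, {x : ℕ → Bool | c (seg x n) = i} := by
    ext x; simp [segSet]
  rw [this]
  refine isClosed_biInter fun n _ => ?_
  rw [← isOpen_compl_iff]
  rw [isOpen_iff_mem_nhds]
  intro x hx
  refine Filter.mem_of_superset (nbhd_basic n) fun y hy => ?_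
  have : seg y n = seg x n := seg_congr fun k hk => hy k hk
  simpa [this] using hx

lemma mk_fun_nat_bool : Cardinal.mk (ℕ → Bool) = Cardinal.continuum := by
  rw [Cardinal.mk_arrow, Cardinal.mk_bool, Cardinal.mk_nat, Cardinal.lift_id,
    Cardinal.lift_id, Cardinal.two_power_aleph0]

/-- Every reaping family of size less than the continuum is Halpern–Läuchli. -/
theorem stmt2 (R : Set (Set ℕ)) (hR : ∀ A ∈ R, A.Infinite)
    (hreap : IsReapingFamily R) (hcard : Cardinal.mk ↥R < Cardinal.continuum) :
    IsHLFamily R := by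
  intro c
  by_cases hbig : ∃ A ∈ R, ∃ i : Bool, ¬(segSet c A i).Countable
  · obtain ⟨A, hA, i, hunc⟩ := hbig
    obtain ⟨D, hDperf, hDne, hDsub⟩ :=
      exists_perfect_nonempty_of_isClosed_of_not_countable (segSet_closed c A i) hunc
    refine ⟨branchTree D, A, hA, branchTree_perfect hDperf hDne, i, ?_⟩
    rintro s ⟨⟨x, hxD, hs⟩, hlen⟩
    rw [hs]
    exact hDsub hxD _ hlen
  · push_neg at hbig
    -- all the closed sets are countable; their union has size < continuum
    set T : Set (ℕ → Bool) := ⋃ q : ↥R × Bool, segSet c q.1.1 q.2 with hT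
    have hcardT : Cardinal.mk ↥T < Cardinal.continuum := by
      calc Cardinal.mk ↥T ≤ Cardinal.mk (↥R × Bool) * ⨆ q : ↥R × Bool,
            Cardinal.mk ↥(segSet c q.1.1 q.2) := Cardinal.mk_iUnion_le _
        _ ≤ Cardinal.mk (↥R × Bool) * Cardinal.aleph0 := by
            refine mul_le_mul_right (ciSup_le' fun q => ?_) _
            have := (hbig q.1.1 q.1.2 q.2).to_subtype
            exact Cardinal.mk_le_aleph0
        _ < Cardinal.continuum := by
            refine Cardinal.mul_lt_of_lt Cardinal.aleph0_le_continuum ?_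
              Cardinal.aleph0_lt_continuum
            have h2 : Cardinal.mk (↥R × Bool) = Cardinal.mk ↥R * 2 := by
              simp [Cardinal.mk_prod]
            rw [h2]
            exact Cardinal.mul_lt_of_lt Cardinal.aleph0_le_continuum hcard
              ((Cardinal.nat_lt_aleph0 2).trans_le Cardinal.aleph0_le_continuum)
    have hex : ∃ x : ℕ → Bool, x ∉ T := by
      by_contra h
      push_neg at h
      have : T = univ := eq_univ_of_forall h
      rw [this, Cardinal.mk_univ, mk_fun_nat_bool] at hcardT
      exact lt_irrefl _ hcardT
    obtain ⟨x, hxT⟩ := hex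
    exfalso
    have hnot : ∀ A ∈ R, ∀ i : Bool, ∃ n ∈ A, c (seg x n) ≠ i := by
      intro A hA i
      have : x ∉ segSet c A i := fun hx =>
        hxT (mem_iUnion.mpr ⟨(⟨A, hA⟩, i), hx⟩)
      simpa [segSet] using this
    set B : Set ℕ := {n | c (seg x n) = true} with hB
    have hnsub : ∀ A ∈ R, ¬ A ⊆ B := by
      intro A hA hsub
      obtain ⟨n, hn, hne⟩ := hnot A hA true
      exact hne (hsub hn)
    have hninter : ∀ A ∈ R, A ∩ B ≠ ∅ := by
      intro A hA hint
      obtain ⟨n, hn, hne⟩ := hnot A hA false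
      have hnB : n ∈ B := by simpa [hB] using hne
      have hmem : n ∈ A ∩ B := ⟨hn, hnB⟩
      rw [hint] at hmem
      exact notMem_empty n hmem
    by_cases hBinf : B.Infinite
    · obtain ⟨A, hA, hc⟩ := hreap B hBinf
      rcases hc with h | h
      · exact hnsub A hA h
      · exact hninter A hA h
    · have hBc : Bᶜ.Infinite := by
        rw [not_infinite] at hBinf
        exact hBinf.infinite_compl
      obtain ⟨A, hA, hc⟩ := hreap Bᶜ hBc
      rcases hc with h | h
      · refine hninter A hA ?_
        ext n; simp only [mem_inter_iff, mem_empty_iff_false, iff_false, not_and]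
        intro hnA
        exact h hnA
      · refine hnsub A hA fun n hn => ?_
        by_contra hnB
        have : n ∈ A ∩ Bᶜ := ⟨hn, hnB⟩
        rw [h] at this
        exact notMem_empty n this
end

section
/- Let R ⊆ [ω]^ω be a family of cardinality strictly less than 𝔯. Then there exists a countably infinite family S ⊆ [ω]^ω of pairwise disjoint infinite subsets of ω such that A ∩ S is infinite for every A ∈ R and every S ∈ S. -/
open Set

lemma not_countable_reaping (R0 : Set (Set ℕ)) (hinf : ∀ A ∈ R0, A.Infinite)
    (hreap : IsReapingFamily R0) : ¬ R0.Countable := by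
  intro hc
  have hne : R0.Nonempty := by
    obtain ⟨A, hA, _⟩ := hreap univ infinite_univ
    exact ⟨A, hA⟩
  obtain ⟨f, hf⟩ := hc.exists_eq_range hne
  have hfi : ∀ n, (f n).Infinite := fun n => hinf _ (hf ▸ mem_range_self n)
  choose g hg hg' using fun k (m : ℕ) => (hfi k).exists_gt m
  set z : ℕ → ℕ := fun n => Nat.rec (g 0 0) (fun n zn => g ((n+1)/2) zn) n with hz
  have hzmem : ∀ m, z m ∈ f (m/2) := by
    intro m
    cases m with
    | zero => exact hg 0 0
    | succ n => exact hg ((n+1)/2) (z n)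
  have hzmono : StrictMono z := strictMono_nat_of_lt_succ (fun n => hg' ((n+1)/2) (z n))
  set B : Set ℕ := Set.range (fun n => z (2*n)) with hB
  have hBinf : B.Infinite :=
    Set.infinite_range_of_injective (fun a b hab => by
      have := hzmono.injective hab; omega)
  obtain ⟨A, hA, hcase⟩ := hreap B hBinf
  obtain ⟨n, hn⟩ : ∃ n, f n = A := by rw [hf] at hA; exact hA
  rcases hcase with hsub | hdisj
  · have h1 : z (2*n+1) ∈ f n := by have := hzmem (2*n+1); rwa [show (2*n+1)/2 = n by omega] at this
    have h2 : z (2*n+1) ∈ B := hsub (hn ▸ h1)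
    obtain ⟨m, hm⟩ := h2
    have : 2*m = 2*n+1 := hzmono.injective (by simpa using hm)
    omega
  · have h1 : z (2*n) ∈ f n := by have := hzmem (2*n); rwa [show (2*n)/2 = n by omega] at this
    have h2 : z (2*n) ∈ A ∩ B := ⟨hn ▸ h1, ⟨n, rfl⟩⟩
    rw [hdisj] at h2
    exact h2

lemma frakR_set_nonempty :
    {κ | ∃ R : Set (Set ℕ), (∀ A ∈ R, A.Infinite) ∧ IsReapingFamily R ∧
      κ = Cardinal.mk ↥R}.Nonempty := by
  refine ⟨_, {A : Set ℕ | A.Infinite}, fun A hA => hA, fun B hB => ⟨B, hB, Or.inl subset_rfl⟩, rfl⟩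

lemma aleph0_lt_frakR : Cardinal.aleph0 < frakR := by
  obtain ⟨R0, hinf, hreap, heq⟩ := csInf_mem frakR_set_nonempty
  have hnc : ¬ R0.Countable := not_countable_reaping R0 hinf hreap
  unfold frakR
  rw [heq, lt_iff_not_ge, Cardinal.mk_le_aleph0_iff, Set.countable_coe_iff]
  exact hnc

lemma exists_split (F : Set (Set ℕ)) (hinf : ∀ A ∈ F, A.Infinite)
    (hc : Cardinal.mk ↥F < frakR) :
    ∃ B : Set ℕ, ∀ A ∈ F, (A ∩ B).Infinite ∧ (A \ B).Infinite := by
  by_contra h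
  push_neg at h
  set G := {A' : Set ℕ | ∃ A ∈ F, A' ⊆ A ∧ (A \ A').Finite ∧ A'.Infinite} with hG
  have hGinf : ∀ A ∈ G, A.Infinite := by
    rintro A ⟨A0, _, _, _, h5⟩; exact h5
  have hGreap : IsReapingFamily G := by
    intro B hB
    obtain ⟨A, hA, hcase⟩ := h B
    by_cases h1' : (A ∩ B).Infinite
    case pos =>
      have h2 : (A \ B).Finite := hcase h1'
      have h1 := h1'
      refine ⟨A ∩ B, ⟨A, hA, inter_subset_left, ?_, h1⟩, Or.inl inter_subset_right⟩
      rwa [Set.diff_self_inter]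
    case neg =>
      have h1 : (A ∩ B).Finite := Set.not_infinite.mp h1'
      have h2 : (A \ B).Infinite := by
        have := (hinf A hA).diff h1
        rwa [Set.diff_self_inter] at this
      refine ⟨A \ B, ⟨A, hA, diff_subset, ?_, h2⟩, Or.inr (by ext x; simp)⟩
      rw [Set.diff_diff_right_self]; exact h1
  have hsub : G ⊆ Set.range (fun p : ↥F × Finset ℕ => (p.1 : Set ℕ) \ ↑p.2) := by
    rintro A' ⟨A, hA, hss, hfin, _⟩
    refine Set.mem_range.mpr ⟨⟨⟨A, hA⟩, hfin.toFinset⟩, ?_⟩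
    simp only [hfin.coe_toFinset]
    rw [Set.diff_diff_right_self]
    exact Set.inter_eq_right.mpr hss
  have hGle : Cardinal.mk ↥G < frakR := by
    calc Cardinal.mk ↥G ≤ Cardinal.mk ↥(Set.range (fun p : ↥F × Finset ℕ => (p.1 : Set ℕ) \ ↑p.2)) :=
          Cardinal.mk_le_mk_of_subset hsub
      _ ≤ Cardinal.mk (↥F × Finset ℕ) := Cardinal.mk_range_le
      _ = Cardinal.mk ↥F * Cardinal.aleph0 := by
          rw [Cardinal.mk_prod]; simp [Cardinal.mk_eq_aleph0]
      _ ≤ (Cardinal.mk ↥F ⊔ Cardinal.aleph0) ⊔ Cardinal.aleph0 := Cardinal.mul_le_max _ _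
      _ < frakR := by
          simp only [sup_lt_iff]
          exact ⟨⟨hc, aleph0_lt_frakR⟩, aleph0_lt_frakR⟩
  have hmem : Cardinal.mk ↥G ∈ {κ | ∃ R : Set (Set ℕ), (∀ A ∈ R, A.Infinite) ∧
      IsReapingFamily R ∧ κ = Cardinal.mk ↥R} := ⟨G, hGinf, hGreap, rfl⟩
  exact absurd (csInf_le' hmem) (not_le.mpr hGle)


/-- A family of size `< 𝔯` admits a countably infinite pairwise disjoint
family of infinite sets each meeting every member of `R` infinitely. -/
theorem stmt3 (R : Set (Set ℕ)) (hR : ∀ A ∈ R, A.Infinite)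
    (hcard : Cardinal.mk ↥R < frakR) :
    ∃ S : Set (Set ℕ), S.Countable ∧ S.Infinite ∧ (∀ s ∈ S, s.Infinite) ∧
      S.Pairwise (fun s t => Disjoint s t) ∧
      ∀ A ∈ R, ∀ s ∈ S, (A ∩ s).Infinite := by
  classical
  set R' : Set (Set ℕ) := insert univ R with hR'
  have hR'inf : ∀ A ∈ R', A.Infinite := by
    rintro A (rfl | hA)
    · exact infinite_univ
    · exact hR A hA
  have hcard' : Cardinal.mk ↥R' < frakR := by
    calc Cardinal.mk ↥R' ≤ Cardinal.mk ↥R + 1 := Cardinal.mk_insert_le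
      _ < frakR := Cardinal.add_lt_of_lt (le_of_lt aleph0_lt_frakR) hcard
            (lt_trans Cardinal.one_lt_aleph0 aleph0_lt_frakR)
  have key : ∀ C : Set ℕ, (∀ A ∈ R', (A ∩ C).Infinite) →
      ∃ B, ∀ A ∈ R', ((A ∩ C) ∩ B).Infinite ∧ ((A ∩ C) \ B).Infinite := by
    intro C hC
    obtain ⟨B, hB⟩ := exists_split ((fun A => A ∩ C) '' R')
      (by rintro _ ⟨A, hA, rfl⟩; exact hC A hA)
      (lt_of_le_of_lt Cardinal.mk_image_le hcard')
    exact ⟨B, fun A hA => hB _ ⟨A, hA, rfl⟩⟩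
  let Bf : Set ℕ → Set ℕ := fun C =>
    if h : ∀ A ∈ R', (A ∩ C).Infinite then (key C h).choose else ∅
  let C : ℕ → Set ℕ := fun n => Nat.rec univ (fun _ Cn => Cn \ Bf Cn) n
  have hCsucc : ∀ n, C (n+1) = C n \ Bf (C n) := fun n => rfl
  have step : ∀ (D : Set ℕ) (h : ∀ A ∈ R', (A ∩ D).Infinite),
      ∀ A ∈ R', (A ∩ (D ∩ Bf D)).Infinite ∧ (A ∩ (D \ Bf D)).Infinite := by
    intro D h A hA
    have hBD : Bf D = (key D h).choose := dif_pos h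
    obtain ⟨h1, h2⟩ := (key D h).choose_spec A hA
    rw [hBD]
    constructor
    · rwa [← Set.inter_assoc]
    · rwa [← Set.inter_diff_assoc]
  have hC : ∀ n, ∀ A ∈ R', (A ∩ C n).Infinite := by
    intro n
    induction n with
    | zero =>
      intro A hA
      show (A ∩ univ).Infinite
      rw [Set.inter_univ]
      exact hR'inf A hA
    | succ n ih =>
      intro A hA
      rw [hCsucc n]
      exact (step (C n) ih A hA).2
  set Sf : ℕ → Set ℕ := fun n => C n ∩ Bf (C n) with hSf
  have hSinf : ∀ n, ∀ A ∈ R', (A ∩ Sf n).Infinite := fun n A hA => (step (C n) (hC n) A hA).1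
  have hSsub : ∀ n, Sf n ⊆ C n := fun n => inter_subset_left
  have hCanti : Antitone C := antitone_nat_of_succ_le (fun n => by
    rw [hCsucc n]; exact diff_subset)
  have hdisj : ∀ m n, m < n → Disjoint (Sf m) (Sf n) := by
    intro m n hmn
    have h1 : Sf n ⊆ C m \ Bf (C m) := by
      rw [← hCsucc m]
      exact (hSsub n).trans (hCanti hmn)
    exact Set.disjoint_left.mpr fun x hx1 hx2 => (h1 hx2).2 hx1.2
  have hSne : ∀ n, (Sf n).Infinite := by
    intro n
    have := hSinf n univ (mem_insert _ _)
    rwa [Set.univ_inter] at this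
  have hSinj : Function.Injective Sf := by
    intro m n hmn
    by_contra hne
    obtain ⟨x, hx⟩ := (hSne m).nonempty
    rcases lt_or_gt_of_ne hne with h | h
    · exact Set.disjoint_left.mp (hdisj m n h) hx (hmn ▸ hx)
    · exact Set.disjoint_left.mp (hdisj n m h) (hmn ▸ hx) hx
  refine ⟨Set.range Sf, countable_range _, Set.infinite_range_of_injective hSinj, ?_, ?_, ?_⟩
  · rintro s ⟨n, rfl⟩; exact hSne n
  · rintro s ⟨m, rfl⟩ t ⟨n, rfl⟩ hst
    rcases lt_trichotomy m n with h | h | h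
    · exact hdisj m n h
    · exact absurd (congrArg Sf h) hst
    · exact (hdisj n m h).symm
  · rintro A hA s ⟨n, rfl⟩
    exact hSinf n A (mem_insert_of_mem _ hA)
end

section
/- Let I and J be ideals on ω with I ≤_K J. If J is an HL ideal, then I is an HL ideal. -/
open Set

section HLKatetovSpread

/-- The spread positions: `hlD f j ≥ f n` for every `n ≤ j`, and `hlD f` is
strictly monotone. -/
private def hlD (f : ℕ → ℕ) (j : ℕ) : ℕ := j + (Finset.range (j + 1)).sup f

private lemma hlD_strictMono (f : ℕ → ℕ) : StrictMono (hlD f) := by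
  intro a b hab
  have hsup : (Finset.range (a + 1)).sup f ≤ (Finset.range (b + 1)).sup f :=
    Finset.sup_mono (Finset.range_subset_range.mpr (by omega))
  simp only [hlD]; omega

private lemma hlD_ge {f : ℕ → ℕ} {n j : ℕ} (h : n ≤ j) : f n ≤ hlD f j := by
  have : f n ≤ (Finset.range (j + 1)).sup f :=
    Finset.le_sup (Finset.mem_range.mpr (by omega))
  simp only [hlD]; omega

private lemma hlD_self_le (f : ℕ → ℕ) (j : ℕ) : j ≤ hlD f j := Nat.le_add_right _ _

open Classical in
/-- The spread embedding: bit `j` of `x` goes to position `hlD f j`. -/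
private noncomputable def hlPhi (f : ℕ → ℕ) (x : ℕ → Bool) (m : ℕ) : Bool :=
  if h : ∃ j, hlD f j = m then x h.choose else false

private lemma hlPhi_d (f : ℕ → ℕ) (x : ℕ → Bool) (j : ℕ) :
    hlPhi f x (hlD f j) = x j := by
  have h : ∃ j', hlD f j' = hlD f j := ⟨j, rfl⟩
  rw [hlPhi, dif_pos h]
  congr 1
  exact (hlD_strictMono f).injective h.choose_spec

private lemma hlPhi_loc {f : ℕ → ℕ} {x y : ℕ → Bool} {m : ℕ}
    (hxy : ∀ j, hlD f j < m → x j = y j) {m' : ℕ} (hm' : m' < m) :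
    hlPhi f x m' = hlPhi f y m' := by
  rw [hlPhi, hlPhi]
  split
  · next h => exact hxy _ (by rw [h.choose_spec]; exact hm')
  · rfl

private lemma hlPhi_ofFn_eq {f : ℕ → ℕ} {x y : ℕ → Bool} {m : ℕ}
    (hxy : ∀ j, hlD f j < m → x j = y j) :
    (List.ofFn fun i : Fin m => hlPhi f x i) = List.ofFn fun i : Fin m => hlPhi f y i := by
  congr 1
  funext i
  exact hlPhi_loc hxy i.2

end HLKatetovSpread

section HLKatetovAux

/-- Take of an `ofFn` list. -/
private lemma hl_ofFn_take (g : ℕ → Bool) {m' m : ℕ} (h : m' ≤ m) :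
    (List.ofFn fun i : Fin m => g i).take m' = List.ofFn fun i : Fin m' => g i := by
  apply List.ext_getElem
  · simp [Nat.min_eq_left h]
  · intro k h₁ h₂
    simp only [List.getElem_take, List.getElem_ofFn]

private lemma hl_ofFn_prefix (g : ℕ → Bool) {m' m : ℕ} (h : m' ≤ m) :
    (List.ofFn fun i : Fin m' => g i) <+: List.ofFn fun i : Fin m => g i := by
  rw [← hl_ofFn_take g h]; exact List.take_prefix _ _

/-- Every node of a tree extends to a branch. -/
private lemma hl_exists_branch {p : Set (List Bool)} (hp : IsTree p) {s : List Bool}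
    (hs : s ∈ p) : ∃ x : ℕ → Bool, IsBranch p x ∧
      ∀ i : ℕ, (h : i < s.length) → x i = s[i] := by
  obtain ⟨-, hdc, hstep⟩ := hp
  have hex : ∀ t : {t : List Bool // t ∈ p}, ∃ u : {t : List Bool // t ∈ p},
      t.1 <+: u.1 ∧ t.1.length < u.1.length := by
    rintro ⟨t, ht⟩
    obtain ⟨u, hu, hpre, hne⟩ := hstep t ht
    exact ⟨⟨u, hu⟩, hpre, lt_of_le_of_ne hpre.length_le
      (fun h => hne (hpre.eq_of_length h))⟩
  choose F hF1 hF2 using hex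
  set g : ℕ → {t : List Bool // t ∈ p} := fun k => F^[k] ⟨s, hs⟩ with hg
  have hgsucc : ∀ k, g (k + 1) = F (g k) := fun k => Function.iterate_succ_apply' F k _
  have hglen : ∀ k, k ≤ (g k).1.length := by
    intro k
    induction k with
    | zero => exact Nat.zero_le _
    | succ k ih =>
      have h2 := hF2 (g k)
      rw [hgsucc k]
      omega
  have hgmono : ∀ j k, j ≤ k → (g j).1 <+: (g k).1 := by
    intro j k hjk
    induction k with
    | zero =>
      have : j = 0 := Nat.le_zero.mp hjk
      subst this; exact List.prefix_refl _
    | succ k ih =>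
      rcases Nat.lt_or_ge j (k + 1) with h | h
      · rw [hgsucc k]
        exact (ih (Nat.lt_succ_iff.mp h)).trans (hF1 (g k))
      · have : j = k + 1 := le_antisymm hjk h
        subst this; exact List.prefix_refl _
  refine ⟨fun i => ((g (i + 1)).1).getD i false, ?_, ?_⟩
  · intro n
    have hkey : (List.ofFn fun i : Fin n => ((g (i + 1)).1).getD i false)
        = ((g n).1).take n := by
      apply List.ext_getElem
      · simp [Nat.min_eq_left (hglen n)]
      · intro k h₁ h₂
        simp only [List.getElem_ofFn, List.getElem_take]
        have hk : k < (g (k + 1)).1.length := lt_of_lt_of_le (Nat.lt_succ_self k) (hglen (k + 1))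
        rw [List.getD_eq_getElem _ _ hk]
        have hkn : k < n := by simpa using h₁
        exact ((hgmono (k + 1) n hkn).getElem hk)
    rw [hkey]
    exact hdc _ (g n).2 _ (List.take_prefix _ _)
  · intro i h
    have hk : i < (g (i + 1)).1.length := lt_of_lt_of_le (Nat.lt_succ_self i) (hglen (i + 1))
    show ((g (i + 1)).1).getD i false = s[i]
    rw [List.getD_eq_getElem _ _ hk]
    exact ((hgmono 0 (i + 1) (Nat.zero_le _)).getElem h).symm

/-- Two incomparable lists disagree somewhere. -/
private lemma hl_exists_disagree {t₀ t₁ : List Bool} (h₀ : ¬ t₀ <+: t₁) (h₁ : ¬ t₁ <+: t₀) :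
    ∃ j, ∃ (hj₀ : j < t₀.length) (hj₁ : j < t₁.length), t₀[j] ≠ t₁[j] := by
  by_contra hcon
  push_neg at hcon
  rcases le_total t₀.length t₁.length with h | h
  · apply h₀
    have : t₀ = t₁.take t₀.length := by
      apply List.ext_getElem
      · simp [Nat.min_eq_left h]
      · intro k h₁' h₂'
        rw [List.getElem_take]
        exact hcon k h₁' (lt_of_lt_of_le h₁' h)
    rw [this]; exact List.take_prefix _ _
  · apply h₁
    have : t₁ = t₀.take t₁.length := by
      apply List.ext_getElem
      · simp [Nat.min_eq_left h]
      · intro k h₁' h₂'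
        rw [List.getElem_take]
        exact (hcon k (lt_of_lt_of_le h₁' h) h₁').symm
    rw [this]; exact List.take_prefix _ _

end HLKatetovAux


/-- The HL property is downward closed in the Katětov order. -/
theorem stmt6 (I J : Set (Set ℕ)) (hI : IsIdealOn I) (hJ : IsIdealOn J)
    (hK : KatetovLE I J) (hHL : IsHLIdeal J) : IsHLIdeal I := by
  obtain ⟨f, hf⟩ := hK
  intro c
  obtain ⟨p, B, ⟨hBJ, -⟩, hp, i, hmono⟩ := hHL (fun s =>
    c (List.ofFn fun i : Fin (f s.length) => hlPhi f (fun k => s.getD k false) i))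
  set q : Set (List Bool) :=
    {t | ∃ x m, IsBranch p x ∧ t = List.ofFn fun k : Fin m => hlPhi f x k} with hq
  have hqmem : ∀ (x : ℕ → Bool), IsBranch p x → ∀ m : ℕ,
      (List.ofFn fun k : Fin m => hlPhi f x k) ∈ q := fun x hx m => ⟨x, m, hx, rfl⟩
  have hA : f '' B ∉ I := by
    intro hmem
    exact hBJ (hJ.2.2.1 B (f ⁻¹' (f '' B)) (Set.subset_preimage_image f B) (hf _ hmem))
  have hAinf : (f '' B).Infinite := by
    by_contra h
    rw [Set.not_infinite] at h
    exact hA (hI.1 _ h)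
  have hagree : ∀ (x x' : ℕ → Bool) (t' : List Bool) (n : ℕ),
      (∀ i : ℕ, (h : i < t'.length) → x' i = t'[i]) →
      (List.ofFn fun k : Fin n => x k) <+: t' →
      ∀ k < n, x' k = x k := by
    intro x x' t' n hx' hpre k hk
    have hlen : k < t'.length := by
      have := hpre.length_le
      simp only [List.length_ofFn] at this
      omega
    have hk' : k < (List.ofFn fun k : Fin n => x k).length := by simpa using hk
    have h2 : t'[k] = x k := by
      have h3 := hpre.getElem hk'
      simp only [List.getElem_ofFn] at h3
      exact h3.symm
    rw [hx' k hlen, h2]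
  refine ⟨q, f '' B, ⟨hA, hAinf⟩, ⟨⟨?_, ?_, ?_⟩, ?_⟩, i, ?_⟩
  · -- nonempty
    obtain ⟨s₀, hs₀⟩ := hp.1.1
    obtain ⟨x, hx, -⟩ := hl_exists_branch hp.1 hs₀
    exact ⟨_, hqmem x hx 0⟩
  · -- downward closed
    rintro t ⟨x, m, hx, rfl⟩ u hu
    have hlen : u.length ≤ m := by
      have := hu.length_le
      simpa using this
    have h1 : u = List.ofFn fun k : Fin u.length => hlPhi f x k := by
      conv_lhs => rw [List.prefix_iff_eq_take.mp hu]
      exact hl_ofFn_take _ hlen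
    exact ⟨x, u.length, hx, h1⟩
  · -- no maximal element
    rintro t ⟨x, m, hx, rfl⟩
    refine ⟨_, hqmem x hx (m + 1), hl_ofFn_prefix _ (Nat.le_succ m), ?_⟩
    intro h
    apply_fun List.length at h
    simp at h
  · -- perfect
    rintro t ⟨x, m, hx, rfl⟩
    obtain ⟨t₀, ht₀p, t₁, ht₁p, hst₀, hst₁, h01, h10⟩ := hp.2 _ (hx m)
    obtain ⟨x₀, hx₀, hx₀s⟩ := hl_exists_branch hp.1 ht₀p
    obtain ⟨x₁, hx₁, hx₁s⟩ := hl_exists_branch hp.1 ht₁p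
    obtain ⟨j, hj₀, hj₁, hjne⟩ := hl_exists_disagree h01 h10
    have hmj : m ≤ j := by
      by_contra h
      push_neg at h
      have hjs : j < (List.ofFn fun k : Fin m => x k).length := by simpa using h
      have e0 := hst₀.getElem hjs
      have e1 := hst₁.getElem hjs
      exact hjne (by rw [← e0, ← e1])
    have hx₀x : ∀ k, hlD f k < m → x k = x₀ k := by
      intro k hk
      have hkm : k < m := lt_of_le_of_lt (hlD_self_le f k) hk
      exact (hagree x x₀ t₀ m hx₀s hst₀ k hkm).symm
    have hx₁x : ∀ k, hlD f k < m → x k = x₁ k := by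
      intro k hk
      have hkm : k < m := lt_of_le_of_lt (hlD_self_le f k) hk
      exact (hagree x x₁ t₁ m hx₁s hst₁ k hkm).symm
    have hmd : m ≤ hlD f j + 1 := by
      have h1 := hlD_self_le f j
      omega
    have hgd : ∀ (y : ℕ → Bool),
        (List.ofFn fun k : Fin (hlD f j + 1) => hlPhi f y k).getD (hlD f j) false = y j := by
      intro y
      rw [List.getD_eq_getElem _ _ (by simp)]
      simp only [List.getElem_ofFn]
      exact hlPhi_d f y j
    refine ⟨_, hqmem x₀ hx₀ (hlD f j + 1), _, hqmem x₁ hx₁ (hlD f j + 1), ?_, ?_, ?_, ?_⟩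
    · rw [hlPhi_ofFn_eq hx₀x]
      exact hl_ofFn_prefix _ hmd
    · rw [hlPhi_ofFn_eq hx₁x]
      exact hl_ofFn_prefix _ hmd
    · intro hcon
      have heq := hcon.eq_of_length (by simp)
      have hxj : x₀ j = x₁ j := by
        have := congrArg (fun l : List Bool => l.getD (hlD f j) false) heq
        simpa only [hgd] using this
      exact hjne (by rw [← hx₀s j hj₀, ← hx₁s j hj₁, hxj])
    · intro hcon
      have heq := hcon.eq_of_length (by simp)
      have hxj : x₁ j = x₀ j := by
        have := congrArg (fun l : List Bool => l.getD (hlD f j) false) heq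
        simpa only [hgd] using this
      exact hjne (by rw [← hx₀s j hj₀, ← hx₁s j hj₁, hxj])
  · -- monochromatic
    intro t ht
    simp only [restrictTree, Set.mem_setOf_eq, hq] at ht
    obtain ⟨⟨x, m, hx, rfl⟩, hlen⟩ := ht
    have hm : m ∈ f '' B := by simpa using hlen
    obtain ⟨n, hnB, hfn⟩ := hm
    subst hfn
    have hsmem : (List.ofFn fun k : Fin n => x k) ∈ restrictTree p B := by
      simp only [restrictTree, Set.mem_setOf_eq]
      exact ⟨hx n, by simpa using hnB⟩
    have hgen : ∀ (s : List Bool), s ∈ restrictTree p B → ∀ (nn : ℕ), s.length = nn →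
        c (List.ofFn fun k : Fin (f nn) => hlPhi f (fun k => s.getD k false) k) = i := by
      rintro s hs nn rfl
      exact hmono s hs
    have hcs := hgen _ hsmem n (by simp)
    have heq : (List.ofFn fun i : Fin (f n) =>
          hlPhi f (fun k => (List.ofFn fun k : Fin n => x k).getD k false) i)
        = List.ofFn fun i : Fin (f n) => hlPhi f x i := by
      apply hlPhi_ofFn_eq
      intro k hk
      have hkn : k < n := by
        have h1 : f n ≤ hlD f n := hlD_ge le_rfl
        exact (hlD_strictMono f).lt_iff_lt.mp (lt_of_lt_of_le hk h1)
      rw [List.getD_eq_getElem _ _ (by simpa using hkn)]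
      simp
    rw [heq] at hcs
    exact hcs
end

section
/- Every ideal on ω that is an F_σ subset of P(ω) (identified with the Cantor space 2^ω via characteristic functions) is an HL ideal. -/
open Set

/-- The characteristic function of `A ⊆ ω` as an element of `2^ω`. -/
noncomputable def charFun (A : Set ℕ) : ℕ → Bool :=
  fun n => @decide (n ∈ A) (Classical.propDecidable _)

namespace HL8

def seg (x : ℕ → Bool) (n : ℕ) : List Bool := List.ofFn fun i : Fin n => x i

@[simp] lemma seg_length (x : ℕ → Bool) (n : ℕ) : (seg x n).length = n := by simp [seg]

lemma seg_take (x : ℕ → Bool) {m n : ℕ} (h : m ≤ n) : (seg x n).take m = seg x m := by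
  apply List.ext_get
  · simp [h]
  · intro i h1 h2
    simp [seg, List.get_ofFn]

lemma seg_prefix (x : ℕ → Bool) {m n : ℕ} (h : m ≤ n) : seg x m <+: seg x n := by
  rw [← seg_take x h]; exact List.take_prefix _ _

def follows (x : ℕ → Bool) (s : List Bool) : Prop := seg x s.length = s

lemma eq_take_of_prefix {s t : List Bool} (h : s <+: t) : s = t.take s.length :=
  List.prefix_iff_eq_take.mp h

lemma follows_of_prefix {x : ℕ → Bool} {s t : List Bool} (ht : follows x t) (hst : s <+: t) :
    follows x s := by
  have hl : s.length ≤ t.length := hst.length_le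
  unfold follows at *
  rw [← seg_take x hl, ht, ← eq_take_of_prefix hst]

lemma prefix_seg {x : ℕ → Bool} {s : List Bool} (hs : follows x s) {n : ℕ}
    (h : s.length ≤ n) : s <+: seg x n := by
  conv_lhs => rw [← hs]
  exact seg_prefix x h

def extB (s : List Bool) : ℕ → Bool := fun k => if h : k < s.length then s.get ⟨k, h⟩ else false

lemma follows_extB (s : List Bool) : follows (extB s) s := by
  apply List.ext_get (by simp)
  intro i h1 h2
  simp [seg, extB, List.get_ofFn]

def xb {L : ℕ} (v : Fin L → Bool) : ℕ → Bool := fun k => if h : k < L then v ⟨k, h⟩ else false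

lemma seg_xb {L : ℕ} (v : Fin L → Bool) : seg (xb v) L = List.ofFn v := by
  apply List.ext_get (by simp)
  intro i h1 h2
  simp [seg, xb, List.get_ofFn]


lemma charFun_inj : Function.Injective charFun := by
  intro A B h
  ext m
  have := congrFun h m
  simpa [charFun, decide_eq_decide] using this

lemma mem_charFun {A : Set ℕ} {m : ℕ} : charFun A m = true ↔ m ∈ A := by
  simp [charFun]

/-- smallness structure derived from the `F_σ` representation -/
def Sm (F : ℕ → Set (ℕ → Bool)) (n : ℕ) (A : Set ℕ) : Prop :=
  A = ∅ ∨ ∃ m ≤ n, ∃ B : Set ℕ, A ⊆ B ∧ charFun B ∈ F m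

lemma sm_empty (F : ℕ → Set (ℕ → Bool)) (n : ℕ) : Sm F n ∅ := Or.inl rfl

lemma sm_mono {F : ℕ → Set (ℕ → Bool)} {n : ℕ} {A B : Set ℕ} (hAB : A ⊆ B) :
    Sm F n B → Sm F n A := by
  rintro (rfl | ⟨m, hm, C, hBC, hC⟩)
  · exact Or.inl (subset_eq_empty hAB rfl)
  · exact Or.inr ⟨m, hm, C, hAB.trans hBC, hC⟩

lemma sm_monoN {F : ℕ → Set (ℕ → Bool)} {n n' : ℕ} {A : Set ℕ} (h : n ≤ n') :
    Sm F n A → Sm F n' A := by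
  rintro (rfl | ⟨m, hm, C, hAC, hC⟩)
  · exact Or.inl rfl
  · exact Or.inr ⟨m, hm.trans h, C, hAC, hC⟩

lemma mem_of_sm {I : Set (Set ℕ)} {F : ℕ → Set (ℕ → Bool)} (hI : IsIdealOn I)
    (hEq : charFun '' I = ⋃ n, F n) {n : ℕ} {A : Set ℕ} (h : Sm F n A) : A ∈ I := by
  rcases h with rfl | ⟨m, _, B, hAB, hB⟩
  · exact hI.1 ∅ finite_empty
  · have : charFun B ∈ charFun '' I := by rw [hEq]; exact mem_iUnion.mpr ⟨m, hB⟩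
    rcases this with ⟨B₀, hB₀, hEqB⟩
    have : B = B₀ := (charFun_inj hEqB).symm
    exact hI.2.2.1 A B hAB (this ▸ hB₀)

lemma sm_of_mem {I : Set (Set ℕ)} {F : ℕ → Set (ℕ → Bool)}
    (hEq : charFun '' I = ⋃ n, F n) {A : Set ℕ} (h : A ∈ I) : ∃ n, Sm F n A := by
  have : charFun A ∈ ⋃ n, F n := by rw [← hEq]; exact ⟨A, h, rfl⟩
  rcases mem_iUnion.mp this with ⟨n, hn⟩
  exact ⟨n, Or.inr ⟨n, le_rfl, A, subset_rfl, hn⟩⟩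

/-- compactness: closed approximations converge. -/
lemma limit_lemma {C : Set (ℕ → Bool)} (hC : IsClosed C) (A : Set ℕ)
    (h : ∀ k : ℕ, ∃ B : Set ℕ, A ∩ Iio k ⊆ B ∧ charFun B ∈ C) :
    ∃ B : Set ℕ, A ⊆ B ∧ charFun B ∈ C := by
  choose B hB1 hB2 using h
  set U : Ultrafilter ℕ := Ultrafilter.of Filter.atTop with hU
  have hUle : (U : Filter ℕ) ≤ Filter.atTop := Ultrafilter.of_le _
  set g : ℕ → (ℕ → Bool) := fun k => charFun (B k) with hg
  have hCc : IsCompact C := hC.isCompact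
  have hle : (U.map g : Filter (ℕ → Bool)) ≤ Filter.principal C := by
    rw [Filter.le_principal_iff]
    exact Filter.mem_map.mpr (Filter.univ_mem' fun k => hB2 k)
  obtain ⟨x, hxC, hx⟩ := hCc.ultrafilter_le_nhds (U.map g) hle
  refine ⟨{m | x m = true}, ?_, ?_⟩
  · intro m hm
    have hev1 : ∀ᶠ k in (U : Filter ℕ), g k m = x m := by
      have ht : Filter.Tendsto (fun k => g k m) U (nhds (x m)) :=
        ((continuous_apply m).tendsto x).comp hx
      have hmem : {y : Bool | y = x m} ∈ nhds (x m) := by simp [nhds_discrete]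
      exact ht hmem
    have hev2 : ∀ᶠ k in (U : Filter ℕ), g k m = true := by
      apply Filter.Eventually.filter_mono hUle
      filter_upwards [Filter.eventually_gt_atTop m] with k hk
      exact mem_charFun.mpr (hB1 k ⟨hm, hk⟩)
    rcases (hev1.and hev2).exists with ⟨k, h1, h2⟩
    simpa using (h1.symm.trans h2)
  · have : charFun {m | x m = true} = x := by
      funext m
      show @decide (x m = true) (Classical.propDecidable _) = x m
      rw [Subsingleton.elim (Classical.propDecidable _) (instDecidableEqBool (x m) true)]
      simp
    rwa [this]

lemma sm_approx {F : ℕ → Set (ℕ → Bool)} (hF : ∀ n, IsClosed (F n)) {n : ℕ} {A : Set ℕ}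
    (h : ∀ k : ℕ, Sm F n (A ∩ Iio k)) : Sm F n A := by
  by_cases hA : A = ∅
  · exact Or.inl hA
  -- find a single m ≤ n working for cofinally many k
  by_cases hcase : ∃ m ≤ n, ∀ N : ℕ, ∃ k ≥ N, ∃ B : Set ℕ, A ∩ Iio k ⊆ B ∧ charFun B ∈ F m
  · rcases hcase with ⟨m, hmn, hm⟩
    have h' : ∀ k : ℕ, ∃ B : Set ℕ, A ∩ Iio k ⊆ B ∧ charFun B ∈ F m := by
      intro k
      rcases hm k with ⟨k', hk', B, hB1, hB2⟩
      exact ⟨B, (inter_subset_inter_right A (Iio_subset_Iio hk')).trans hB1, hB2⟩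
    rcases limit_lemma (hF m) A h' with ⟨B, h1, h2⟩
    exact Or.inr ⟨m, hmn, B, h1, h2⟩
  · exfalso
    push_neg at hcase
    -- for each m ≤ n there is a bound N m beyond which m never works
    choose N hN using hcase
    rcases nonempty_iff_ne_empty.mpr hA with ⟨a, ha⟩
    set N' : ℕ → ℕ := fun m => if h : m ≤ n then N m h else 0 with hN'
    set k : ℕ := max ((Finset.range (n+1)).sup N') (a+1) with hk
    rcases h k with hemp | ⟨m, hmn, B, hB1, hB2⟩
    · have : a ∈ A ∩ Iio k := ⟨ha, lt_max_of_lt_right (Nat.lt_succ_self a)⟩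
      rw [hemp] at this
      exact this
    · have hkN : k ≥ N m hmn := by
        have h1 : N' m ≤ (Finset.range (n+1)).sup N' :=
          Finset.le_sup (Finset.mem_range.mpr (by omega))
        have h2 : N' m = N m hmn := by simp [hN', hmn]
        rw [← h2]
        exact h1.trans (le_max_left _ _)
      exact hN m hmn k hkN B hB1 hB2

lemma ideal_biUnion {I : Set (Set ℕ)} (hI : IsIdealOn I) {ι : Type*} (T : Finset ι)
    (f : ι → Set ℕ) (h : ∀ j ∈ T, f j ∈ I) : (⋃ j ∈ T, f j) ∈ I := by
  classical
  induction T using Finset.induction_on with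
  | empty => simpa using hI.1 ∅ finite_empty
  | @insert a s ha ih =>
      rw [Finset.set_biUnion_insert]
      exact hI.2.2.2 _ _ (h a (Finset.mem_insert_self a s))
        (ih fun j hj => h j (Finset.mem_insert_of_mem hj))

lemma cofinite_pos {I : Set (Set ℕ)} (hI : IsIdealOn I) (L : ℕ) : {ℓ : ℕ | L < ℓ} ∉ I := by
  intro h
  apply hI.2.1
  have : (univ : Set ℕ) = {ℓ : ℕ | L < ℓ} ∪ Iio (L+1) := by
    ext m; simp; omega
  rw [this]
  exact hI.2.2.2 _ _ h (hI.1 _ (finite_Iio _))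


def Good (F : ℕ → Set (ℕ → Bool)) (c : List Bool → Bool) (i : Bool)
    (S : Finset (List Bool)) : Prop :=
  ∀ n M : ℕ, ∃ E : Finset ℕ, ¬ Sm F n ↑E ∧ (∀ ℓ ∈ E, M < ℓ) ∧
    ∀ s ∈ S, ∃ x : ℕ → Bool, follows x s ∧ ∀ ℓ ∈ E, c (seg x ℓ) = i

lemma exists_good {I : Set (Set ℕ)} {F : ℕ → Set (ℕ → Bool)} (hI : IsIdealOn I)
    (hF : ∀ n, IsClosed (F n)) (hEq : charFun '' I = ⋃ n, F n) (c : List Bool → Bool) :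
    ∃ (i : Bool) (r : List Bool), ∀ S : Finset (List Bool),
      (∀ s ∈ S, r <+: s) → Good F c i S := by
  by_contra hcon
  push_neg at hcon
  obtain ⟨S₀, hS₀pre, hS₀⟩ := hcon false []
  have h1 : ∀ s : List Bool, ∃ S : Finset (List Bool), (∀ u ∈ S, s <+: u) ∧
      ¬ Good F c true S := fun s => by
    obtain ⟨S, h1, h2⟩ := hcon true s
    exact ⟨S, h1, h2⟩
  choose SS hSSpre hSSbad using h1
  simp only [Good, not_forall] at hS₀
  obtain ⟨n₀, M₀, hbad₀⟩ := hS₀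
  have h2 : ∀ s : List Bool, ∃ n M : ℕ, ¬ ∃ E : Finset ℕ, ¬ Sm F n ↑E ∧ (∀ ℓ ∈ E, M < ℓ) ∧
      ∀ u ∈ SS s, ∃ x : ℕ → Bool, follows x u ∧ ∀ ℓ ∈ E, c (seg x ℓ) = true := by
    intro s
    have := hSSbad s
    simp only [Good, not_forall] at this
    exact this
  choose nn MM hbadS using h2
  set L : ℕ := (M₀ ⊔ S₀.sup (fun s => MM s ⊔ s.length ⊔ (SS s).sup List.length)) + 1 with hL
  have hLM₀ : M₀ < L := by omega
  have hLs : ∀ s ∈ S₀, MM s < L ∧ s.length < L ∧ ∀ u ∈ SS s, u.length < L := by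
    intro s hs
    have h3 : MM s ⊔ s.length ⊔ (SS s).sup List.length ≤
        S₀.sup (fun s => MM s ⊔ s.length ⊔ (SS s).sup List.length) :=
      Finset.le_sup (f := fun s => MM s ⊔ s.length ⊔ (SS s).sup List.length) hs
    refine ⟨by omega, by omega, fun u hu => ?_⟩
    have := Finset.le_sup (f := List.length) hu
    omega
  -- pieces
  set P : ((Fin L → Bool) → Bool) → Set ℕ :=
    fun ε => {ℓ : ℕ | L < ℓ ∧ ∀ v : Fin L → Bool, c (seg (xb v) ℓ) = ε v} with hP
  have hcover : {ℓ : ℕ | L < ℓ} ⊆ ⋃ ε ∈ (Finset.univ : Finset ((Fin L → Bool) → Bool)), P ε := by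
    intro ℓ hℓ
    refine mem_biUnion (Finset.mem_univ (fun v => c (seg (xb v) ℓ))) ?_
    exact ⟨hℓ, fun v => rfl⟩
  have hpos : ∃ ε, P ε ∉ I := by
    by_contra hc
    push_neg at hc
    exact cofinite_pos hI L (hI.2.2.1 _ _ hcover
      (ideal_biUnion hI Finset.univ P (fun ε _ => hc ε)))
  obtain ⟨ε, hε⟩ := hpos
  have hεn : ∀ n, ¬ Sm F n (P ε) := fun n hsm => hε (mem_of_sm hI hEq hsm)
  have hEx : ∀ n : ℕ, ∃ E : Finset ℕ, ¬ Sm F n ↑E ∧ ↑E ⊆ P ε := by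
    intro n
    have hex : ∃ k, ¬ Sm F n (P ε ∩ Iio k) := by
      by_contra hc
      push_neg at hc
      exact hεn n (sm_approx hF hc)
    obtain ⟨k, hk⟩ := hex
    have hfin : (P ε ∩ Iio k).Finite := (finite_Iio k).subset inter_subset_right
    refine ⟨hfin.toFinset, ?_, ?_⟩
    · rwa [hfin.coe_toFinset]
    · rw [hfin.coe_toFinset]; exact inter_subset_left
  by_cases hca : ∀ s ∈ S₀, ∃ v : Fin L → Bool, s <+: List.ofFn v ∧ ε v = false
  · -- contradict hbad₀
    obtain ⟨E, hE1, hE2⟩ := hEx n₀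
    apply hbad₀
    refine ⟨E, hE1, ?_, ?_⟩
    · intro ℓ hℓ
      have h4 : ℓ ∈ P ε := hE2 hℓ
      have h5 := h4.1
      omega
    · intro s hs
      obtain ⟨v, hv1, hv2⟩ := hca s hs
      have hfv : follows (xb v) (List.ofFn v) := by
        rw [follows, List.length_ofFn]; exact seg_xb v
      refine ⟨xb v, follows_of_prefix hfv hv1, fun ℓ hℓ => ?_⟩
      have hPm : ℓ ∈ P ε := hE2 hℓ
      rw [hPm.2 v, hv2]
  · -- contradict hbadS s
    push_neg at hca
    obtain ⟨s, hsS, hsv⟩ := hca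
    obtain ⟨E, hE1, hE2⟩ := hEx (nn s)
    apply hbadS s
    refine ⟨E, hE1, ?_, ?_⟩
    · intro ℓ hℓ
      have h4 : ℓ ∈ P ε := hE2 hℓ
      have := (hLs s hsS).1
      have := h4.1
      omega
    · intro u hu
      have hulen : u.length ≤ L := le_of_lt ((hLs s hsS).2.2 u hu)
      set v : Fin L → Bool := fun j => if h : (j : ℕ) < u.length then u.get ⟨j, h⟩ else false
        with hv
      have hxeq : xb v = extB u := by
        funext k
        simp only [xb, extB, hv]
        split_ifs with h1 h2 h3
        · rfl
        · rfl
        · omega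
        · rfl
      have hfu : u <+: List.ofFn v := by
        rw [← seg_xb v, hxeq]
        exact prefix_seg (follows_extB u) hulen
      have hεv : ε v = true := by
        have := hsv v ((hSSpre s u hu).trans hfu)
        exact Bool.not_eq_false _ ▸ (by simpa using this)
      refine ⟨extB u, follows_extB u, fun ℓ hℓ => ?_⟩
      have hPm : ℓ ∈ P ε := hE2 hℓ
      rw [← hxeq, hPm.2 v, hεv]

def StepRel (F : ℕ → Set (ℕ → Bool)) (c : List Bool → Bool) (i : Bool) (r : List Bool)
    (n M : ℕ) (S : Finset (List Bool)) (Q : Finset (List Bool) × Finset ℕ) : Prop :=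
  (Q.1.Nonempty ∧ ∀ s ∈ Q.1, r <+: s) ∧
  ¬ Sm F n ↑Q.2 ∧
  (∀ ℓ ∈ Q.2, M < ℓ) ∧
  (∀ ℓ ∈ Q.2, ∀ s ∈ S, s.length < ℓ) ∧
  (∀ t₀ ∈ S, ∀ b : Bool, ∃ t ∈ Q.1, t₀ ++ [b] <+: t) ∧
  (∀ t ∈ Q.1, ∃ t₀ ∈ S, t₀ <+: t ∧ t₀.length < t.length) ∧
  (∀ t ∈ Q.1, ∀ ℓ ∈ Q.2, ℓ < t.length ∧ c (t.take ℓ) = i)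

lemma stepEx {F : ℕ → Set (ℕ → Bool)} {c : List Bool → Bool} {i : Bool} {r : List Bool}
    (hG : ∀ S : Finset (List Bool), (∀ s ∈ S, r <+: s) → Good F c i S)
    (n M : ℕ) (S : Finset (List Bool)) (hne : S.Nonempty) (hpre : ∀ s ∈ S, r <+: s) :
    ∃ Q, StepRel F c i r n M S Q := by
  classical
  set C : Finset (List Bool) := S.image (· ++ [false]) ∪ S.image (· ++ [true]) with hC
  have hCmem : ∀ t₀ ∈ S, ∀ b : Bool, t₀ ++ [b] ∈ C := by
    intro t₀ ht₀ b
    cases b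
    · exact Finset.mem_union_left _ (Finset.mem_image_of_mem _ ht₀)
    · exact Finset.mem_union_right _ (Finset.mem_image_of_mem _ ht₀)
  have hCrep : ∀ s ∈ C, ∃ t₀ ∈ S, ∃ b : Bool, s = t₀ ++ [b] := by
    intro s hs
    rcases Finset.mem_union.mp hs with h | h <;>
      · obtain ⟨t₀, ht₀, rfl⟩ := Finset.mem_image.mp h
        exact ⟨t₀, ht₀, _, rfl⟩
  have hCpre : ∀ s ∈ C, r <+: s := by
    intro s hs
    obtain ⟨t₀, ht₀, b, rfl⟩ := hCrep s hs
    exact (hpre t₀ ht₀).trans (List.prefix_append _ _)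
  have hCne : C.Nonempty := by
    obtain ⟨t₀, ht₀⟩ := hne
    exact ⟨t₀ ++ [false], hCmem t₀ ht₀ false⟩
  set M' : ℕ := M ⊔ C.sup List.length with hM'
  obtain ⟨E, hE1, hE2, hE3⟩ := hG C hCpre n M'
  have hEne : E.Nonempty := by
    rcases Finset.eq_empty_or_nonempty E with rfl | h
    · exact absurd (by simpa using sm_empty F n) hE1
    · exact h
  set mE : ℕ := E.max' hEne with hmE
  have hM'mE : M' < mE := hE2 mE (E.max'_mem hEne)
  have hClen : ∀ s ∈ C, s.length ≤ M' := by
    intro s hs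
    have := Finset.le_sup (f := List.length) hs
    omega
  choose x hx1 hx2 using hE3
  set tops : Finset (List Bool) := C.attach.image (fun s => seg (x s.1 s.2) (mE + 1))
    with htops
  have htopmem : ∀ s (hs : s ∈ C), seg (x s hs) (mE + 1) ∈ tops := by
    intro s hs
    exact Finset.mem_image_of_mem _ (Finset.mem_attach C ⟨s, hs⟩)
  have htoprep : ∀ t ∈ tops, ∃ s, ∃ hs : s ∈ C, t = seg (x s hs) (mE + 1) := by
    intro t ht
    obtain ⟨⟨s, hs⟩, _, rfl⟩ := Finset.mem_image.mp ht
    exact ⟨s, hs, rfl⟩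
  have hpref : ∀ s (hs : s ∈ C), s <+: seg (x s hs) (mE + 1) := by
    intro s hs
    exact prefix_seg (hx1 s hs) (by have := hClen s hs; omega)
  refine ⟨(tops, E), ⟨⟨?_, ?_⟩, hE1, ?_, ?_, ?_, ?_, ?_⟩⟩
  · obtain ⟨s, hs⟩ := hCne
    exact ⟨_, htopmem s hs⟩
  · intro t ht
    obtain ⟨s, hs, rfl⟩ := htoprep t ht
    exact (hCpre s hs).trans (hpref s hs)
  · intro ℓ hℓ
    have := hE2 ℓ hℓ
    omega
  · intro ℓ hℓ s hs
    have h1 : (s ++ [false]).length ≤ M' := hClen _ (hCmem s hs false)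
    have h2 := hE2 ℓ hℓ
    simp only [List.length_append, List.length_cons, List.length_nil] at h1
    omega
  · intro t₀ ht₀ b
    exact ⟨seg (x _ (hCmem t₀ ht₀ b)) (mE + 1), htopmem _ (hCmem t₀ ht₀ b),
      hpref _ (hCmem t₀ ht₀ b)⟩
  · intro t ht
    obtain ⟨s, hs, rfl⟩ := htoprep t ht
    obtain ⟨t₀, ht₀, b, rfl⟩ := hCrep s hs
    refine ⟨t₀, ht₀, (List.prefix_append _ _).trans (hpref _ hs), ?_⟩
    have h1 := hClen _ hs
    have h2 : (t₀ ++ [b]).length = t₀.length + 1 := by simp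
    rw [seg_length]
    omega
  · intro t ht ℓ hℓ
    obtain ⟨s, hs, rfl⟩ := htoprep t ht
    have hℓmE : ℓ ≤ mE := E.le_max' ℓ hℓ
    constructor
    · rw [seg_length]; omega
    · rw [seg_take (x s hs) (by omega : ℓ ≤ mE + 1)]
      exact hx2 s hs ℓ hℓ

noncomputable def gseq (F : ℕ → Set (ℕ → Bool)) (c : List Bool → Bool) (i : Bool)
    (r : List Bool)
    (hstep : ∀ (n M : ℕ) (S : Finset (List Bool)), S.Nonempty → (∀ s ∈ S, r <+: s) →
      ∃ Q, StepRel F c i r n M S Q) :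
    ℕ → {Q : Finset (List Bool) × Finset ℕ // Q.1.Nonempty ∧ ∀ s ∈ Q.1, r <+: s}
  | 0 => ⟨({r}, ∅), Finset.singleton_nonempty r, by simp⟩
  | n+1 =>
    let p := gseq F c i r hstep n
    ⟨(hstep n (p.1.2.sup id) p.1.1 p.2.1 p.2.2).choose,
     (hstep n (p.1.2.sup id) p.1.1 p.2.1 p.2.2).choose_spec.1.1,
     (hstep n (p.1.2.sup id) p.1.1 p.2.1 p.2.2).choose_spec.1.2⟩

lemma gseq_spec (F : ℕ → Set (ℕ → Bool)) (c : List Bool → Bool) (i : Bool) (r : List Bool)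
    (hstep : ∀ (n M : ℕ) (S : Finset (List Bool)), S.Nonempty → (∀ s ∈ S, r <+: s) →
      ∃ Q, StepRel F c i r n M S Q) (n : ℕ) :
    StepRel F c i r n (((gseq F c i r hstep n).1.2).sup id) (gseq F c i r hstep n).1.1
      (gseq F c i r hstep (n+1)).1 :=
  (hstep n (((gseq F c i r hstep n).1.2).sup id) (gseq F c i r hstep n).1.1
    (gseq F c i r hstep n).2.1 (gseq F c i r hstep n).2.2).choose_spec

lemma construction {I : Set (Set ℕ)} {F : ℕ → Set (ℕ → Bool)} (hEq : charFun '' I = ⋃ n, F n) (c : List Bool → Bool) (i : Bool) (r : List Bool)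
    (hG : ∀ S : Finset (List Bool), (∀ s ∈ S, r <+: s) → Good F c i S) :
    ∃ (p : Set (List Bool)) (A : Set ℕ), (A ∉ I ∧ A.Infinite) ∧ IsPerfectTree p ∧
      ∀ s ∈ restrictTree p A, c s = i := by
  classical
  have hstep : ∀ (n M : ℕ) (S : Finset (List Bool)), S.Nonempty → (∀ s ∈ S, r <+: s) →
      ∃ Q, StepRel F c i r n M S Q := fun n M S hne hpre => stepEx hG n M S hne hpre
  set T : ℕ → Finset (List Bool) := fun m => (gseq F c i r hstep m).1.1 with hT
  set Em : ℕ → Finset ℕ := fun m => (gseq F c i r hstep m).1.2 with hEm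
  have R : ∀ m, StepRel F c i r m ((Em m).sup id) (T m) (T (m+1), Em (m+1)) := by
    intro m
    exact gseq_spec F c i r hstep m
  have hTne : ∀ m, (T m).Nonempty := fun m => (gseq F c i r hstep m).2.1
  have hEnotSm : ∀ m, ¬ Sm F m ↑(Em (m+1)) := fun m => (R m).2.1
  have hElen : ∀ m, ∀ ℓ ∈ Em (m+1), ∀ t ∈ T m, t.length < ℓ := by
    intro m ℓ hℓ t ht
    exact (R m).2.2.2.1 ℓ hℓ t ht
  have hEcol : ∀ m, ∀ t ∈ T (m+1), ∀ ℓ ∈ Em (m+1), ℓ < t.length ∧ c (t.take ℓ) = i := by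
    intro m
    exact (R m).2.2.2.2.2.2
  have hchild : ∀ m, ∀ t₀ ∈ T m, ∀ b : Bool, ∃ t ∈ T (m+1), t₀ ++ [b] <+: t := by
    intro m
    exact (R m).2.2.2.2.1
  have hparent : ∀ m, ∀ t ∈ T (m+1), ∃ t₀ ∈ T m, t₀ <+: t ∧ t₀.length < t.length := by
    intro m
    exact (R m).2.2.2.2.2.1
  have hENe : ∀ m, (Em (m+1)).Nonempty := by
    intro m
    rcases Finset.eq_empty_or_nonempty (Em (m+1)) with h | h
    · exact absurd (by rw [h]; simpa using sm_empty F m) (hEnotSm m)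
    · exact h
  have hforward : ∀ m m', m ≤ m' → ∀ t ∈ T m, ∃ u ∈ T m', t <+: u := by
    intro m m' h
    induction h with
    | refl => exact fun t ht => ⟨t, ht, List.prefix_refl t⟩
    | @step m'' h ih =>
        intro t ht
        obtain ⟨u, hu, hpre⟩ := ih t ht
        obtain ⟨u', hu', hp⟩ := hchild m'' u hu false
        exact ⟨u', hu', hpre.trans ((List.prefix_append u [false]).trans hp)⟩
  have hbackward : ∀ m m', m ≤ m' → ∀ t ∈ T m', ∃ u ∈ T m, u <+: t := by
    intro m m' h
    induction h with
    | refl => exact fun t ht => ⟨t, ht, List.prefix_refl t⟩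
    | @step m'' h ih =>
        intro t ht
        obtain ⟨t₀, ht₀, hp, _⟩ := hparent m'' t ht
        obtain ⟨u, hu, hu'⟩ := ih t₀ ht₀
        exact ⟨u, hu, hu'.trans hp⟩
  have hTlen : ∀ m, ∀ t ∈ T m, m ≤ t.length := by
    intro m
    induction m with
    | zero => exact fun t _ => Nat.zero_le _
    | succ m ih =>
        intro t ht
        obtain ⟨t₀, ht₀, _, hlt⟩ := hparent m t ht
        have := ih t₀ ht₀
        omega
  set p : Set (List Bool) := {s | ∃ m, ∃ t ∈ T m, s <+: t} with hp
  set A : Set ℕ := ⋃ m, (↑(Em (m+1)) : Set ℕ) with hA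
  have hmemp : ∀ m, ∀ t ∈ T m, t ∈ p := fun m t ht => ⟨m, t, ht, List.prefix_refl t⟩
  refine ⟨p, A, ⟨?_, ?_⟩, ⟨⟨?_, ?_, ?_⟩, ?_⟩, ?_⟩
  · -- A ∉ I
    intro hAI
    obtain ⟨n, hsm⟩ := sm_of_mem hEq hAI
    have hsub : (↑(Em (n+1)) : Set ℕ) ⊆ A := by
      intro ℓ hℓ
      exact mem_iUnion.mpr ⟨n, hℓ⟩
    exact hEnotSm n (sm_mono hsub hsm)
  · -- A infinite
    apply Set.infinite_of_not_bddAbove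
    rintro ⟨N, hN⟩
    obtain ⟨t, ht⟩ := hTne N
    obtain ⟨ℓ, hℓ⟩ := hENe N
    have h1 : t.length < ℓ := hElen N ℓ hℓ t ht
    have h2 : N ≤ t.length := hTlen N t ht
    have h3 : ℓ ∈ A := mem_iUnion.mpr ⟨N, hℓ⟩
    have := hN h3
    omega
  · -- p nonempty
    exact ⟨r, hmemp 0 r (Finset.mem_singleton_self r)⟩
  · -- downward closed
    rintro s ⟨m, t, ht, hst⟩ u hu
    exact ⟨m, t, ht, hu.trans hst⟩
  · -- no maximal
    rintro s ⟨m, t, ht, hst⟩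
    obtain ⟨u, hu, hpu⟩ := hchild m t ht false
    refine ⟨u, hmemp (m+1) u hu, hst.trans ((List.prefix_append t [false]).trans hpu), ?_⟩
    intro h
    have h1 : s.length ≤ t.length := hst.length_le
    have h2 : t.length + 1 ≤ u.length := by
      have h4 := hpu.length_le
      simp only [List.length_append, List.length_cons, List.length_nil] at h4
      omega
    rw [h] at h1
    omega
  · -- perfect
    rintro s ⟨m, t, ht, hst⟩
    obtain ⟨u₀, hu₀, hpu₀⟩ := hchild m t ht false
    obtain ⟨u₁, hu₁, hpu₁⟩ := hchild m t ht true
    have hs₀ : s <+: u₀ := hst.trans ((List.prefix_append t [false]).trans hpu₀)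
    have hs₁ : s <+: u₁ := hst.trans ((List.prefix_append t [true]).trans hpu₁)
    have hkey : ∀ w : List Bool, t ++ [false] <+: w → t ++ [true] <+: w → False := by
      intro w h0 h1
      have heq : t ++ [false] = t ++ [true] := by
        have hle : (t ++ [false]).length ≤ (t ++ [true]).length := by simp
        have := List.prefix_of_prefix_length_le h0 h1 hle
        exact List.IsPrefix.eq_of_length this (by simp)
      simp at heq
    refine ⟨u₀, hmemp _ u₀ hu₀, u₁, hmemp _ u₁ hu₁, hs₀, hs₁, ?_, ?_⟩
    · intro hcon
      exact hkey u₁ (hpu₀.trans hcon) hpu₁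
    · intro hcon
      exact hkey u₀ hpu₀ (hpu₁.trans hcon)
  · -- monochromatic
    rintro s ⟨⟨m', t, ht, hst⟩, hlen⟩
    obtain ⟨m, hm⟩ := mem_iUnion.mp hlen
    rcases le_or_gt m' m with hle | hlt
    · exfalso
      obtain ⟨u, hu, htu⟩ := hforward m' m hle t ht
      have h1 : u.length < s.length := hElen m s.length hm u hu
      have h2 : s.length ≤ t.length := hst.length_le
      have h3 : t.length ≤ u.length := htu.length_le
      omega
    · have hm1 : m + 1 ≤ m' := hlt
      obtain ⟨t₀, ht₀, hpt₀⟩ := hbackward (m+1) m' hm1 t ht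
      obtain ⟨hlt', hcol⟩ := hEcol m t₀ ht₀ s.length hm
      have hsp : s <+: t₀ := List.prefix_of_prefix_length_le hst hpt₀ (le_of_lt hlt')
      rw [eq_take_of_prefix hsp]
      exact hcol
end HL8

/-- Every F_σ ideal is an HL ideal. -/
theorem stmt8 (I : Set (Set ℕ)) (hI : IsIdealOn I)
    (hFsigma : ∃ F : ℕ → Set (ℕ → Bool), (∀ n, IsClosed (F n)) ∧
      charFun '' I = ⋃ n, F n) :
    IsHLIdeal I := by
  obtain ⟨F, hF, hEq⟩ := hFsigma
  intro c
  obtain ⟨i, r, hG⟩ := HL8.exists_good hI hF hEq c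
  obtain ⟨p, A, hA, hperf, hmono⟩ := HL8.construction hEq c i r hG
  exact ⟨p, A, hA, hperf, i, hmono⟩
end

section
/- If an ideal I on ω is not an HL ideal, then there exists X ∈ I⁺ such that ED ≤_K I↾X, where I↾X = {A ∩ X : A ∈ I} is the restriction of I to X. -/
open Set

/-- The ideal `ED` on `ω × ω`. -/
def EDIdeal : Set (Set (ℕ × ℕ)) :=
  {A | ∃ m k : ℕ, ∀ n ≥ m, {j : ℕ | (n, j) ∈ A}.Finite ∧
    {j : ℕ | (n, j) ∈ A}.ncard ≤ k}

namespace Stmt10Aux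

/-- The set of levels `m` such that every node of length `≤ k+1` has an
extension of every color at level `m`. -/
def Dset (c : List Bool → Bool) (k : ℕ) : Set ℕ :=
  {m | ∀ v : List Bool, v.length ≤ k + 1 → ∀ i : Bool,
    ∃ t, v <+: t ∧ t.length = m ∧ c t = i}

/-- `c` is a coloring witnessing that `I` is not HL. -/
def BadFor (I : Set (Set ℕ)) (c : List Bool → Bool) : Prop :=
  ∀ (p : Set (List Bool)) (A : Set ℕ), A ∉ I → A.Infinite → IsPerfectTree p →
    ∀ i : Bool, ∃ s ∈ restrictTree p A, c s ≠ i

noncomputable def sigAux (F : ℕ → List Bool → List Bool) : List Bool → List Bool :=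
  List.rec (F 0 []) (fun ε b ih => F (b.length + 1) (ih ++ [ε]))

theorem sigAux_nil (F : ℕ → List Bool → List Bool) : sigAux F [] = F 0 [] := rfl

theorem sigAux_cons (F : ℕ → List Bool → List Bool) (ε : Bool) (b : List Bool) :
    sigAux F (ε :: b) = F (b.length + 1) (sigAux F b ++ [ε]) := rfl

theorem biUnion_mem_I {I : Set (Set ℕ)} (hI : IsIdealOn I) {α : Type*} {s : Set α}
    (hs : s.Finite) {f : α → Set ℕ} (hf : ∀ a ∈ s, f a ∈ I) : (⋃ a ∈ s, f a) ∈ I := by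
  refine Set.Finite.induction_on
    (motive := fun s _ => (∀ a ∈ s, f a ∈ I) → (⋃ a ∈ s, f a) ∈ I) s hs ?_ ?_ hf
  · intro _; simpa using hI.1 ∅ finite_empty
  · intro a s _ _ ih hf'
    rw [Set.biUnion_insert]
    exact hI.2.2.2 _ _ (hf' _ (mem_insert _ _))
      (ih fun x hx => hf' x (mem_insert_of_mem _ hx))

theorem incomp_append {w : List Bool} {ε₁ ε₂ : Bool} (hne : ε₁ ≠ ε₂) :
    ¬ (w ++ [ε₁]) <+: (w ++ [ε₂]) := by
  intro h
  have he := h.eq_of_length (by simp)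
  have := List.append_cancel_left he
  simp at this
  exact hne this

theorem cone_perfect (v : List Bool) : IsPerfectTree {s | s <+: v ∨ v <+: s} := by
  constructor
  · refine ⟨⟨v, Or.inl List.prefix_rfl⟩, ?_, ?_⟩
    · intro s hs t ht
      rcases hs with h | h
      · exact Or.inl (ht.trans h)
      · rcases List.prefix_or_prefix_of_prefix ht h with h' | h'
        · exact Or.inl h'
        · exact Or.inr h'
    · intro s hs
      rcases hs with h | h
      · refine ⟨v ++ [false], Or.inr (List.prefix_append _ _),
          h.trans (List.prefix_append _ _), ?_⟩
        intro he
        have := congrArg List.length he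
        have hl := h.length_le
        simp at this; omega
      · refine ⟨s ++ [false], Or.inr (h.trans (List.prefix_append _ _)),
          List.prefix_append _ _, ?_⟩
        intro he
        have := congrArg List.length he
        simp at this
  · intro s hs
    rcases hs with h | h
    · exact ⟨v ++ [false], Or.inr (List.prefix_append _ _),
        v ++ [true], Or.inr (List.prefix_append _ _),
        h.trans (List.prefix_append _ _), h.trans (List.prefix_append _ _),
        incomp_append (by simp), incomp_append (by simp)⟩
    · exact ⟨s ++ [false], Or.inr (h.trans (List.prefix_append _ _)),
        s ++ [true], Or.inr (h.trans (List.prefix_append _ _)),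
        List.prefix_append _ _, List.prefix_append _ _,
        incomp_append (by simp), incomp_append (by simp)⟩


section
variable {I : Set (Set ℕ)} {c : List Bool → Bool}

theorem Lset_mem (hI : IsIdealOn I) (hbad : BadFor I c) (v : List Bool) (i : Bool) :
    {m : ℕ | ¬ ∃ t, v <+: t ∧ t.length = m ∧ c t = i} ∈ I := by
  set A : Set ℕ :=
    {m | v.length < m ∧ ∀ t : List Bool, v <+: t → t.length = m → c t = !i} with hA
  have hsub : {m : ℕ | ¬ ∃ t, v <+: t ∧ t.length = m ∧ c t = i} ⊆ A ∪ Iic v.length := by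
    intro m hm
    by_cases hlen : m ≤ v.length
    · exact Or.inr hlen
    · refine Or.inl ⟨by omega, fun t hvt htm => ?_⟩
      have hne : c t ≠ i := fun hc => hm ⟨t, hvt, htm, hc⟩
      cases hct : c t <;> cases i <;> simp_all
  have hAI : A ∈ I := by
    by_contra hAI
    have hAinf : A.Infinite := fun hfin => hAI (hI.1 A hfin)
    obtain ⟨s, hs, hne⟩ := hbad _ A hAI hAinf (cone_perfect v) (!i)
    obtain ⟨hsq, hsl⟩ := hs
    have hlt : v.length < s.length := hsl.1
    have hvs : v <+: s := by
      rcases hsq with h | h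
      · exact absurd h.length_le (by omega)
      · exact h
    exact hne (hsl.2 s hvs rfl)
  exact hI.2.2.1 _ _ hsub (hI.2.2.2 _ _ hAI (hI.1 _ (finite_Iic _)))

theorem Dco (hI : IsIdealOn I) (hbad : BadFor I c) (k : ℕ) :
    {m | m ∉ Dset c k} ∈ I := by
  have hsub : {m | m ∉ Dset c k} ⊆
      ⋃ v ∈ {l : List Bool | l.length ≤ k + 1},
        ({m : ℕ | ¬ ∃ t, v <+: t ∧ t.length = m ∧ c t = false} ∪
         {m : ℕ | ¬ ∃ t, v <+: t ∧ t.length = m ∧ c t = true}) := by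
    intro m hm
    simp only [Dset, mem_setOf_eq, not_forall] at hm
    obtain ⟨v, hv, i, hni⟩ := hm
    refine mem_biUnion hv ?_
    cases i
    · exact Or.inl hni
    · exact Or.inr hni
  exact hI.2.2.1 _ _ hsub
    (biUnion_mem_I hI (List.finite_length_le _ _)
      (fun v _ => hI.2.2.2 _ _ (Lset_mem hI hbad v false) (Lset_mem hI hbad v true)))
theorem selector (hI : IsIdealOn I) (hbad : BadFor I c) (k : ℕ → ℕ) (hk : StrictMono k)
    (ν : ℕ → ℕ) (S : Set ℕ)
    (hblock : ∀ m ∈ S, k (ν m + 1) < m ∧ m ≤ k (ν m + 2) ∧ m ∈ Dset c (k (ν m)))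
    (hgap : ∀ m ∈ S, ∀ m' ∈ S, m < m' → ν m + 2 ≤ ν m') : S ∈ I := by
  by_contra hS
  have hSinf : S.Infinite := fun hfin => hS (hI.1 S hfin)
  have hpinf : (setOf (fun m => m ∈ S)).Infinite := hSinf
  set ℓ : ℕ → ℕ := Nat.nth (fun m => m ∈ S) with hℓdef
  have hmemS : ∀ j, ℓ j ∈ S := fun j => Nat.nth_mem_of_infinite hpinf j
  have hmono : StrictMono ℓ := Nat.nth_strictMono hpinf
  have hsurj : ∀ m ∈ S, ∃ j, ℓ j = m := by
    intro m hm
    have : m ∈ Set.range (Nat.nth (fun m => m ∈ S)) := by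
      rw [Nat.range_nth_of_infinite hpinf]; exact hm
    exact this
  have hstep : ∀ j, ℓ j ≤ k (ν (ℓ (j + 1))) := by
    intro j
    have h1 := (hblock _ (hmemS j)).2.1
    have h2 := hgap _ (hmemS j) _ (hmemS (j + 1)) (hmono (Nat.lt_succ_self j))
    exact h1.trans (hk.monotone (by omega))
  have Hex : ∀ (j : ℕ) (v : List Bool), ∃ t : List Bool,
      v.length ≤ k (ν (ℓ j)) + 1 → (v <+: t ∧ t.length = ℓ j ∧ c t = false) := by
    intro j v
    by_cases hvl : v.length ≤ k (ν (ℓ j)) + 1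
    · obtain ⟨t, ht⟩ := (hblock _ (hmemS j)).2.2 v hvl false
      exact ⟨t, fun _ => ht⟩
    · exact ⟨[], fun h' => absurd h' hvl⟩
  set F : ℕ → List Bool → List Bool := fun j v => (Hex j v).choose with hF
  set σ : List Bool → List Bool := sigAux F with hσ
  have hσnil : σ [] = F 0 [] := rfl
  have hσcons : ∀ ε b, σ (ε :: b) = F (b.length + 1) (σ b ++ [ε]) := fun _ _ => rfl
  have hspec : ∀ b : List Bool, (σ b).length = ℓ b.length ∧ c (σ b) = false := by
    intro b
    induction b with
    | nil =>
      have h0 := (Hex 0 []).choose_spec (by simp)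
      exact ⟨h0.2.1, h0.2.2⟩
    | cons ε b ih =>
      have hlen : (σ b ++ [ε]).length ≤ k (ν (ℓ (b.length + 1))) + 1 := by
        rw [List.length_append, List.length_singleton, ih.1]
        have := hstep b.length; omega
      have h0 := (Hex (b.length + 1) (σ b ++ [ε])).choose_spec hlen
      rw [hσcons]
      exact ⟨h0.2.1, h0.2.2⟩
  have hpref : ∀ (ε : Bool) (b : List Bool), σ b ++ [ε] <+: σ (ε :: b) := by
    intro ε b
    have hlen : (σ b ++ [ε]).length ≤ k (ν (ℓ (b.length + 1))) + 1 := by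
      rw [List.length_append, List.length_singleton, (hspec b).1]
      have := hstep b.length; omega
    have h0 := (Hex (b.length + 1) (σ b ++ [ε])).choose_spec hlen
    rw [hσcons]
    exact h0.1
  have hpref' : ∀ (ε : Bool) (b : List Bool), σ b <+: σ (ε :: b) :=
    fun ε b => (List.prefix_append _ _).trans (hpref ε b)
  have hchain : ∀ (b₂ b₁ : List Bool), σ b₁ <+: σ (b₂ ++ b₁) := by
    intro b₂
    induction b₂ with
    | nil => intro b₁; exact List.prefix_rfl
    | cons ε b₂ ih =>
      intro b₁
      have : σ b₁ <+: σ (ε :: (b₂ ++ b₁)) := (ih b₁).trans (hpref' ε (b₂ ++ b₁))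
      simpa using this
  set q : Set (List Bool) := {s | ∃ b : List Bool, s <+: σ b} with hq
  have hq_perfect : IsPerfectTree q := by
    constructor
    · refine ⟨⟨σ [], ⟨[], List.prefix_rfl⟩⟩, ?_, ?_⟩
      · rintro s ⟨b, hb⟩ t ht
        exact ⟨b, ht.trans hb⟩
      · rintro s ⟨b, hb⟩
        refine ⟨σ (true :: b), ⟨true :: b, List.prefix_rfl⟩, hb.trans (hpref' true b), ?_⟩
        intro he
        have h1 : s.length ≤ (σ b).length := hb.length_le
        have h2 : (σ b).length = ℓ b.length := (hspec b).1
        have h3 : (σ (true :: b)).length = ℓ (b.length + 1) := (hspec (true :: b)).1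
        have h4 : ℓ b.length < ℓ (b.length + 1) := hmono (Nat.lt_succ_self _)
        have := congrArg List.length he
        omega
    · rintro s ⟨b, hb⟩
      have hkey : ∀ (ε₁ ε₂ : Bool), ε₁ ≠ ε₂ → ¬ σ (ε₁ :: b) <+: σ (ε₂ :: b) := by
        intro ε₁ ε₂ hne hpre
        have he : σ (ε₁ :: b) = σ (ε₂ :: b) :=
          hpre.eq_of_length (by rw [(hspec _).1, (hspec _).1]; simp)
        have p₁ : σ b ++ [ε₁] <+: σ (ε₂ :: b) := he ▸ hpref ε₁ b
        have p₂ : σ b ++ [ε₂] <+: σ (ε₂ :: b) := hpref ε₂ b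
        rcases List.prefix_or_prefix_of_prefix p₁ p₂ with h' | h'
        · exact incomp_append hne h'
        · exact incomp_append (Ne.symm hne) h'
      exact ⟨σ (false :: b), ⟨false :: b, List.prefix_rfl⟩,
        σ (true :: b), ⟨true :: b, List.prefix_rfl⟩,
        hb.trans (hpref' false b), hb.trans (hpref' true b),
        hkey false true (by simp), hkey true false (by simp)⟩
  have hmonochrome : ∀ s ∈ restrictTree q S, c s = false := by
    rintro s ⟨⟨b, hb⟩, hlenS⟩
    obtain ⟨j, hj⟩ := hsurj s.length hlenS
    have hjb : j ≤ b.length := by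
      have h1 : ℓ j ≤ ℓ b.length := by
        rw [hj, ← (hspec b).1]; exact hb.length_le
      exact hmono.le_iff_le.1 h1
    set b₀ := b.drop (b.length - j) with hb₀
    have hb₀len : b₀.length = j := by
      rw [hb₀, List.length_drop]; omega
    have hsplit : b.take (b.length - j) ++ b₀ = b := List.take_append_drop _ _
    have hpre : σ b₀ <+: σ b := by
      conv_rhs => rw [← hsplit]
      exact hchain _ _
    have hlen2 : s.length = (σ b₀).length := by rw [(hspec b₀).1, hb₀len, hj]
    have hseq : s = σ b₀ := by
      rcases List.prefix_or_prefix_of_prefix hb hpre with h' | h'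
      · exact h'.eq_of_length hlen2
      · exact (h'.eq_of_length hlen2.symm).symm
    rw [hseq]; exact (hspec b₀).2
  obtain ⟨s, hs, hne⟩ := hbad q S hS hSinf hq_perfect false
  exact hne (hmonochrome s hs)
theorem exists_block (κ : ℕ → ℕ) (hκ : StrictMono κ) (m : ℕ) (hm : κ 1 < m) :
    ∃ n, κ (n + 1) < m ∧ m ≤ κ (n + 2) := by
  set g := Nat.findGreatest (fun n => κ n < m) m with hg
  have h1m : 1 ≤ m := le_trans (hκ.le_apply (x := 1)) (le_of_lt hm)
  have hg1 : 1 ≤ g := Nat.le_findGreatest h1m hm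
  have hgs : κ g < m := Nat.findGreatest_spec (P := fun n => κ n < m) h1m hm
  have hgs2 : ¬ κ (g + 1) < m := by
    intro hc
    have hgb : g + 1 ≤ m := le_trans (hκ.le_apply (x := g + 1)) (le_of_lt hc)
    have := Nat.le_findGreatest (P := fun n => κ n < m) hgb hc
    omega
  refine ⟨g - 1, ?_, ?_⟩
  · rw [Nat.sub_add_cancel hg1]; exact hgs
  · have he : g - 1 + 2 = g + 1 := by omega
    rw [he]; omega


end

end Stmt10Aux

open Stmt10Aux

/-- If `I` is not HL, then `ED ≤_K I↾X` for some `X ∈ I⁺`. -/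
theorem stmt10 (I : Set (Set ℕ)) (hI : IsIdealOn I) (h : ¬ IsHLIdeal I) :
    ∃ X : Set ℕ, X ∉ I ∧
      KatetovLE EDIdeal {B : Set ↥X | ∃ A ∈ I, B = Subtype.val ⁻¹' A} := by
  classical
  -- extract a bad coloring
  rw [IsHLIdeal, IsHLFamily] at h
  push_neg at h
  obtain ⟨c, hc⟩ := h
  have hbad : BadFor I c := by
    intro p A hA hAinf hp i
    exact hc p A ⟨hA, hAinf⟩ hp i
  by_cases hP : ∃ X, X ∉ I ∧ ∃ k : ℕ → ℕ, StrictMono k ∧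
      ∀ m ∈ X, ∃ n, (k (n + 1) < m ∧ m ≤ k (n + 2)) ∧ m ∈ Dset c (k n)
  · -- positive case : block structure exists
    obtain ⟨X, hX, k, hk, hmem⟩ := hP
    refine ⟨X, hX, ?_⟩
    set Q : ℕ → ℕ → Prop :=
      fun m n => (k (n + 1) < m ∧ m ≤ k (n + 2)) ∧ m ∈ Dset c (k n) with hQ
    set ν : ℕ → ℕ := fun m => if h : ∃ n, Q m n then Nat.find h else 0 with hνdef
    have hν : ∀ m ∈ X, Q m (ν m) := by
      intro m hm
      have hex : ∃ n, Q m n := hmem m hm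
      have he : ν m = Nat.find hex := dif_pos hex
      rw [he]; exact Nat.find_spec hex
    refine ⟨fun mm => (ν mm.1, mm.1), ?_⟩
    intro A hA
    obtain ⟨m₀', k₀', hfib⟩ := hA
    set m₀ := m₀' + 1 with hm₀
    set A' := X ∩ {m | (ν m, m) ∈ A} with hA'def
    have hνmono' : ∀ m ∈ X, ∀ m' ∈ X, m < m' → ν m ≠ ν m' → ν m < ν m' := by
      intro m hm m' hm' hlt hne
      rcases lt_or_ge (ν m) (ν m') with h' | h'
      · exact h'
      · exfalso
        have h2 : ν m' < ν m := by omega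
        have h3 : k (ν m' + 2) ≤ k (ν m + 1) := hk.monotone (by omega)
        have h4 := (hν m hm).1
        have h5 := (hν m' hm').1
        omega
    set Zlow := A' ∩ {m | ν m < m₀} with hZlowdef
    set Sraw := A' ∩ {m | m₀ ≤ ν m} with hSrawdef
    have hZlow : Zlow ∈ I := by
      refine hI.2.2.1 _ (Iic (k (m₀ + 1))) ?_ (hI.1 _ (finite_Iic _))
      rintro m ⟨⟨hmX, _⟩, hν₀⟩
      have h6 : ν m < m₀ := hν₀
      have h4a := (hν m hmX).1.1
      have h4b := (hν m hmX).1.2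
      have h5 : k (ν m + 2) ≤ k (m₀ + 1) := hk.monotone (by omega)
      exact mem_Iic.2 (by omega)
    have hfibs : ∀ n, m₀ ≤ n →
        {j | (n, j) ∈ A}.Finite ∧ {j | (n, j) ∈ A}.ncard ≤ k₀' :=
      fun n hn => hfib n (by omega)
    set rank : ℕ → ℕ := fun m => (Sraw ∩ {m' | ν m' = ν m} ∩ Iio m).ncard with hrankdef
    have hTsub : ∀ m, Sraw ∩ {m' | ν m' = ν m} ⊆ {j | (ν m, j) ∈ A} := by
      rintro m m' ⟨⟨⟨_, hm'A⟩, _⟩, hνeq⟩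
      have : (ν m', m') ∈ A := hm'A
      rwa [hνeq] at this
    have hsel : ∀ r p', Sraw ∩ {m | rank m = r ∧ ν m % 2 = p'} ∈ I := by
      intro r p'
      apply selector hI hbad k hk ν
      · rintro m ⟨⟨⟨hmX, _⟩, _⟩, _⟩
        exact ⟨(hν m hmX).1.1, (hν m hmX).1.2, (hν m hmX).2⟩
      · rintro m ⟨hmS, hmr, hmp⟩ m' ⟨hm'S, hm'r, hm'p⟩ hlt
        have hmX : m ∈ X := hmS.1.1
        have hm'X : m' ∈ X := hm'S.1.1
        have hne : ν m ≠ ν m' := by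
          intro he
          have hfin : (Sraw ∩ {x | ν x = ν m'} ∩ Iio m').Finite :=
            ((hfibs (ν m') hm'S.2).1.subset
              ((inter_subset_left).trans (hTsub m')))
          have hsub2 : insert m (Sraw ∩ {x | ν x = ν m} ∩ Iio m) ⊆
              Sraw ∩ {x | ν x = ν m'} ∩ Iio m' := by
            rintro x hx
            rcases hx with rfl | ⟨⟨hx1, hx2⟩, hx3⟩
            · exact ⟨⟨hmS, he⟩, mem_Iio.2 hlt⟩
            · refine ⟨⟨hx1, by rw [mem_setOf_eq] at hx2 ⊢; omega⟩, ?_⟩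
              have := mem_Iio.1 hx3
              exact mem_Iio.2 (by omega)
          have hle := Set.ncard_le_ncard hsub2 hfin
          have hfin2 : (Sraw ∩ {x | ν x = ν m} ∩ Iio m).Finite :=
            ((hfibs (ν m) hmS.2).1.subset
              ((inter_subset_left).trans (hTsub m)))
          rw [Set.ncard_insert_of_notMem (fun hmm => (mem_Iio.1 hmm.2).false) hfin2] at hle
          have h6 : rank m + 1 ≤ rank m' := hle
          omega
        have hlt2 := hνmono' m hmX m' hm'X hlt hne
        omega
    have hSraw : Sraw ∈ I := by
      refine hI.2.2.1 _ (⋃ r ∈ Iio (k₀' + 1),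
        ((Sraw ∩ {m | rank m = r ∧ ν m % 2 = 0}) ∪
         (Sraw ∩ {m | rank m = r ∧ ν m % 2 = 1}))) ?_ ?_
      · intro m hm
        have hrk : rank m < k₀' + 1 := by
          have hfin := (hfibs (ν m) hm.2).1
          have h1 : Sraw ∩ {m' | ν m' = ν m} ∩ Iio m ⊆ {j | (ν m, j) ∈ A} :=
            (inter_subset_left).trans (hTsub m)
          have h2 := Set.ncard_le_ncard h1 hfin
          have h3 := (hfibs (ν m) hm.2).2
          have h4 : rank m ≤ {j | (ν m, j) ∈ A}.ncard := h2
          omega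
        refine mem_biUnion (mem_Iio.2 hrk) ?_
        rcases Nat.mod_two_eq_zero_or_one (ν m) with hp | hp
        · exact Or.inl ⟨hm, rfl, hp⟩
        · exact Or.inr ⟨hm, rfl, hp⟩
      · exact biUnion_mem_I hI (finite_Iio _)
          (fun r _ => hI.2.2.2 _ _ (hsel r 0) (hsel r 1))
    have hA'I : A' ∈ I := by
      have he : A' = Zlow ∪ Sraw := by
        ext m
        constructor
        · intro hm
          rcases lt_or_ge (ν m) m₀ with h' | h'
          · exact Or.inl ⟨hm, h'⟩
          · exact Or.inr ⟨hm, h'⟩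
        · rintro (⟨hm, _⟩ | ⟨hm, _⟩) <;> exact hm
      rw [he]; exact hI.2.2.2 _ _ hZlow hSraw
    refine ⟨A', hA'I, ?_⟩
    ext mm
    obtain ⟨m, hm⟩ := mm
    simp [hA'def, hm]
  · -- negative case : no block structure
    set D := Dset c with hD
    have hDco : ∀ K, {m | m ∉ D K} ∈ I := fun K => Dco hI hbad K
    set X := D 0 with hXdef
    have hX : X ∉ I := by
      intro hXI
      have huniv : (univ : Set ℕ) ∈ I := by
        refine hI.2.2.1 _ (X ∪ {m | m ∉ D 0}) ?_ (hI.2.2.2 _ _ hXI (hDco 0))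
        intro m _
        by_cases hmX : m ∈ X
        · exact Or.inl hmX
        · exact Or.inr hmX
      exact hI.2.1 huniv
    set pieceIdx : ℕ → ℕ :=
      fun m => if h : ∃ j, m ∉ D (j + 1) then Nat.find h + 1 else 0 with hpi
    have hpiece1 : ∀ m, 1 ≤ pieceIdx m → m ∉ D (pieceIdx m) := by
      intro m h1
      by_cases hex : ∃ j, m ∉ D (j + 1)
      · have he : pieceIdx m = Nat.find hex + 1 := dif_pos hex
        rw [he]; exact Nat.find_spec hex
      · have he : pieceIdx m = 0 := dif_neg hex
        omega
    have hpiece_min : ∀ m j, j + 1 < pieceIdx m → m ∈ D (j + 1) := by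
      intro m j hj
      by_cases hex : ∃ j', m ∉ D (j' + 1)
      · have he : pieceIdx m = Nat.find hex + 1 := dif_pos hex
        rw [he] at hj
        have := Nat.find_min hex (show j < Nat.find hex by omega)
        simpa using this
      · push_neg at hex
        exact hex j
    have hpiece0 : ∀ m, pieceIdx m = 0 → ∀ j, m ∉ D (j + 1) → False := by
      intro m h0 j hj
      by_cases hex : ∃ j', m ∉ D (j' + 1)
      · have he : pieceIdx m = Nat.find hex + 1 := dif_pos hex
        omega
      · exact hex ⟨j, hj⟩
    have hRinf : (⋂ j, D j) ∈ I := by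
      by_contra hR
      apply hP
      refine ⟨(⋂ j, D j) \ Iic 1, ?_, id, strictMono_id, ?_⟩
      · intro hmem
        apply hR
        refine hI.2.2.1 _ (((⋂ j, D j) \ Iic 1) ∪ Iic 1) ?_
          (hI.2.2.2 _ _ hmem (hI.1 _ (finite_Iic _)))
        intro x hx
        by_cases hx1 : x ∈ Iic 1
        · exact Or.inr hx1
        · exact Or.inl ⟨hx, hx1⟩
      · rintro m ⟨hm1, hm2⟩
        have hm2' : 2 ≤ m := by
          simp only [mem_Iic, not_le] at hm2; omega
        refine ⟨m - 2, ⟨?_, ?_⟩, ?_⟩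
        · show m - 2 + 1 < m; omega
        · show m ≤ m - 2 + 2; omega
        · exact mem_iInter.1 hm1 (m - 2)
    refine ⟨X, hX, fun mm => (pieceIdx mm.1, mm.1), ?_⟩
    intro A hA
    obtain ⟨m₀', k₀', hfib⟩ := hA
    set m₀ := m₀' + 1 with hm₀
    set A' := X ∩ {m | (pieceIdx m, m) ∈ A} with hA'def
    set Zlow := A' ∩ {m | pieceIdx m < m₀} with hZlowdef
    set Zhigh := A' ∩ {m | m₀ ≤ pieceIdx m} with hZhighdef
    have hpieceI : ∀ j, X ∩ {m | pieceIdx m = j} ∈ I := by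
      intro j
      cases j with
      | zero =>
        refine hI.2.2.1 _ (⋂ j, D j) ?_ hRinf
        rintro m ⟨hmX, hm0⟩
        refine mem_iInter.2 (fun j => ?_)
        cases j with
        | zero => exact hmX
        | succ j =>
          by_contra hmD
          exact hpiece0 m hm0 j hmD
      | succ j =>
        refine hI.2.2.1 _ {m | m ∉ D (j + 1)} ?_ (hDco (j + 1))
        rintro m ⟨hmX, hmj⟩
        have h1 : 1 ≤ pieceIdx m := by rw [mem_setOf_eq] at hmj; omega
        have := hpiece1 m h1
        rw [mem_setOf_eq] at hmj
        rw [hmj] at this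
        exact this
    have hZlow : Zlow ∈ I := by
      refine hI.2.2.1 _ (⋃ j ∈ Iio m₀, X ∩ {m | pieceIdx m = j}) ?_
        (biUnion_mem_I hI (finite_Iio _) (fun j _ => hpieceI j))
      rintro m ⟨⟨hmX, _⟩, hmlt⟩
      exact mem_biUnion (mem_Iio.2 hmlt) ⟨hmX, rfl⟩
    have hZfin : ∀ K, (Zhigh \ D K).Finite := by
      intro K
      have hsub : Zhigh \ D K ⊆
          ⋃ j ∈ Iio (K + 1), (Zhigh ∩ {m | pieceIdx m = j}) := by
        rintro m ⟨hmZ, hmD⟩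
        have hle : pieceIdx m ≤ K := by
          by_contra hgt
          push_neg at hgt
          rcases Nat.eq_zero_or_pos K with rfl | hK
          · exact hmD hmZ.1.1
          · have : K - 1 + 1 < pieceIdx m := by omega
            have := hpiece_min m (K - 1) this
            rw [show K - 1 + 1 = K by omega] at this
            exact hmD this
        exact mem_biUnion (mem_Iio.2 (by omega)) ⟨hmZ, rfl⟩
      refine Set.Finite.subset (Set.Finite.biUnion (finite_Iio (K + 1)) ?_) hsub
      intro j _
      by_cases hj : m₀ ≤ j
      · refine Set.Finite.subset (hfib j (by omega)).1 ?_
        rintro m ⟨⟨⟨_, hmA⟩, _⟩, hmj⟩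
        rw [mem_setOf_eq] at hmj hmA ⊢
        rwa [hmj] at hmA
      · refine Set.Finite.subset (finite_empty) ?_
        rintro m ⟨⟨_, hm2⟩, hmj⟩
        rw [mem_setOf_eq] at hm2 hmj
        omega
    have hZhigh : Zhigh ∈ I := by
      by_contra hZ
      apply hP
      have hbdd : ∀ K, ∃ b, ∀ m ∈ Zhigh, m ∉ D K → m ≤ b := by
        intro K
        obtain ⟨b, hb⟩ := (hZfin K).bddAbove
        exact ⟨b, fun m hm hmD => hb ⟨hm, hmD⟩⟩
      choose B hB using hbdd
      set κ : ℕ → ℕ := fun n => Nat.rec 0 (fun _ κn => max (κn + 1) (B κn + 1)) n with hκ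
      have hκs : ∀ n, κ (n + 1) = max (κ n + 1) (B (κ n) + 1) := fun n => rfl
      have hκmono : StrictMono κ := strictMono_nat_of_lt_succ (fun n => by rw [hκs]; omega)
      refine ⟨Zhigh \ Iic (κ 1), ?_, κ, hκmono, ?_⟩
      · intro hmem
        apply hZ
        refine hI.2.2.1 _ ((Zhigh \ Iic (κ 1)) ∪ Iic (κ 1)) ?_
          (hI.2.2.2 _ _ hmem (hI.1 _ (finite_Iic _)))
        intro x hx
        by_cases hx1 : x ∈ Iic (κ 1)
        · exact Or.inr hx1
        · exact Or.inl ⟨hx, hx1⟩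
      · rintro m ⟨hmZ, hm2⟩
        have h1 : κ 1 < m := by simp only [mem_Iic, not_le] at hm2; omega
        obtain ⟨n, hn1, hn2⟩ := exists_block κ hκmono m h1
        refine ⟨n, ⟨hn1, hn2⟩, ?_⟩
        have h2 : B (κ n) < m := by
          have h3 := hκs n
          omega
        by_contra hmD
        exact absurd (hB (κ n) m hmZ hmD) (by omega)
    have hA'I : A' ∈ I := by
      have he : A' = Zlow ∪ Zhigh := by
        ext m
        constructor
        · intro hm
          rcases lt_or_ge (pieceIdx m) m₀ with h' | h'
          · exact Or.inl ⟨hm, h'⟩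
          · exact Or.inr ⟨hm, h'⟩
        · rintro (⟨hm, _⟩ | ⟨hm, _⟩) <;> exact hm
      rw [he]; exact hI.2.2.2 _ _ hZlow hZhigh
    refine ⟨A', hA'I, ?_⟩
    ext mm
    obtain ⟨m, hm⟩ := mm
    simp [hA'def, hm]
end

section
/- The ideal nwd of nowhere dense subsets of the rationals ℚ is an HL ideal. -/
open Set

namespace Stmt11Aux

lemma nwd_mono {s t : Set ℚ} (hst : s ⊆ t) (h : IsNowhereDense t) : IsNowhereDense s := by
  rw [IsNowhereDense] at *
  have h2 : interior (closure s) ⊆ interior (closure t) := interior_mono (closure_mono hst)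
  rw [h] at h2
  exact Set.eq_empty_iff_forall_notMem.mpr fun x hx => (h2 hx).elim

lemma nwd_union {s t : Set ℚ} (hs : IsNowhereDense s) (ht : IsNowhereDense t) :
    IsNowhereDense (s ∪ t) := by
  rw [IsNowhereDense, closure_union]
  have h1 : interior (closure s ∪ closure t) ∩ (closure s)ᶜ ⊆ interior (closure t) := by
    apply interior_maximal
    · intro x hx
      rcases (interior_subset hx.1) with h | h
      · exact absurd h hx.2
      · exact h
    · exact isOpen_interior.inter isClosed_closure.isOpen_compl
  rw [ht] at h1
  have h2 : interior (closure s ∪ closure t) ⊆ closure s := by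
    intro x hx
    by_contra hxc
    exact absurd (h1 ⟨hx, hxc⟩) (Set.notMem_empty x)
  have h3 : interior (closure s ∪ closure t) ⊆ interior (closure s) :=
    interior_maximal h2 isOpen_interior
  rw [hs] at h3
  exact Set.eq_empty_iff_forall_notMem.mpr fun x hx => (h3 hx).elim

lemma ball_infinite (x : ℚ) (ε : ℝ) (hε : 0 < ε) : (Metric.ball x ε).Infinite := by
  obtain ⟨δ, hδ0, hδε⟩ := exists_rat_btwn hε
  have hδ0' : (0:ℚ) < δ := by exact_mod_cast hδ0
  refine Set.infinite_of_injective_forall_mem (f := fun n : ℕ => x + δ / (n + 2)) ?_ ?_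
  · intro a b hab
    simp only [add_right_inj] at hab
    have h2a : ((a:ℚ) + 2) ≠ 0 := by positivity
    have h2b : ((b:ℚ) + 2) ≠ 0 := by positivity
    field_simp at hab
    have h : (a:ℚ) = b := by linarith
    exact_mod_cast h
  · intro n
    rw [Metric.mem_ball, Rat.dist_eq]
    have h1 : (0:ℝ) < (δ:ℝ) / ((n:ℝ) + 2) := by positivity
    have h2 : (δ:ℝ) / ((n:ℝ) + 2) < δ := by
      rw [div_lt_iff₀ (by positivity)]
      nlinarith [hδ0]
    push_cast
    rw [show (x:ℝ) + (δ:ℝ) / ((n:ℝ) + 2) - (x:ℝ) = (δ:ℝ) / ((n:ℝ) + 2) by ring]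
    rw [abs_of_pos h1]
    linarith

lemma finite_nwd {s : Set ℚ} (h : s.Finite) : IsNowhereDense s := by
  rw [IsNowhereDense, h.isClosed.closure_eq]
  rw [Set.eq_empty_iff_forall_notMem]
  intro x hx
  obtain ⟨ε, hε, hball⟩ := Metric.mem_nhds_iff.mp (mem_interior_iff_mem_nhds.mp hx)
  exact (h.subset hball).not_infinite (ball_infinite x ε hε)

lemma ball_not_nwd (x : ℚ) (ε : ℝ) (hε : 0 < ε) : ¬ IsNowhereDense (Metric.ball x ε) := by
  intro h
  rw [IsNowhereDense] at h
  have hmem : x ∈ interior (Metric.ball x ε) := by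
    rw [Metric.isOpen_ball.interior_eq]
    exact Metric.mem_ball_self hε
  have h2 : x ∈ interior (closure (Metric.ball x ε)) :=
    interior_mono (subset_closure) hmem
  rw [h] at h2
  exact h2

lemma dense_not_nwd {s : Set ℚ} (h : Dense s) : ¬ IsNowhereDense s := by
  intro hn
  rw [IsNowhereDense, h.closure_eq, interior_univ] at hn
  exact (Set.univ_eq_empty_iff.mp hn).elim (0:ℚ)

lemma incomp {u t₀ t₁ : List Bool} {b₀ b₁ : Bool} (hne : b₀ ≠ b₁)
    (h₀ : u ++ [b₀] <+: t₀) (h₁ : u ++ [b₁] <+: t₁) : ¬ t₀ <+: t₁ := by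
  intro h
  have h₀' : u ++ [b₀] <+: t₁ := h₀.trans h
  have hp : u ++ [b₀] <+: u ++ [b₁] :=
    List.prefix_of_prefix_length_le h₀' h₁ (by simp)
  have heq := hp.eq_of_length (by simp)
  simp only [List.append_cancel_left_eq] at heq
  exact hne (by simpa using heq)

def Usable (c : List Bool → Bool) (L : List (List Bool)) (n : ℕ) : Set ℕ :=
  {ℓ | n < ℓ ∧ ∀ s ∈ L, ∃ t : List Bool, s <+: t ∧ t.length = ℓ ∧ c t = false}

lemma nwd_list {α : Type*} (g : α → Set ℚ) :
    ∀ L : List α, (∀ s ∈ L, IsNowhereDense (g s)) → IsNowhereDense (⋃ s ∈ L, g s) := by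
  intro L
  induction L with
  | nil =>
      intro _
      have h0 : (⋃ s ∈ ([] : List α), g s) = (∅ : Set ℚ) := by simp
      rw [h0]
      exact isNowhereDense_empty
  | cons a l ih =>
      intro h
      have heq : (⋃ s ∈ (a :: l), g s) = g a ∪ ⋃ s ∈ l, g s := by
        simp [List.mem_cons, Set.iUnion_or, Set.iUnion_union_distrib]
      rw [heq]
      exact nwd_union (h a List.mem_cons_self) (ih fun s hs => h s (List.mem_cons_of_mem a hs))

lemma case2 (c : List Bool → Bool) (e : ℚ ≃ ℕ) (L : List (List Bool)) (n : ℕ)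
    (hnd : ¬ Dense (e.symm '' Usable c L n)) :
    ∃ (p : Set (List Bool)) (A : Set ℕ), ¬ IsNowhereDense (e.symm '' A) ∧ A.Infinite ∧
      IsPerfectTree p ∧ ∀ w ∈ restrictTree p A, c w = true := by
  simp only [Dense, not_forall] at hnd
  obtain ⟨x, hx⟩ := hnd
  rw [Metric.mem_closure_iff] at hx
  push_neg at hx
  obtain ⟨ε, hε, hx⟩ := hx
  set Y : List Bool → Set ℕ := fun s =>
    {ℓ : ℕ | dist x (e.symm ℓ) < ε ∧ n < ℓ ∧
      ∀ t : List Bool, s <+: t → t.length = ℓ → c t = true} with hY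
  have cover : Metric.ball x ε ⊆ (e.symm '' Set.Iic n) ∪ ⋃ s ∈ L, e.symm '' Y s := by
    intro y hy
    have hdy : dist x y < ε := by rw [dist_comm]; exact Metric.mem_ball.mp hy
    by_cases hn : e y ≤ n
    · exact Or.inl ⟨e y, hn, e.symm_apply_apply y⟩
    · push_neg at hn
      have hyU : (e y) ∉ Usable c L n := by
        intro hU
        have hyD : y ∈ e.symm '' Usable c L n := ⟨e y, hU, e.symm_apply_apply y⟩
        exact absurd hdy (not_lt.mpr (hx y hyD))
      simp only [Usable, Set.mem_setOf_eq, not_and, not_forall] at hyU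
      obtain ⟨s, hsL, hs⟩ := hyU hn
      refine Or.inr (Set.mem_biUnion hsL ⟨e y, ?_, e.symm_apply_apply y⟩)
      refine ⟨by rw [e.symm_apply_apply]; exact hdy, hn, ?_⟩
      intro t hpre hlen
      by_contra hct
      exact hs ⟨t, hpre, hlen, by simpa using hct⟩
  have hexists : ∃ s ∈ L, ¬ IsNowhereDense (e.symm '' Y s) := by
    by_contra hall
    push_neg at hall
    have h1 : IsNowhereDense ((e.symm '' Set.Iic n) ∪ ⋃ s ∈ L, e.symm '' Y s) :=
      nwd_union (finite_nwd ((Set.finite_Iic n).image _)) (nwd_list _ L hall)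
    exact ball_not_nwd x ε hε (nwd_mono cover h1)
  obtain ⟨s, hsL, hsnwd⟩ := hexists
  set A : Set ℕ := {ℓ | ℓ ∈ Y s ∧ s.length < ℓ} with hA
  have hAnwd : ¬ IsNowhereDense (e.symm '' A) := by
    intro h
    apply hsnwd
    have hsub : Y s ⊆ A ∪ (Y s ∩ Set.Iic s.length) := by
      intro ℓ hℓ
      by_cases hl : s.length < ℓ
      · exact Or.inl ⟨hℓ, hl⟩
      · exact Or.inr ⟨hℓ, not_lt.mp hl⟩
    have himg := Set.image_mono (f := e.symm) hsub
    rw [Set.image_union] at himg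
    exact nwd_mono himg
      (nwd_union h (finite_nwd (((Set.finite_Iic s.length).inter_of_right _).image _)))
  have hAinf : A.Infinite := by
    by_contra hfin
    rw [Set.not_infinite] at hfin
    exact hAnwd (finite_nwd (hfin.image _))
  refine ⟨{w | w <+: s ∨ s <+: w}, A, hAnwd, hAinf, ?_, ?_⟩
  · have hcone : ∀ w ∈ {w : List Bool | w <+: s ∨ s <+: w}, ∃ m : List Bool,
        w <+: m ∧ s <+: m := by
      rintro w (h | h)
      · exact ⟨s, h, List.prefix_refl s⟩
      · exact ⟨w, List.prefix_refl w, h⟩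
    constructor
    · refine ⟨⟨[], Or.inl (List.nil_prefix)⟩, ?_, ?_⟩
      · rintro w (hw | hw) t ht
        · exact Or.inl (ht.trans hw)
        · rcases le_total t.length s.length with hl | hl
          · exact Or.inl (List.prefix_of_prefix_length_le ht hw hl)
          · exact Or.inr (List.prefix_of_prefix_length_le hw ht hl)
      · intro w hw
        obtain ⟨m, hwm, hsm⟩ := hcone w hw
        refine ⟨m ++ [false], Or.inr (hsm.trans (m.prefix_append [false])),
          hwm.trans (m.prefix_append [false]), ?_⟩
        intro heq
        have h1 : w.length < (m ++ [false]).length := by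
          have := hwm.length_le
          simp only [List.length_append, List.length_cons, List.length_nil]
          omega
        rw [heq] at h1
        exact lt_irrefl _ h1
    · intro w hw
      obtain ⟨m, hwm, hsm⟩ := hcone w hw
      refine ⟨m ++ [false], Or.inr (hsm.trans (m.prefix_append [false])),
        m ++ [true], Or.inr (hsm.trans (m.prefix_append [true])),
        hwm.trans (m.prefix_append [false]), hwm.trans (m.prefix_append [true]),
        incomp (by simp) (List.prefix_refl _) (List.prefix_refl _),
        incomp (by simp) (List.prefix_refl _) (List.prefix_refl _)⟩
  · rintro w ⟨hwp, hwA⟩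
    obtain ⟨hwY, hwlen⟩ := hwA
    rcases hwp with hw | hw
    · exact absurd hw.length_le (by omega)
    · exact hwY.2.2 w hw rfl

def Inv : ℕ × List (List Bool) → Prop := fun st =>
  st.2 ≠ [] ∧ ∀ s ∈ st.2, s.length = st.1

def Q (c : List Bool → Bool) (e : ℚ ≃ ℕ) (j : ℕ) (st st' : ℕ × List (List Bool)) : Prop :=
  st.1 < st'.1 ∧
  dist (e.symm st'.1) (e.symm (Nat.unpair j).1) < 1 / (((Nat.unpair j).2 : ℝ) + 1) ∧
  Inv st' ∧
  (∀ t ∈ st'.2, c t = false ∧ ∃ s ∈ st.2, s <+: t) ∧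
  (∀ s ∈ st.2, ∃ t₀ ∈ st'.2, ∃ t₁ ∈ st'.2, s ++ [false] <+: t₀ ∧ s ++ [true] <+: t₁)

lemma step (c : List Bool → Bool) (e : ℚ ≃ ℕ)
    (Hd : ∀ L n, Dense (e.symm '' Usable c L n)) (j : ℕ) (st : ℕ × List (List Bool))
    (h : Inv st) : ∃ st', Q c e j st st' := by
  classical
  set L : List (List Bool) := st.2.flatMap (fun s => [s ++ [false], s ++ [true]]) with hL
  have hLmem : ∀ s ∈ st.2, s ++ [false] ∈ L ∧ s ++ [true] ∈ L := by
    intro s hs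
    constructor <;> · rw [hL]; rw [List.mem_flatMap]; exact ⟨s, hs, by simp⟩
  have hmemL : ∀ u ∈ L, ∃ s ∈ st.2, (u = s ++ [false] ∨ u = s ++ [true]) := by
    intro u hu
    rw [hL, List.mem_flatMap] at hu
    obtain ⟨s, hs, hu⟩ := hu
    exact ⟨s, hs, by simpa using hu⟩
  have hε : (0:ℝ) < 1 / (((Nat.unpair j).2 : ℝ) + 1) := by positivity
  have hcl := (Hd L st.1) (e.symm (Nat.unpair j).1)
  rw [Metric.mem_closure_iff] at hcl
  obtain ⟨b, hbD, hbd⟩ := hcl _ hε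
  obtain ⟨ℓ, hℓU, rfl⟩ := hbD
  obtain ⟨hℓgt, hℓext⟩ := hℓU
  set f : List Bool → List Bool := fun u =>
    if h : ∃ t : List Bool, u <+: t ∧ t.length = ℓ ∧ c t = false then h.choose else [] with hf
  have hfspec : ∀ u ∈ L, u <+: f u ∧ (f u).length = ℓ ∧ c (f u) = false := by
    intro u hu
    have hex := hℓext u hu
    rw [hf]
    simp only [dif_pos hex]
    exact hex.choose_spec
  refine ⟨(ℓ, L.map f), hℓgt, by rw [dist_comm]; exact hbd, ?_, ?_, ?_⟩
  · constructor
    · obtain ⟨s, hs⟩ := List.exists_mem_of_ne_nil _ h.1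
      exact List.ne_nil_of_mem (List.mem_map_of_mem (f := f) (hLmem s hs).1)
    · intro t ht
      obtain ⟨u, hu, rfl⟩ := List.mem_map.mp ht
      exact (hfspec u hu).2.1
  · intro t ht
    obtain ⟨u, hu, rfl⟩ := List.mem_map.mp ht
    refine ⟨(hfspec u hu).2.2, ?_⟩
    obtain ⟨s, hs, hcase⟩ := hmemL u hu
    refine ⟨s, hs, ?_⟩
    have hsu : s <+: u := by
      rcases hcase with h' | h' <;> · rw [h']; exact s.prefix_append _
    exact hsu.trans (hfspec u hu).1
  · intro s hs
    obtain ⟨h0, h1⟩ := hLmem s hs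
    exact ⟨f (s ++ [false]), List.mem_map_of_mem (f := f) h0, f (s ++ [true]),
      List.mem_map_of_mem (f := f) h1, (hfspec _ h0).1, (hfspec _ h1).1⟩

noncomputable def Ss (c : List Bool → Bool) (e : ℚ ≃ ℕ)
    (Hd : ∀ L n, Dense (e.symm '' Usable c L n)) : ℕ → {st : ℕ × List (List Bool) // Inv st}
  | 0 => ⟨(0, [[]]), by
      refine ⟨by simp, ?_⟩
      intro s hs
      simp only [List.mem_singleton] at hs
      simp [hs]⟩
  | (j+1) => ⟨(step c e Hd j (Ss c e Hd j).1 (Ss c e Hd j).2).choose,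
      (step c e Hd j (Ss c e Hd j).1 (Ss c e Hd j).2).choose_spec.2.2.1⟩

lemma SsQ (c : List Bool → Bool) (e : ℚ ≃ ℕ)
    (Hd : ∀ L n, Dense (e.symm '' Usable c L n)) :
    ∀ j, Q c e j (Ss c e Hd j).1 (Ss c e Hd (j+1)).1 := by
  intro j
  exact (step c e Hd j (Ss c e Hd j).1 (Ss c e Hd j).2).choose_spec

lemma case1 (c : List Bool → Bool) (e : ℚ ≃ ℕ)
    (Hd : ∀ L n, Dense (e.symm '' Usable c L n)) :
    ∃ (p : Set (List Bool)) (A : Set ℕ), ¬ IsNowhereDense (e.symm '' A) ∧ A.Infinite ∧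
      IsPerfectTree p ∧ ∀ w ∈ restrictTree p A, c w = false := by
  set T := Ss c e Hd with hT
  set lvl : ℕ → ℕ := fun j => (T j).1.1 with hlvl
  have hQ := SsQ c e Hd
  have hInv : ∀ j, Inv (T j).1 := fun j => (T j).2
  have hmono : StrictMono lvl := strictMono_nat_of_lt_succ (fun j => (hQ j).1)
  set p : Set (List Bool) := {w | ∃ j, ∃ u ∈ (T j).1.2, w <+: u} with hp
  set A : Set ℕ := Set.range (fun j => lvl (j+1)) with hA
  have take_mem : ∀ k j, j ≤ k → ∀ u ∈ (T k).1.2, u.take (lvl j) ∈ (T j).1.2 := by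
    intro k
    induction k with
    | zero =>
        intro j hj u hu
        have hj0 : j = 0 := Nat.le_zero.mp hj
        subst hj0
        have hlen : u.length = lvl 0 := (hInv 0).2 u hu
        rw [← hlen, List.take_length]
        exact hu
    | succ k ih =>
        intro j hj u hu
        rcases eq_or_lt_of_le hj with h | h
        · rw [h]
          have hlen : u.length = lvl (k+1) := (hInv (k+1)).2 u hu
          rw [← hlen, List.take_length]
          exact hu
        · have hjk : j ≤ k := Nat.lt_succ_iff.mp h
          obtain ⟨_, ⟨s, hs, hpre⟩⟩ := (hQ k).2.2.2.1 u hu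
          have hslen : s.length = lvl k := (hInv k).2 s hs
          have htk : u.take (lvl k) = s := by
            rw [← hslen]
            exact (List.prefix_iff_eq_take.mp hpre).symm
          have h2 : u.take (lvl j) = (u.take (lvl k)).take (lvl j) := by
            rw [List.take_take, min_eq_left (hmono.le_iff_le.mpr hjk)]
          rw [h2, htk]
          exact ih j hjk s hs
  have mem_level : ∀ w ∈ p, ∀ j, w.length = lvl (j+1) → w ∈ (T (j+1)).1.2 := by
    intro w hw j hwl
    obtain ⟨k, u, hu, hpre⟩ := hw
    have hul : u.length = lvl k := (hInv k).2 u hu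
    have h1 : lvl (j+1) ≤ lvl k := by
      rw [← hwl, ← hul]
      exact hpre.length_le
    have hjk : j+1 ≤ k := hmono.le_iff_le.mp h1
    have hw2 : w = u.take (lvl (j+1)) := by
      rw [← hwl]
      exact List.prefix_iff_eq_take.mp hpre
    rw [hw2]
    exact take_mem k (j+1) hjk u hu
  have hnil : [] ∈ p := ⟨0, [], by simp [hT, Ss], List.nil_prefix⟩
  have hsplit : ∀ w ∈ p, ∃ t₀ ∈ p, ∃ t₁ ∈ p, w <+: t₀ ∧ w <+: t₁ ∧
      w.length < t₀.length ∧ (∃ u, u ++ [false] <+: t₀ ∧ u ++ [true] <+: t₁) := by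
    rintro w ⟨j, u, hu, hpre⟩
    obtain ⟨t₀, ht₀, t₁, ht₁, hp₀, hp₁⟩ := (hQ j).2.2.2.2 u hu
    have hul : u.length = lvl j := (hInv j).2 u hu
    have ht₀l : t₀.length = lvl (j+1) := (hInv (j+1)).2 t₀ ht₀
    refine ⟨t₀, ⟨j+1, t₀, ht₀, List.prefix_refl t₀⟩, t₁, ⟨j+1, t₁, ht₁, List.prefix_refl t₁⟩,
      hpre.trans ((u.prefix_append [false]).trans hp₀),
      hpre.trans ((u.prefix_append [true]).trans hp₁), ?_, u, hp₀, hp₁⟩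
    calc w.length ≤ u.length := hpre.length_le
      _ = lvl j := hul
      _ < lvl (j+1) := hmono (Nat.lt_succ_self j)
      _ = t₀.length := ht₀l.symm
  refine ⟨p, A, ?_, ?_, ⟨⟨⟨[], hnil⟩, ?_, ?_⟩, ?_⟩, ?_⟩
  · apply dense_not_nwd
    intro x
    rw [Metric.mem_closure_iff]
    intro ε hε
    obtain ⟨k, hk⟩ := exists_nat_one_div_lt hε
    refine ⟨e.symm (lvl (Nat.pair (e x) k + 1)),
      ⟨lvl (Nat.pair (e x) k + 1), ⟨Nat.pair (e x) k, rfl⟩, rfl⟩, ?_⟩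
    have h2 := (hQ (Nat.pair (e x) k)).2.1
    rw [Nat.unpair_pair, Equiv.symm_apply_apply] at h2
    rw [dist_comm]
    exact h2.trans hk
  · apply Set.infinite_range_of_injective
    intro a b hab
    exact Nat.succ_injective (hmono.injective hab)
  · rintro w ⟨j, u, hu, hpre⟩ t ht
    exact ⟨j, u, hu, ht.trans hpre⟩
  · intro w hw
    obtain ⟨t₀, ht₀, _, _, hw₀, _, hlt, _⟩ := hsplit w hw
    refine ⟨t₀, ht₀, hw₀, ?_⟩
    intro heq
    rw [heq] at hlt
    exact lt_irrefl _ hlt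
  · intro w hw
    obtain ⟨t₀, ht₀, t₁, ht₁, hw₀, hw₁, _, u, hu₀, hu₁⟩ := hsplit w hw
    exact ⟨t₀, ht₀, t₁, ht₁, hw₀, hw₁, incomp (by simp) hu₀ hu₁,
      incomp (by simp) hu₁ hu₀⟩
  · rintro w ⟨hwp, hwA⟩
    obtain ⟨j, hj⟩ := hwA
    exact ((hQ j).2.2.2.1 w (mem_level w hwp j hj.symm)).1

end Stmt11Aux

/-- The ideal `nwd` of nowhere dense subsets of `ℚ` is an HL ideal. -/
theorem stmt11 : IsHLIdealOnCountable {A : Set ℚ | IsNowhereDense A} := by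
  refine ⟨Denumerable.eqv ℚ, ?_⟩
  intro c
  set e := Denumerable.eqv ℚ with he
  have hmem : ∀ A : Set ℕ,
      A ∈ (fun B : Set ℚ => e '' B) '' {B : Set ℚ | IsNowhereDense B} →
        IsNowhereDense (e.symm '' A) := by
    intro A hA
    obtain ⟨B, hB, hBA⟩ := hA
    have : B = e.symm '' A := by rw [← hBA, Equiv.symm_image_image]
    rwa [← this]
  by_cases Hd : ∀ (L : List (List Bool)) (n : ℕ), Dense (e.symm '' Stmt11Aux.Usable c L n)
  · obtain ⟨p, A, hnwd, hinf, hperf, hmono⟩ := Stmt11Aux.case1 c e Hd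
    exact ⟨p, A, ⟨fun hA => hnwd (hmem A hA), hinf⟩, hperf, false, hmono⟩
  · push_neg at Hd
    obtain ⟨L, n, hnd⟩ := Hd
    obtain ⟨p, A, hnwd, hinf, hperf, hmono⟩ := Stmt11Aux.case2 c e L n hnd
    exact ⟨p, A, ⟨fun hA => hnwd (hmem A hA), hinf⟩, hperf, true, hmono⟩
end

section
/- If an ideal I on ω is not an HL ideal, then conv ≤_K I. -/
open Set

/-- The ideal `conv` on `ℚ ∩ [0,1]`: sets with only finitely many
accumulation points in `ℝ`. -/
def convIdeal : Set (Set ↥(Icc (0 : ℚ) 1)) :=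
  {A | {x : ℝ | AccPt x (Filter.principal
    ((fun q : ↥(Icc (0 : ℚ) 1) => ((q : ℚ) : ℝ)) '' A))}.Finite}


namespace HLK

/-- pad a node with `m` falses -/
def pad (v : List Bool) (m : ℕ) : List Bool := v ++ List.replicate m false

lemma pad_length (v : List Bool) (m : ℕ) : (pad v m).length = v.length + m := by
  simp [pad]

lemma pad_zero (v : List Bool) : pad v 0 = v := by simp [pad]

lemma prefix_pad (v : List Bool) (m : ℕ) : v <+: pad v m := List.prefix_append v _

lemma pad_prefix_pad (v : List Bool) {m m' : ℕ} (h : m ≤ m') : pad v m <+: pad v m' := by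
  refine ⟨List.replicate (m' - m) false, ?_⟩
  rw [pad, pad, List.append_assoc, ← List.replicate_add, Nat.add_sub_cancel' h]

lemma prefix_pad_of_le {s v : List Bool} {m : ℕ} (h : s <+: pad v m)
    (hl : s.length ≤ v.length) : s <+: v :=
  List.prefix_of_prefix_length_le h (prefix_pad v m) hl

lemma eq_pad_of_prefix {s v : List Bool} {m : ℕ} (h : s <+: pad v m)
    (hl : v.length ≤ s.length) : s = pad v (s.length - v.length) := by
  have hvs : v <+: s := List.prefix_of_prefix_length_le (prefix_pad v m) h hl
  obtain ⟨t, rfl⟩ := hvs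
  obtain ⟨u, hu⟩ := h
  rw [pad, List.append_assoc] at hu
  have ht : t ++ u = List.replicate m false := List.append_cancel_left hu
  have htp : t <+: List.replicate m false := ⟨u, ht⟩
  obtain ⟨w, hw⟩ := htp
  have : t = List.replicate t.length false := by
    refine List.eq_replicate_iff.mpr ⟨rfl, fun b hb => ?_⟩
    have : b ∈ List.replicate m false := by rw [← hw]; exact List.mem_append_left _ hb
    exact List.eq_of_mem_replicate this
  rw [pad]
  congr 1
  rw [this]
  congr 1
  simp

/-- injective encoding of nodes -/
def enc : List Bool → ℕ
  | [] => 0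
  | b :: l => 2 * enc l + (if b then 2 else 1)

lemma enc_le : ∀ v : List Bool, enc v + 2 ≤ 2 ^ (v.length + 1) := by
  intro v
  induction v with
  | nil => simp [enc]
  | cons b l ih =>
    simp only [enc, List.length_cons]
    have : 2 ^ (l.length + 1 + 1) = 2 * 2 ^ (l.length + 1) := by ring
    rw [this]
    cases b <;> simp <;> omega

lemma enc_inj : ∀ l₁ l₂ : List Bool, enc l₁ = enc l₂ → l₁ = l₂ := by
  intro l₁
  induction l₁ with
  | nil =>
    intro l₂ h
    cases l₂ with
    | nil => rfl
    | cons b l => simp only [enc] at h; cases b <;> simp at h <;> omega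
  | cons b l ih =>
    intro l₂ h
    cases l₂ with
    | nil => simp only [enc] at h; cases b <;> simp at h <;> omega
    | cons b' l' =>
      simp only [enc] at h
      have hb : b = b' ∧ enc l = enc l' := by
        cases b <;> cases b' <;> simp at h ⊢ <;> omega
      rw [hb.1, ih l' hb.2]

open Classical in
/-- the code of the natural number `n` (bits of `n` on even coordinates,
colors of `0`-padded nodes at level `n` on odd coordinates) -/
noncomputable def code (c : List Bool → Bool) (n : ℕ) (j : ℕ) : Bool :=
  if j % 2 = 0 then n.testBit (j / 2)
  else if h : ∃ v : List Bool, 2 * enc v + 1 = j ∧ v.length ≤ n then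
    c (pad h.choose (n - h.choose.length)) else false

lemma code_even (c : List Bool → Bool) (n k : ℕ) : code c n (2 * k) = n.testBit k := by
  simp [code, Nat.mul_div_cancel_left, Nat.mul_mod_right]

lemma code_coord (c : List Bool → Bool) {n : ℕ} {v : List Bool} (h : v.length ≤ n) :
    code c n (2 * enc v + 1) = c (pad v (n - v.length)) := by
  have hodd : (2 * enc v + 1) % 2 ≠ 0 := by omega
  have hex : ∃ w : List Bool, 2 * enc w + 1 = 2 * enc v + 1 ∧ w.length ≤ n := ⟨v, rfl, h⟩
  rw [code, if_neg hodd, dif_pos hex]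
  have hspec := hex.choose_spec
  have heq : hex.choose = v := enc_inj _ _ (by omega)
  rw [heq]

lemma code_bound (c : List Bool → Bool) (n j : ℕ) (hj : 2 ^ (n + 3) ≤ j) :
    code c n j = false := by
  rw [code]
  split_ifs with hpar hex
  · -- even coordinate: bit j/2 of n with j/2 large
    have h1 : n < 2 ^ (n + 1) := by
      calc n < 2 ^ n := Nat.lt_two_pow_self (n := n)
      _ ≤ 2 ^ (n + 1) := Nat.pow_le_pow_right (by norm_num) (by omega)
    have h3 : n + 2 ≤ 2 ^ (n + 2) := le_of_lt (Nat.lt_two_pow_self (n := n+2))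
    have h4 : (2:ℕ) ^ (n + 3) = 2 * 2 ^ (n + 2) := by ring
    have h2 : n + 1 ≤ j / 2 := by omega
    have hlt : n < 2 ^ (j / 2) := by
      calc n < 2 ^ (n + 1) := h1
      _ ≤ 2 ^ (j / 2) := Nat.pow_le_pow_right (by norm_num) h2
    exact Nat.testBit_lt_two_pow hlt
  · -- odd coordinate in range: impossible
    exfalso
    obtain ⟨hv1, hv2⟩ := hex.choose_spec
    set v := hex.choose
    have h1 : enc v + 2 ≤ 2 ^ (v.length + 1) := enc_le v
    have h2 : (2:ℕ) ^ (v.length + 1) ≤ 2 ^ (n + 1) := Nat.pow_le_pow_right (by norm_num) (by omega)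
    have h3 : (2:ℕ) ^ (n + 3) = 4 * 2 ^ (n + 1) := by ring
    omega
  · rfl

/-- the rational value of the code of `n` -/
noncomputable def valQ (c : List Bool → Bool) (n : ℕ) : ℚ :=
  ∑ j ∈ Finset.range (2 ^ (n + 3)), if code c n j then 2 / 3 ^ (j + 1) else 0

/-- the real value of the code of `n` -/
noncomputable def valR (c : List Bool → Bool) (n : ℕ) : ℝ :=
  ∑ j ∈ Finset.range (2 ^ (n + 3)), if code c n j then 2 / 3 ^ (j + 1) else 0

lemma valR_eq_cast (c : List Bool → Bool) (n : ℕ) : ((valQ c n : ℚ) : ℝ) = valR c n := by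
  rw [valQ, valR]
  push_cast [apply_ite (fun q : ℚ => (q : ℝ))]
  rfl

lemma geo_sum (L : ℕ) : ∑ j ∈ Finset.range L, (2:ℝ) / 3 ^ (j + 1) = 1 - 1 / 3 ^ L := by
  induction L with
  | zero => simp
  | succ L ih =>
    rw [Finset.sum_range_succ, ih]
    have h3 : (3:ℝ) ^ L ≠ 0 := by positivity
    field_simp
    ring

lemma valR_nonneg (c : List Bool → Bool) (n : ℕ) : 0 ≤ valR c n := by
  apply Finset.sum_nonneg
  intro j _
  split_ifs <;> positivity

lemma valR_le_one (c : List Bool → Bool) (n : ℕ) : valR c n ≤ 1 := by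
  have h1 : valR c n ≤ ∑ j ∈ Finset.range (2 ^ (n + 3)), (2:ℝ) / 3 ^ (j + 1) := by
    apply Finset.sum_le_sum
    intro j _
    split_ifs
    · exact le_refl _
    · positivity
  rw [geo_sum] at h1
  have : (0:ℝ) ≤ 1 / 3 ^ (2 ^ (n+3)) := by positivity
  linarith

lemma valQ_nonneg (c : List Bool → Bool) (n : ℕ) : 0 ≤ valQ c n := by
  have := valR_nonneg c n
  rw [← valR_eq_cast] at this
  exact_mod_cast this

lemma valQ_le_one (c : List Bool → Bool) (n : ℕ) : valQ c n ≤ 1 := by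
  have := valR_le_one c n
  rw [← valR_eq_cast] at this
  exact_mod_cast this

lemma valR_ext (c : List Bool → Bool) (n : ℕ) {L : ℕ} (hL : 2 ^ (n + 3) ≤ L) :
    valR c n = ∑ j ∈ Finset.range L, if code c n j then (2:ℝ) / 3 ^ (j + 1) else 0 := by
  rw [valR]
  apply Finset.sum_subset (Finset.range_subset_range.mpr hL)
  intro j _ hj
  rw [code_bound c n j (by simpa using hj)]
  simp

/-- separation: codes differing first at j₀ give values at distance ≥ (1/3)^(j₀+1) -/
lemma sep (c : List Bool → Bool) (n m j₀ : ℕ)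
    (hagree : ∀ j < j₀, code c n j = code c m j)
    (hne : code c n j₀ ≠ code c m j₀) :
    ((1:ℝ)/3) ^ (j₀ + 1) ≤ |valR c n - valR c m| := by
  set L := max (2 ^ (n + 3)) (2 ^ (m + 3)) with hLdef
  have hj₀L : j₀ < L := by
    by_contra hcon
    push_neg at hcon
    rw [code_bound c n j₀ (le_trans (le_max_left _ _) hcon),
      code_bound c m j₀ (le_trans (le_max_right _ _) hcon)] at hne
    exact hne rfl
  set a : ℕ → ℝ := fun j => if code c n j then (2:ℝ) / 3 ^ (j + 1) else 0 with ha
  set b : ℕ → ℝ := fun j => if code c m j then (2:ℝ) / 3 ^ (j + 1) else 0 with hb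
  have hvn : valR c n = ∑ j ∈ Finset.range L, a j := valR_ext c n (le_max_left _ _)
  have hvm : valR c m = ∑ j ∈ Finset.range L, b j := valR_ext c m (le_max_right _ _)
  have hdiff : valR c n - valR c m = ∑ j ∈ Finset.range L, (a j - b j) := by
    rw [hvn, hvm, Finset.sum_sub_distrib]
  -- split the sum
  have hsplit : ∑ j ∈ Finset.range L, (a j - b j) =
      (∑ j ∈ Finset.range (j₀ + 1), (a j - b j)) + ∑ j ∈ Finset.Ico (j₀ + 1) L, (a j - b j) := by
    simp only [Finset.range_eq_Ico]
    exact (Finset.sum_Ico_consecutive _ (Nat.zero_le (j₀+1)) (show j₀ + 1 ≤ L by omega)).symm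
  have hhead : ∑ j ∈ Finset.range (j₀ + 1), (a j - b j) = a j₀ - b j₀ := by
    rw [Finset.sum_range_succ]
    have : ∑ j ∈ Finset.range j₀, (a j - b j) = 0 := by
      apply Finset.sum_eq_zero
      intro j hj
      rw [Finset.mem_range] at hj
      simp only [ha, hb, hagree j hj, sub_self]
    rw [this, zero_add]
  have hmain : |a j₀ - b j₀| = 2 / 3 ^ (j₀ + 1) := by
    simp only [ha, hb]
    rcases Bool.eq_false_or_eq_true (code c n j₀) with h1 | h1 <;>
      rcases Bool.eq_false_or_eq_true (code c m j₀) with h2 | h2 <;>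
      rw [h1, h2] at hne ⊢ <;> simp at hne ⊢ <;> positivity
  have htail : |∑ j ∈ Finset.Ico (j₀ + 1) L, (a j - b j)| ≤ 1 / 3 ^ (j₀ + 1) := by
    calc |∑ j ∈ Finset.Ico (j₀ + 1) L, (a j - b j)|
        ≤ ∑ j ∈ Finset.Ico (j₀ + 1) L, |a j - b j| := Finset.abs_sum_le_sum_abs _ _
      _ ≤ ∑ j ∈ Finset.Ico (j₀ + 1) L, (2:ℝ) / 3 ^ (j + 1) := by
          apply Finset.sum_le_sum
          intro j _
          simp only [ha, hb]
          have hp : (0:ℝ) ≤ 2 / 3 ^ (j+1) := by positivity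
          split_ifs <;> simp [abs_of_nonneg, hp] <;> rw [abs_of_nonneg hp] <;> exact le_refl _
      _ = (1 - 1/3 ^ L) - (1 - 1/3^(j₀+1)) := by
          have hsum := Finset.sum_Ico_consecutive (fun j => (2:ℝ) / 3 ^ (j+1))
            (Nat.zero_le (j₀+1)) (show j₀ + 1 ≤ L from hj₀L)
          have hg1 := geo_sum L
          have hg2 := geo_sum (j₀ + 1)
          rw [Finset.range_eq_Ico] at hg1 hg2
          rw [← hg1, ← hg2, ← hsum]
          ring
      _ ≤ 1 / 3 ^ (j₀ + 1) := by
          have : (0:ℝ) ≤ 1/3^L := by positivity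
          linarith
  have habs : |a j₀ - b j₀| - |∑ j ∈ Finset.Ico (j₀ + 1) L, (a j - b j)| ≤ |valR c n - valR c m| := by
    rw [hdiff, hsplit, hhead]
    have := abs_sub_abs_le_abs_sub (a j₀ - b j₀)  (-(∑ j ∈ Finset.Ico (j₀ + 1) L, (a j - b j)))
    rw [abs_neg, sub_neg_eq_add] at this
    linarith [this]
  have hpow : ((1:ℝ)/3) ^ (j₀+1) = 1 / 3 ^ (j₀ + 1) := by
    rw [div_pow, one_pow]
  rw [hpow]
  rw [hmain] at habs
  have h2 : (2:ℝ) / 3 ^ (j₀ + 1) - 1 / 3 ^ (j₀+1) = 1/3^(j₀+1) := by ring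
  linarith [habs, htail]

open Classical in
lemma exists_least_diff (c : List Bool → Bool) {n m : ℕ}
    (hne : ∃ j, code c n j ≠ code c m j) :
    ∃ j₀, (∀ j < j₀, code c n j = code c m j) ∧ code c n j₀ ≠ code c m j₀ := by
  classical
  refine ⟨Nat.find hne, fun j hj => ?_, Nat.find_spec hne⟩
  have := Nat.find_min hne hj
  by_contra hc
  exact this hc

lemma valR_inj (c : List Bool → Bool) {n m : ℕ} (hnm : n ≠ m) : valR c n ≠ valR c m := by
  have hex : ∃ j, code c n j ≠ code c m j := by
    by_contra hc
    push_neg at hc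
    apply hnm
    apply Nat.eq_of_testBit_eq
    intro k
    have := hc (2 * k)
    rwa [code_even, code_even] at this
  obtain ⟨j₀, h1, h2⟩ := exists_least_diff c hex
  have := sep c n m j₀ h1 h2
  intro hval
  rw [hval, sub_self, abs_zero] at this
  have hpos : (0:ℝ) < (1/3) ^ (j₀ + 1) := by positivity
  linarith

lemma stab_of_close (c : List Bool → Bool) {n m j : ℕ}
    (hclose : |valR c n - valR c m| < ((1:ℝ)/3) ^ (j + 1)) :
    ∀ j' ≤ j, code c n j' = code c m j' := by
  intro j' hj'
  by_contra hc
  obtain ⟨j₀, h1, h2⟩ := exists_least_diff c ⟨j', hc⟩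
  have hj₀ : j₀ ≤ j' := by
    by_contra hgt
    push_neg at hgt
    exact hc (h1 j' hgt)
  have hsep := sep c n m j₀ h1 h2
  have hmono : ((1:ℝ)/3) ^ (j + 1) ≤ ((1:ℝ)/3) ^ (j₀ + 1) := by
    apply pow_le_pow_of_le_one (by norm_num) (by norm_num)
    omega
  linarith

/-! ### The two-tree construction -/

section Construction

variable (S : List Bool → Bool) (i : Bool) (t0 : List Bool) (Nf : List Bool → ℕ)

/-- a good pair of extensions -/
def Qp (u x y : List Bool) : Prop :=
  u <+: x ∧ u <+: y ∧ ¬ x <+: y ∧ ¬ y <+: x ∧ S x = i ∧ S y = i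

open Classical in
noncomputable def pick (u : List Bool) : List Bool × List Bool :=
  if h : ∃ q : List Bool × List Bool, Qp S i u q.1 q.2 then h.choose else (u, u)

lemma pick_spec {u : List Bool} (h : ∃ q : List Bool × List Bool, Qp S i u q.1 q.2) :
    Qp S i u (pick S i u).1 (pick S i u).2 := by
  rw [pick, dif_pos h]; exact h.choose_spec

/-- weight of a base -/
def wt (b : List Bool) : ℕ := max (Nf b) b.length

noncomputable def spawn (G : ℕ) (P : Finset (List Bool)) : Finset (List Bool) :=
  P ∪ P.biUnion (fun b => {(pick S i (pad b (G + 1 - b.length))).1,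
                           (pick S i (pad b (G + 1 - b.length))).2})

noncomputable def stage : ℕ → Finset (List Bool) × Finset (List Bool) × ℕ
  | 0 =>
    ⟨{(pick S i t0).1}, {(pick S i t0).2},
      (({(pick S i t0).1, (pick S i t0).2} : Finset (List Bool)).sup (wt Nf)) + 1⟩
  | (j+1) =>
    let st := stage j
    if Even j then
      ⟨spawn S i st.2.2 st.1, st.2.1,
        ((spawn S i st.2.2 st.1 ∪ st.2.1).sup (wt Nf)) + st.2.2 + 1⟩
    else
      ⟨st.1, spawn S i st.2.2 st.2.1,
        ((st.1 ∪ spawn S i st.2.2 st.2.1).sup (wt Nf)) + st.2.2 + 1⟩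

noncomputable def PJ (j : ℕ) : Finset (List Bool) := (stage S i t0 Nf j).1
noncomputable def QJ (j : ℕ) : Finset (List Bool) := (stage S i t0 Nf j).2.1
noncomputable def GJ (j : ℕ) : ℕ := (stage S i t0 Nf j).2.2

lemma stage_succ_even {j : ℕ} (hj : Even j) :
    PJ S i t0 Nf (j+1) = spawn S i (GJ S i t0 Nf j) (PJ S i t0 Nf j) ∧
    QJ S i t0 Nf (j+1) = QJ S i t0 Nf j ∧
    GJ S i t0 Nf (j+1) = ((spawn S i (GJ S i t0 Nf j) (PJ S i t0 Nf j) ∪ QJ S i t0 Nf j).sup (wt Nf))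
      + GJ S i t0 Nf j + 1 := by
  simp only [PJ, QJ, GJ, stage, if_pos hj]
  exact ⟨trivial, trivial, trivial⟩

lemma stage_succ_odd {j : ℕ} (hj : ¬ Even j) :
    PJ S i t0 Nf (j+1) = PJ S i t0 Nf j ∧
    QJ S i t0 Nf (j+1) = spawn S i (GJ S i t0 Nf j) (QJ S i t0 Nf j) ∧
    GJ S i t0 Nf (j+1) = ((PJ S i t0 Nf j ∪ spawn S i (GJ S i t0 Nf j) (QJ S i t0 Nf j)).sup (wt Nf))
      + GJ S i t0 Nf j + 1 := by
  simp only [PJ, QJ, GJ, stage, if_neg hj]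
  exact ⟨trivial, trivial, trivial⟩

lemma subset_spawn (G : ℕ) (P : Finset (List Bool)) : P ⊆ spawn S i G P :=
  Finset.subset_union_left

lemma mem_spawn {G : ℕ} {P : Finset (List Bool)} {b : List Bool} (hb : b ∈ spawn S i G P) :
    b ∈ P ∨ ∃ b' ∈ P, b = (pick S i (pad b' (G + 1 - b'.length))).1 ∨
      b = (pick S i (pad b' (G + 1 - b'.length))).2 := by
  rcases Finset.mem_union.mp hb with h | h
  · exact Or.inl h
  · right
    obtain ⟨b', hb', hmem⟩ := Finset.mem_biUnion.mp h
    refine ⟨b', hb', ?_⟩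
    rcases Finset.mem_insert.mp hmem with h | h
    · exact Or.inl h
    · exact Or.inr (Finset.mem_singleton.mp h)

lemma spawn_mem_1 {G : ℕ} {P : Finset (List Bool)} {b : List Bool} (hb : b ∈ P) :
    (pick S i (pad b (G + 1 - b.length))).1 ∈ spawn S i G P := by
  apply Finset.mem_union_right
  exact Finset.mem_biUnion.mpr ⟨b, hb, Finset.mem_insert_self _ _⟩

lemma spawn_mem_2 {G : ℕ} {P : Finset (List Bool)} {b : List Bool} (hb : b ∈ P) :
    (pick S i (pad b (G + 1 - b.length))).2 ∈ spawn S i G P := by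
  apply Finset.mem_union_right
  exact Finset.mem_biUnion.mpr ⟨b, hb, Finset.mem_insert.mpr (Or.inr (Finset.mem_singleton_self _))⟩

lemma PJ_subset_succ (j : ℕ) : PJ S i t0 Nf j ⊆ PJ S i t0 Nf (j+1) := by
  by_cases hj : Even j
  · rw [(stage_succ_even S i t0 Nf hj).1]; exact subset_spawn S i _ _
  · rw [(stage_succ_odd S i t0 Nf hj).1]

lemma QJ_subset_succ (j : ℕ) : QJ S i t0 Nf j ⊆ QJ S i t0 Nf (j+1) := by
  by_cases hj : Even j
  · rw [(stage_succ_even S i t0 Nf hj).2.1]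
  · rw [(stage_succ_odd S i t0 Nf hj).2.1]; exact subset_spawn S i _ _

lemma PJ_mono {j j' : ℕ} (h : j ≤ j') : PJ S i t0 Nf j ⊆ PJ S i t0 Nf j' := by
  induction j' with
  | zero => have : j = 0 := by omega
            subst this; exact fun x hx => hx
  | succ j'' ih =>
    rcases Nat.lt_or_ge j (j''+1) with hlt | hge
    · exact fun x hx => PJ_subset_succ S i t0 Nf j'' (ih (by omega) hx)
    · have : j = j'' + 1 := by omega
      subst this; exact fun x hx => hx

lemma QJ_mono {j j' : ℕ} (h : j ≤ j') : QJ S i t0 Nf j ⊆ QJ S i t0 Nf j' := by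
  induction j' with
  | zero => have : j = 0 := by omega
            subst this; exact fun x hx => hx
  | succ j'' ih =>
    rcases Nat.lt_or_ge j (j''+1) with hlt | hge
    · exact fun x hx => QJ_subset_succ S i t0 Nf j'' (ih (by omega) hx)
    · have : j = j'' + 1 := by omega
      subst this; exact fun x hx => hx

lemma wt_lt_GJ {j : ℕ} {b : List Bool} (hb : b ∈ PJ S i t0 Nf j ∪ QJ S i t0 Nf j) :
    wt Nf b < GJ S i t0 Nf j := by
  cases j with
  | zero =>
    have hsup : wt Nf b ≤ (({(pick S i t0).1, (pick S i t0).2} : Finset (List Bool)).sup (wt Nf)) := by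
      apply Finset.le_sup
      simp only [PJ, QJ, stage, Finset.mem_union] at hb
      rcases hb with h | h
      · exact Finset.mem_insert.mpr (Or.inl (Finset.mem_singleton.mp h))
      · exact Finset.mem_insert.mpr (Or.inr h)
    have : GJ S i t0 Nf 0 = (({(pick S i t0).1, (pick S i t0).2} : Finset (List Bool)).sup (wt Nf)) + 1 := rfl
    omega
  | succ j' =>
    by_cases hj : Even j'
    · obtain ⟨hP, hQ, hG⟩ := stage_succ_even S i t0 Nf hj
      rw [hP, hQ] at hb
      have : wt Nf b ≤ (spawn S i (GJ S i t0 Nf j') (PJ S i t0 Nf j') ∪ QJ S i t0 Nf j').sup (wt Nf) :=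
        Finset.le_sup hb
      omega
    · obtain ⟨hP, hQ, hG⟩ := stage_succ_odd S i t0 Nf hj
      rw [hP, hQ] at hb
      have : wt Nf b ≤ (PJ S i t0 Nf j' ∪ spawn S i (GJ S i t0 Nf j') (QJ S i t0 Nf j')).sup (wt Nf) :=
        Finset.le_sup hb
      omega

lemma GJ_lt_succ (j : ℕ) : GJ S i t0 Nf j < GJ S i t0 Nf (j+1) := by
  by_cases hj : Even j
  · have := (stage_succ_even S i t0 Nf hj).2.2; omega
  · have := (stage_succ_odd S i t0 Nf hj).2.2; omega

lemma GJ_mono {j j' : ℕ} (h : j ≤ j') : GJ S i t0 Nf j ≤ GJ S i t0 Nf j' := by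
  induction j' with
  | zero => have : j = 0 := by omega
            subst this; exact le_refl _
  | succ j'' ih =>
    rcases Nat.lt_or_ge j (j''+1) with hlt | hge
    · have := GJ_lt_succ S i t0 Nf j''; have := ih (by omega); omega
    · have : j = j'' + 1 := by omega
      subst this; exact le_refl _

lemma GJ_ge (j : ℕ) : j + 1 ≤ GJ S i t0 Nf j := by
  induction j with
  | zero =>
    have : GJ S i t0 Nf 0 = (({(pick S i t0).1, (pick S i t0).2} : Finset (List Bool)).sup (wt Nf)) + 1 := rfl
    omega
  | succ j' ih => have := GJ_lt_succ S i t0 Nf j'; omega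

variable {S : List Bool → Bool} {i : Bool} {t0 : List Bool} {Nf : List Bool → ℕ}

/-- richness hypothesis -/
def Rich (S : List Bool → Bool) (i : Bool) (t0 : List Bool) : Prop :=
  ∀ u : List Bool, t0 <+: u → ∃ q : List Bool × List Bool, Qp S i u q.1 q.2

lemma base_props (hrich : Rich S i t0) :
    ∀ j, ∀ b ∈ PJ S i t0 Nf j ∪ QJ S i t0 Nf j, t0 <+: b ∧ S b = i := by
  intro j
  induction j with
  | zero =>
    intro b hb
    have hspec := pick_spec S i (hrich t0 (List.prefix_rfl))
    simp only [PJ, QJ, stage, Finset.mem_union, Finset.mem_singleton] at hb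
    rcases hb with h | h <;> subst h
    · exact ⟨hspec.1, hspec.2.2.2.2.1⟩
    · exact ⟨hspec.2.1, hspec.2.2.2.2.2⟩
  | succ j' ih =>
    intro b hb
    have hnew : ∀ (R : Finset (List Bool)), (∀ b' ∈ R, t0 <+: b' ∧ S b' = i) →
        ∀ b'' ∈ spawn S i (GJ S i t0 Nf j') R, t0 <+: b'' ∧ S b'' = i := by
      intro R hR b'' hb''
      rcases mem_spawn S i hb'' with h | ⟨b', hb', h⟩
      · exact hR b'' h
      · have hb't0 : t0 <+: b' := (hR b' hb').1
        have hu : t0 <+: pad b' (GJ S i t0 Nf j' + 1 - b'.length) :=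
          hb't0.trans (prefix_pad _ _)
        have hspec := pick_spec S i (hrich _ hu)
        rcases h with h | h <;> subst h
        · exact ⟨hu.trans hspec.1, hspec.2.2.2.2.1⟩
        · exact ⟨hu.trans hspec.2.1, hspec.2.2.2.2.2⟩
    by_cases hj : Even j'
    · obtain ⟨hP, hQ, _⟩ := stage_succ_even S i t0 Nf hj
      rw [hP, hQ] at hb
      rcases Finset.mem_union.mp hb with h | h
      · exact hnew _ (fun b' hb' => ih b' (Finset.mem_union_left _ hb')) b h
      · exact ih b (Finset.mem_union_right _ h)
    · obtain ⟨hP, hQ, _⟩ := stage_succ_odd S i t0 Nf hj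
      rw [hP, hQ] at hb
      rcases Finset.mem_union.mp hb with h | h
      · exact ih b (Finset.mem_union_left _ h)
      · exact hnew _ (fun b' hb' => ih b' (Finset.mem_union_right _ hb')) b h

/-- new bases in `Q` at an odd step extend a long pad of an older base -/
lemma QJ_new {j : ℕ} (hj : ¬ Even j) {b : List Bool}
    (hb : b ∈ QJ S i t0 Nf (j+1)) (hbold : b ∉ QJ S i t0 Nf j) :
    ∃ b' ∈ QJ S i t0 Nf j, pad b' (GJ S i t0 Nf j + 1 - b'.length) <+: b := by
  obtain ⟨_, hQ, _⟩ := stage_succ_odd S i t0 Nf hj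
  rw [hQ] at hb
  rcases mem_spawn S i hb with h | ⟨b', hb', h⟩
  · exact absurd h hbold
  · refine ⟨b', hb', ?_⟩
    rcases h with h | h <;> subst h
    · by_cases hex : ∃ q : List Bool × List Bool, Qp S i (pad b' (GJ S i t0 Nf j + 1 - b'.length)) q.1 q.2
      · exact (pick_spec S i hex).1
      · rw [pick, dif_neg hex]
    · by_cases hex : ∃ q : List Bool × List Bool, Qp S i (pad b' (GJ S i t0 Nf j + 1 - b'.length)) q.1 q.2
      · exact (pick_spec S i hex).2.1
      · rw [pick, dif_neg hex]

lemma PJ_new {j : ℕ} (hj : Even j) {b : List Bool}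
    (hb : b ∈ PJ S i t0 Nf (j+1)) (hbold : b ∉ PJ S i t0 Nf j) :
    ∃ b' ∈ PJ S i t0 Nf j, pad b' (GJ S i t0 Nf j + 1 - b'.length) <+: b := by
  obtain ⟨hP, _, _⟩ := stage_succ_even S i t0 Nf hj
  rw [hP] at hb
  rcases mem_spawn S i hb with h | ⟨b', hb', h⟩
  · exact absurd h hbold
  · refine ⟨b', hb', ?_⟩
    rcases h with h | h <;> subst h
    · by_cases hex : ∃ q : List Bool × List Bool, Qp S i (pad b' (GJ S i t0 Nf j + 1 - b'.length)) q.1 q.2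
      · exact (pick_spec S i hex).1
      · rw [pick, dif_neg hex]
    · by_cases hex : ∃ q : List Bool × List Bool, Qp S i (pad b' (GJ S i t0 Nf j + 1 - b'.length)) q.1 q.2
      · exact (pick_spec S i hex).2.1
      · rw [pick, dif_neg hex]

/-- locate the stage where a base of `Q` was created -/
lemma QJ_locate (j : ℕ) : ∀ j' (b : List Bool), b ∈ QJ S i t0 Nf j' →
    b ∈ QJ S i t0 Nf j ∨ ∃ k, ¬ Even k ∧ j ≤ k ∧ k < j' ∧ b ∉ QJ S i t0 Nf k ∧ b ∈ QJ S i t0 Nf (k+1) := by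
  intro j'
  induction j' with
  | zero => intro b hb; exact Or.inl (QJ_mono S i t0 Nf (Nat.zero_le j) hb)
  | succ j'' ih =>
    intro b hb
    by_cases hold : b ∈ QJ S i t0 Nf j''
    · rcases ih b hold with h | ⟨k, h1, h2, h3, h4, h5⟩
      · exact Or.inl h
      · exact Or.inr ⟨k, h1, h2, by omega, h4, h5⟩
    · by_cases hj : Even j''
      · rw [(stage_succ_even S i t0 Nf hj).2.1] at hb
        exact absurd hb hold
      · rcases Nat.lt_or_ge j'' j with hlt | hge
        · exact Or.inl (QJ_mono S i t0 Nf (by omega) hb)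
        · exact Or.inr ⟨j'', hj, hge, by omega, hold, hb⟩

lemma PJ_locate (j : ℕ) : ∀ j' (b : List Bool), b ∈ PJ S i t0 Nf j' →
    b ∈ PJ S i t0 Nf j ∨ ∃ k, Even k ∧ j ≤ k ∧ k < j' ∧ b ∉ PJ S i t0 Nf k ∧ b ∈ PJ S i t0 Nf (k+1) := by
  intro j'
  induction j' with
  | zero => intro b hb; exact Or.inl (PJ_mono S i t0 Nf (Nat.zero_le j) hb)
  | succ j'' ih =>
    intro b hb
    by_cases hold : b ∈ PJ S i t0 Nf j''
    · rcases ih b hold with h | ⟨k, h1, h2, h3, h4, h5⟩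
      · exact Or.inl h
      · exact Or.inr ⟨k, h1, h2, by omega, h4, h5⟩
    · by_cases hj : Even j''
      · rcases Nat.lt_or_ge j'' j with hlt | hge
        · exact Or.inl (PJ_mono S i t0 Nf (by omega) hb)
        · exact Or.inr ⟨j'', hj, hge, by omega, hold, hb⟩
      · rw [(stage_succ_odd S i t0 Nf hj).1] at hb
        exact absurd hb hold

/-- the tree generated by a family of bases -/
def Tr (R : ℕ → Finset (List Bool)) : Set (List Bool) :=
  {s | ∃ j, ∃ b ∈ R j, ∃ m, s <+: pad b m}

lemma tree_split (hrich : Rich S i t0) (useP : Bool) :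
    ∀ s ∈ Tr (if useP then PJ S i t0 Nf else QJ S i t0 Nf),
      ∃ x, x ∈ Tr (if useP then PJ S i t0 Nf else QJ S i t0 Nf) ∧
      ∃ y, y ∈ Tr (if useP then PJ S i t0 Nf else QJ S i t0 Nf) ∧
      s <+: x ∧ s <+: y ∧ ¬ x <+: y ∧ ¬ y <+: x := by
  intro s hs
  obtain ⟨j, b, hb, m, hsb⟩ := hs
  -- choose a large stage of the right parity
  set J := 2 * (j + b.length + m) + (if useP then 0 else 1) with hJ
  have hJj : j ≤ J := by rcases useP with _ | _ <;> simp [hJ] <;> omega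
  have hGJ : b.length + m ≤ GJ S i t0 Nf J := by
    have := GJ_ge S i t0 Nf J
    rcases useP with _ | _ <;> simp [hJ] at this ⊢ <;> omega
  have hbJ : b ∈ (if useP then PJ S i t0 Nf else QJ S i t0 Nf) J := by
    rcases useP with _ | _
    · simpa using QJ_mono S i t0 Nf hJj (by simpa using hb)
    · simpa using PJ_mono S i t0 Nf hJj (by simpa using hb)
  have hbt0 : t0 <+: b := by
    rcases useP with _ | _
    · exact (base_props hrich J b (Finset.mem_union_right _ (by simpa using hbJ))).1
    · exact (base_props hrich J b (Finset.mem_union_left _ (by simpa using hbJ))).1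
  set u := pad b (GJ S i t0 Nf J + 1 - b.length) with hu
  have ht0u : t0 <+: u := hbt0.trans (prefix_pad _ _)
  have hspec := pick_spec S i (hrich u ht0u)
  have hpadu : pad b m <+: u := pad_prefix_pad b (by omega)
  have hsu : s <+: u := hsb.trans hpadu
  have hxmem : (pick S i u).1 ∈ (if useP then PJ S i t0 Nf else QJ S i t0 Nf) (J+1) := by
    rcases useP with _ | _
    · have hpar : ¬ Even J := by simp [hJ, Nat.even_add_one, parity_simps]
      show (pick S i u).1 ∈ QJ S i t0 Nf (J+1)
      rw [(stage_succ_odd S i t0 Nf hpar).2.1]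
      exact spawn_mem_1 S i (by simpa using hbJ)
    · have hpar : Even J := by simp [hJ, parity_simps]
      show (pick S i u).1 ∈ PJ S i t0 Nf (J+1)
      rw [(stage_succ_even S i t0 Nf hpar).1]
      exact spawn_mem_1 S i (by simpa using hbJ)
  have hymem : (pick S i u).2 ∈ (if useP then PJ S i t0 Nf else QJ S i t0 Nf) (J+1) := by
    rcases useP with _ | _
    · have hpar : ¬ Even J := by simp [hJ, Nat.even_add_one, parity_simps]
      show (pick S i u).2 ∈ QJ S i t0 Nf (J+1)
      rw [(stage_succ_odd S i t0 Nf hpar).2.1]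
      exact spawn_mem_2 S i (by simpa using hbJ)
    · have hpar : Even J := by simp [hJ, parity_simps]
      show (pick S i u).2 ∈ PJ S i t0 Nf (J+1)
      rw [(stage_succ_even S i t0 Nf hpar).1]
      exact spawn_mem_2 S i (by simpa using hbJ)
  refine ⟨(pick S i u).1, ⟨J+1, _, hxmem, 0, by rw [pad_zero]⟩,
         (pick S i u).2, ⟨J+1, _, hymem, 0, by rw [pad_zero]⟩,
         hsu.trans hspec.1, hsu.trans hspec.2.1, hspec.2.2.1, hspec.2.2.2.1⟩

lemma tree_perfect (hrich : Rich S i t0) (useP : Bool) :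
    IsPerfectTree (Tr (if useP then PJ S i t0 Nf else QJ S i t0 Nf)) := by
  have hsplit := tree_split (Nf := Nf) hrich useP
  constructor
  · refine ⟨?_, ?_, ?_⟩
    · -- nonempty
      rcases useP with _ | _
      · exact ⟨(pick S i t0).2, ⟨0, (pick S i t0).2, by simp [QJ, stage], 0, by rw [pad_zero]⟩⟩
      · exact ⟨(pick S i t0).1, ⟨0, (pick S i t0).1, by simp [PJ, stage], 0, by rw [pad_zero]⟩⟩
    · -- prefix closed
      rintro s ⟨j, b, hb, m, hsb⟩ t hts
      exact ⟨j, b, hb, m, hts.trans hsb⟩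
    · -- no maximal element
      intro s hs
      obtain ⟨x, hx, y, hy, hsx, hsy, hxy, hyx⟩ := hsplit s hs
      refine ⟨x, hx, hsx, ?_⟩
      intro hxs
      subst hxs
      exact hxy hsy
  · intro s hs
    obtain ⟨x, hx, y, hy, hsx, hsy, hxy, hyx⟩ := hsplit s hs
    exact ⟨x, hx, y, hy, hsx, hsy, hxy, hyx⟩

/-- key level-monochromaticity lemma for the `Q`-tree during a `P`-window -/
lemma level_mono_Q (hrich : Rich S i t0) (c : List Bool → Bool)
    {n : ℕ} (hn : ∀ v : List Bool, wt Nf v ≤ n → c (pad v (n - v.length)) = S v)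
    {j : ℕ} (hj1 : GJ S i t0 Nf j ≤ n) (hj2 : n < GJ S i t0 Nf (j+1)) (hpar : Even j) :
    ∀ s ∈ Tr (QJ S i t0 Nf), s.length = n → c s = i := by
  have key : ∀ j' (b : List Bool), b ∈ QJ S i t0 Nf j' →
      ∀ m (s : List Bool), s <+: pad b m → s.length = n → c s = i := by
    intro j'
    induction j' using Nat.strong_induction_on with
    | _ j' ih =>
      intro b hb m s hsb hsl
      rcases QJ_locate j j' b hb with hbj | ⟨k, hkodd, hjk, hkj', hknot, hkin⟩
      · -- b is an old base, stable at level n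
        have hwt : wt Nf b < GJ S i t0 Nf j := wt_lt_GJ S i t0 Nf (Finset.mem_union_right _ hbj)
        have hblen : b.length ≤ n := by
          have h1 : b.length ≤ wt Nf b := le_max_right _ _
          omega
        have hseq : s = pad b (n - b.length) := by
          have h2 := eq_pad_of_prefix hsb (by omega)
          rwa [hsl] at h2
        rw [hseq, hn b (by omega)]
        exact (base_props hrich j' b (Finset.mem_union_right _ hb)).2
      · -- b was spawned late, during or after the window
        obtain ⟨b', hb', hpadb'⟩ := QJ_new hkodd hkin hknot
        have hk1 : j + 1 ≤ k := by
          have hne : j ≠ k := fun hcon => hkodd (hcon ▸ hpar)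
          omega
        have hGk : n < GJ S i t0 Nf k :=
          lt_of_lt_of_le hj2 (GJ_mono S i t0 Nf hk1)
        have hwt' : wt Nf b' < GJ S i t0 Nf k := wt_lt_GJ S i t0 Nf (Finset.mem_union_right _ hb')
        have hb'len : b'.length ≤ GJ S i t0 Nf k := by
          have := le_max_right (Nf b') b'.length; unfold wt at hwt'; omega
        have hlenu : (pad b' (GJ S i t0 Nf k + 1 - b'.length)).length = GJ S i t0 Nf k + 1 := by
          rw [pad_length]; omega
        have hblen : n < b.length := by
          have := hpadb'.length_le
          omega
        have hsbb : s <+: b := prefix_pad_of_le (hsb) (by omega)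
        have hsu : s <+: pad b' (GJ S i t0 Nf k + 1 - b'.length) :=
          List.prefix_of_prefix_length_le hsbb hpadb' (by omega)
        exact ih k (by omega) b' hb' _ s hsu hsl
  rintro s ⟨j', b, hb, m, hsb⟩ hsl
  exact key j' b hb m s hsb hsl

/-- key level-monochromaticity lemma for the `P`-tree during a `Q`-window -/
lemma level_mono_P (hrich : Rich S i t0) (c : List Bool → Bool)
    {n : ℕ} (hn : ∀ v : List Bool, wt Nf v ≤ n → c (pad v (n - v.length)) = S v)
    {j : ℕ} (hj1 : GJ S i t0 Nf j ≤ n) (hj2 : n < GJ S i t0 Nf (j+1)) (hpar : ¬ Even j) :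
    ∀ s ∈ Tr (PJ S i t0 Nf), s.length = n → c s = i := by
  have key : ∀ j' (b : List Bool), b ∈ PJ S i t0 Nf j' →
      ∀ m (s : List Bool), s <+: pad b m → s.length = n → c s = i := by
    intro j'
    induction j' using Nat.strong_induction_on with
    | _ j' ih =>
      intro b hb m s hsb hsl
      rcases PJ_locate j j' b hb with hbj | ⟨k, hkeven, hjk, hkj', hknot, hkin⟩
      · -- b is an old base, stable at level n
        have hwt : wt Nf b < GJ S i t0 Nf j := wt_lt_GJ S i t0 Nf (Finset.mem_union_left _ hbj)
        have hblen : b.length ≤ n := by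
          have h1 : b.length ≤ wt Nf b := le_max_right _ _
          omega
        have hseq : s = pad b (n - b.length) := by
          have h2 := eq_pad_of_prefix hsb (by omega)
          rwa [hsl] at h2
        rw [hseq, hn b (by omega)]
        exact (base_props hrich j' b (Finset.mem_union_left _ hb)).2
      · -- b was spawned late, during or after the window
        obtain ⟨b', hb', hpadb'⟩ := PJ_new hkeven hkin hknot
        have hk1 : j + 1 ≤ k := by
          have hne : j ≠ k := fun hcon => hpar (hcon ▸ hkeven)
          omega
        have hGk : n < GJ S i t0 Nf k :=
          lt_of_lt_of_le hj2 (GJ_mono S i t0 Nf hk1)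
        have hwt' : wt Nf b' < GJ S i t0 Nf k := wt_lt_GJ S i t0 Nf (Finset.mem_union_left _ hb')
        have hb'len : b'.length ≤ GJ S i t0 Nf k := by
          have := le_max_right (Nf b') b'.length; unfold wt at hwt'; omega
        have hlenu : (pad b' (GJ S i t0 Nf k + 1 - b'.length)).length = GJ S i t0 Nf k + 1 := by
          rw [pad_length]; omega
        have hblen : n < b.length := by
          have := hpadb'.length_le
          omega
        have hsbb : s <+: b := prefix_pad_of_le (hsb) (by omega)
        have hsu : s <+: pad b' (GJ S i t0 Nf k + 1 - b'.length) :=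
          List.prefix_of_prefix_length_le hsbb hpadb' (by omega)
        exact ih k (by omega) b' hb' _ s hsu hsl
  rintro s ⟨j', b, hb, m, hsb⟩ hsl
  exact key j' b hb m s hsb hsl

end Construction

lemma incomp_of_diff_child {u x y : List Bool} {a b : Bool}
    (h1 : (u ++ [a]) <+: x) (h2 : (u ++ [b]) <+: y) (hab : a ≠ b) : ¬ x <+: y := by
  intro hxy
  have h1y : u ++ [a] <+: y := h1.trans hxy
  have heq : u ++ [a] = u ++ [b] := by
    apply List.IsPrefix.eq_of_length (List.prefix_of_prefix_length_le h1y h2 (by simp))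
    simp
  exact hab (by simpa using heq)

lemma exists_rich (S : List Bool → Bool) : ∃ t0 i, Rich S i t0 := by
  by_cases h0 : ∀ u : List Bool, ∃ q : List Bool × List Bool, Qp S false u q.1 q.2
  · exact ⟨[], false, fun u _ => h0 u⟩
  push_neg at h0
  obtain ⟨u₀, hu₀⟩ := h0
  -- a cone above some child of u₀ is monochromatic of colour `true`
  have hcone : ∃ a : Bool, ∀ x, (u₀ ++ [a]) <+: x → S x = true := by
    by_contra hcon
    push_neg at hcon
    obtain ⟨x, hx1, hx2⟩ := hcon false
    obtain ⟨y, hy1, hy2⟩ := hcon true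
    apply hu₀ (x, y)
    have hfx : S x = false := by simp at hx2; exact hx2
    have hfy : S y = false := by simp at hy2; exact hy2
    refine ⟨(List.prefix_append u₀ [false]).trans hx1, (List.prefix_append u₀ [true]).trans hy1,
      ?_, ?_, hfx, hfy⟩
    · exact incomp_of_diff_child hx1 hy1 (by simp)
    · exact incomp_of_diff_child hy1 hx1 (by simp)
  obtain ⟨a, ha⟩ := hcone
  refine ⟨u₀ ++ [a], true, ?_⟩
  intro u hu
  refine ⟨(u ++ [false], u ++ [true]), List.prefix_append u [false], List.prefix_append u [true],
    ?_, ?_, ?_, ?_⟩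
  · exact incomp_of_diff_child (List.prefix_rfl) (List.prefix_rfl) (by simp)
  · exact incomp_of_diff_child (List.prefix_rfl) (List.prefix_rfl) (by simp)
  · exact ha _ (hu.trans (List.prefix_append u [false]))
  · exact ha _ (hu.trans (List.prefix_append u [true]))

/-! ### Analysis: extracting a convergent positive subsequence -/

open Filter in
lemma compact_inter_finite {I : Set (Set ℕ)} (hI : IsIdealOn I) (f : ℕ → ℝ)
    (hfinj : Function.Injective f) {SB : Set ℝ} (Y : Set ℕ) (hfS : ∀ n ∈ Y, f n ∈ SB)
    (K : Set ℝ) (hK : IsCompact K) (hKacc : ∀ x ∈ K, ¬ AccPt x (Filter.principal SB)) :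
    {n | n ∈ Y ∧ f n ∈ K}.Finite := by
  by_contra hinf
  have hinf' : {n | n ∈ Y ∧ f n ∈ K}.Infinite := hinf
  set V : Set ℝ := f '' {n | n ∈ Y ∧ f n ∈ K} with hV
  have hVinf : V.Infinite := Set.Infinite.image (Set.injOn_of_injective hfinj) hinf'
  have hVK : V ⊆ K := by rintro x ⟨n, hn, rfl⟩; exact hn.2
  have hVS : V ⊆ SB := by rintro x ⟨n, hn, rfl⟩; exact hfS n hn.1
  set e := hVinf.natEmbedding with he
  set u : ℕ → ℝ := fun k => (e k : ℝ) with hu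
  have huinj : Function.Injective u := fun a b hab => e.injective (Subtype.ext hab)
  have huK : ∀ k, u k ∈ K := fun k => hVK (e k).2
  obtain ⟨x, hxK, φ, hφ, hconv⟩ := hK.tendsto_subseq huK
  apply hKacc x hxK
  rw [accPt_iff_nhds]
  intro U hU
  have hev : ∀ᶠ k in atTop, u (φ k) ∈ U := hconv.eventually_mem hU
  obtain ⟨N, hN⟩ := hev.exists_forall_of_atTop
  have h1 : u (φ N) ∈ U := hN N (le_refl N)
  have h2 : u (φ (N+1)) ∈ U := hN (N+1) (by omega)
  have hne : u (φ N) ≠ u (φ (N+1)) := fun hc => by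
    have := huinj hc
    have := hφ.injective this
    omega
  by_cases hx1 : u (φ N) = x
  · exact ⟨u (φ (N+1)), ⟨h2, hVS (e (φ (N+1))).2⟩, by rw [← hx1]; exact fun hc => hne hc.symm⟩
  · exact ⟨u (φ N), ⟨h1, hVS (e (φ N)).2⟩, hx1⟩

lemma ideal_biUnion {I : Set (Set ℕ)} (hI : IsIdealOn I) {β : Type} {T : Set β}
    (hT : T.Finite) {g : β → Set ℕ} (hg : ∀ x ∈ T, g x ∈ I) : (⋃ x ∈ T, g x) ∈ I := by
  classical
  revert hg
  refine Set.Finite.induction_on T hT ?_ ?_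
  · intro _
    simpa using hI.1 ∅ finite_empty
  · intro a s ha hs ih hg
    rw [Set.biUnion_insert]
    exact hI.2.2.2 _ _ (hg a (Set.mem_insert a s))
      (ih (fun x hx => hg x (Set.mem_insert_of_mem _ hx)))

lemma exists_convergent {I : Set (Set ℕ)} (hI : IsIdealOn I) (f : ℕ → ℝ)
    (hfinj : Function.Injective f) (hrange : ∀ n, f n ∈ Icc (0:ℝ) 1)
    {SB : Set ℝ} (hSB : {x : ℝ | AccPt x (Filter.principal SB)}.Finite)
    {X : Set ℕ} (hX : X ∉ I) (hfS : ∀ n ∈ X, f n ∈ SB) :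
    ∃ (X₀ : Set ℕ) (ξ : ℝ), X₀ ∉ I ∧ X₀ ⊆ X ∧
      ∀ δ : ℝ, 0 < δ → {n | n ∈ X₀ ∧ δ ≤ |f n - ξ|}.Finite := by
  classical
  set T := {x : ℝ | AccPt x (Filter.principal SB)} with hTdef
  -- select a point all whose neighbourhoods have positive preimage
  have hsel : ∃ x ∈ T, ∀ δ : ℝ, 0 < δ → {n | n ∈ X ∧ |f n - x| < δ} ∉ I := by
    by_contra hcon
    push_neg at hcon
    have hch : ∀ x : ℝ, ∃ δ : ℝ, 0 < δ ∧ (x ∈ T → {n | n ∈ X ∧ |f n - x| < δ} ∈ I) := by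
      intro x
      by_cases hx : x ∈ T
      · obtain ⟨δ, hδ1, hδ2⟩ := hcon x hx
        exact ⟨δ, hδ1, fun _ => hδ2⟩
      · exact ⟨1, one_pos, fun hc => absurd hc hx⟩
    choose δf hδpos hδI using hch
    set K : Set ℝ := Icc (0:ℝ) 1 ∩ ⋂ x ∈ T, {y : ℝ | δf x ≤ |y - x|} with hKdef
    have hKcl : IsClosed (⋂ x ∈ T, {y : ℝ | δf x ≤ |y - x|}) := by
      apply isClosed_biInter
      intro x _
      exact isClosed_le continuous_const ((continuous_id.sub continuous_const).abs)
    have hKcp : IsCompact K := isCompact_Icc.inter_right hKcl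
    have hKacc : ∀ y ∈ K, ¬ AccPt y (Filter.principal SB) := by
      intro y hy hacc
      have hyT : y ∈ T := hacc
      have := hy.2
      rw [Set.mem_iInter₂] at this
      have h2 := this y hyT
      simp only [Set.mem_setOf_eq, sub_self, abs_zero] at h2
      exact absurd (lt_of_lt_of_le (hδpos y) h2) (lt_irrefl 0)
    have hfin := compact_inter_finite hI f hfinj X hfS K hKcp hKacc
    apply hX
    have hcover : X ⊆ {n | n ∈ X ∧ f n ∈ K} ∪ ⋃ x ∈ T, {n | n ∈ X ∧ |f n - x| < δf x} := by
      intro n hn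
      by_cases hball : ∃ x ∈ T, |f n - x| < δf x
      · obtain ⟨x, hx1, hx2⟩ := hball
        exact Or.inr (Set.mem_biUnion hx1 ⟨hn, hx2⟩)
      · push_neg at hball
        refine Or.inl ⟨hn, hrange n, ?_⟩
        rw [Set.mem_iInter₂]
        exact fun x hx => hball x hx
    apply hI.2.2.1 _ _ hcover
    exact hI.2.2.2 _ _ (hI.1 _ hfin) (ideal_biUnion hI hSB (fun x hx => hδI x hx))
  obtain ⟨x₀, hx₀T, hx₀⟩ := hsel
  -- a radius separating x₀ from the rest of T
  have hδstar : ∃ δs : ℝ, 0 < δs ∧ ∀ y ∈ T, y ≠ x₀ → δs < |y - x₀| := by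
    set T' := T ∩ {y : ℝ | y ≠ x₀} with hT'
    have hT'fin : T'.Finite := hSB.subset Set.inter_subset_left
    by_cases hne : T'.Nonempty
    · have hFne : hT'fin.toFinset.Nonempty := by
        rwa [Set.Finite.toFinset_nonempty]
      set d := hT'fin.toFinset.inf' hFne (fun y => |y - x₀|) with hd
      have hdpos : 0 < d := by
        rw [hd, Finset.lt_inf'_iff]
        intro y hy
        rw [Set.Finite.mem_toFinset] at hy
        exact abs_pos.mpr (sub_ne_zero.mpr hy.2)
      refine ⟨d/2, by linarith, ?_⟩
      intro y hy hyne
      have hmem : y ∈ hT'fin.toFinset := by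
        rw [Set.Finite.mem_toFinset]; exact ⟨hy, hyne⟩
      have := Finset.inf'_le (fun y => |y - x₀|) hmem
      calc d/2 < d := by linarith
        _ ≤ |y - x₀| := this
    · refine ⟨1, one_pos, ?_⟩
      intro y hy hyne
      exact absurd ⟨hy, hyne⟩ (fun hc => hne ⟨y, hc⟩)
  obtain ⟨δs, hδs, hsep⟩ := hδstar
  refine ⟨{n | n ∈ X ∧ |f n - x₀| < δs}, x₀, hx₀ δs hδs, fun n hn => hn.1, ?_⟩
  intro δ hδ
  set K : Set ℝ := Icc (0:ℝ) 1 ∩ {y : ℝ | δ ≤ |y - x₀|} ∩ {y : ℝ | |y - x₀| ≤ δs} with hKdef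
  have hKcp : IsCompact K := by
    apply IsCompact.inter_right
    · exact isCompact_Icc.inter_right (isClosed_le continuous_const ((continuous_id.sub continuous_const).abs))
    · exact isClosed_le ((continuous_id.sub continuous_const).abs) continuous_const
  have hKacc : ∀ y ∈ K, ¬ AccPt y (Filter.principal SB) := by
    intro y hy hacc
    have hyT : y ∈ T := hacc
    by_cases hyx : y = x₀
    · subst hyx
      have := hy.1.2
      simp only [Set.mem_setOf_eq, sub_self, abs_zero] at this
      linarith
    · exact absurd hy.2 (not_le.mpr (hsep y hyT hyx))
  have hfin := compact_inter_finite hI f hfinj X hfS K hKcp hKacc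
  apply hfin.subset
  rintro n ⟨⟨hnX, hnδs⟩, hnδ⟩
  exact ⟨hnX, ⟨⟨hrange n, hnδ⟩, le_of_lt hnδs⟩⟩

/-! ### stabilization of all coordinates along the convergent positive set -/

lemma stab_all (c : List Bool → Bool) {X₀ : Set ℕ} (hX₀inf : X₀.Infinite) {ξ : ℝ}
    (hconv : ∀ δ : ℝ, 0 < δ → {n | n ∈ X₀ ∧ δ ≤ |valR c n - ξ|}.Finite) :
    ∀ v : List Bool, ∃ (b : Bool) (N : ℕ), v.length ≤ N ∧
      ∀ n ∈ X₀, N ≤ n → c (pad v (n - v.length)) = b := by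
  intro v
  set j := 2 * enc v + 1 with hj
  have hδ : (0:ℝ) < (1/3) ^ (j+2) := by positivity
  obtain ⟨M, hM⟩ := (hconv _ hδ).bddAbove
  have hclose : ∀ n ∈ X₀, M + 1 ≤ n → |valR c n - ξ| < (1/3) ^ (j+2) := by
    intro n hn hMn
    by_contra hc
    push_neg at hc
    have : n ≤ M := hM ⟨hn, hc⟩
    omega
  obtain ⟨n₁, hn₁X, hn₁M⟩ := hX₀inf.exists_gt (max M v.length)
  refine ⟨c (pad v (n₁ - v.length)), max (M+1) v.length, le_max_right _ _, ?_⟩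
  intro n hn hNn
  have hn1 : M + 1 ≤ n := le_trans (le_max_left _ _) hNn
  have h1 := hclose n hn hn1
  have h2 := hclose n₁ hn₁X (by omega)
  have hcl : |valR c n - valR c n₁| < ((1:ℝ)/3) ^ (j+1) := by
    have habs : |valR c n - valR c n₁| ≤ |valR c n - ξ| + |ξ - valR c n₁| := abs_sub_le _ _ _
    have habs2 : |ξ - valR c n₁| = |valR c n₁ - ξ| := abs_sub_comm _ _
    have hpow : 2 * ((1:ℝ)/3)^(j+2) < (1/3)^(j+1) := by
      have hh : ((1:ℝ)/3)^(j+2) = (1/3)^(j+1) * (1/3) := by ring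
      rw [hh]
      nlinarith [pow_pos (show (0:ℝ) < 1/3 by norm_num) (j+1)]
    linarith
  have hag := stab_of_close c hcl j (le_refl j)
  rw [hj] at hag
  rw [code_coord c (show v.length ≤ n by have := le_max_right (M+1) v.length; omega),
    code_coord c (show v.length ≤ n₁ by omega)] at hag
  exact hag

end HLK

/-- If an ideal `I` on `ω` is not HL, then `conv ≤_K I`. -/
theorem stmt12 (I : Set (Set ℕ)) (hI : IsIdealOn I) (h : ¬ IsHLIdeal I) :
    KatetovLE convIdeal I := by
  classical
  open HLK in
  rw [IsHLIdeal, IsHLFamily] at h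
  obtain ⟨c, hc⟩ := not_forall.mp h
  -- the homogeneous level sets of any perfect tree are in `I`
  have hbad : ∀ p : Set (List Bool), IsPerfectTree p → ∀ i : Bool,
      {n : ℕ | ∀ s ∈ p, s.length = n → c s = i} ∈ I := by
    intro p hp i
    by_contra hni
    have hinf : {n : ℕ | ∀ s ∈ p, s.length = n → c s = i}.Infinite := by
      by_contra hfin
      exact hni (hI.1 _ (Set.not_infinite.mp hfin))
    exact hc ⟨p, {n : ℕ | ∀ s ∈ p, s.length = n → c s = i}, ⟨hni, hinf⟩, hp, i,
      fun s hs => hs.2 s hs.1 rfl⟩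
  refine ⟨fun n => ⟨HLK.valQ c n, Set.mem_Icc.mpr ⟨HLK.valQ_nonneg c n, HLK.valQ_le_one c n⟩⟩, ?_⟩
  intro A hA
  by_contra hX
  set f : ℕ → ↥(Icc (0:ℚ) 1) :=
    fun n => ⟨HLK.valQ c n, Set.mem_Icc.mpr ⟨HLK.valQ_nonneg c n, HLK.valQ_le_one c n⟩⟩ with hfdef
  set fR : ℕ → ℝ := fun n => HLK.valR c n with hfRdef
  have hfRinj : Function.Injective fR := by
    intro n m hnm
    by_contra hne
    exact HLK.valR_inj c hne hnm
  have hrange : ∀ n, fR n ∈ Icc (0:ℝ) 1 :=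
    fun n => ⟨HLK.valR_nonneg c n, HLK.valR_le_one c n⟩
  set SB : Set ℝ := (fun q : ↥(Icc (0 : ℚ) 1) => ((q : ℚ) : ℝ)) '' A with hSBdef
  have hSBfin : {x : ℝ | AccPt x (Filter.principal SB)}.Finite := hA
  have hfS : ∀ n ∈ f ⁻¹' A, fR n ∈ SB := by
    intro n hn
    exact ⟨f n, hn, HLK.valR_eq_cast c n⟩
  obtain ⟨X₀, ξ, hX₀, hX₀sub, hconv⟩ :=
    HLK.exists_convergent hI fR hfRinj hrange hSBfin hX hfS
  have hX₀inf : X₀.Infinite := by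
    by_contra hfin
    exact hX₀ (hI.1 _ (Set.not_infinite.mp hfin))
  -- stabilized limit colouring and thresholds
  choose Sb Nf hNf1 hNf2 using HLK.stab_all c hX₀inf hconv
  -- richness
  obtain ⟨t0, i, hrich⟩ := HLK.exists_rich Sb
  -- the two perfect trees
  have hPperf : IsPerfectTree (HLK.Tr (HLK.PJ Sb i t0 Nf)) := by
    have := HLK.tree_perfect (Nf := Nf) hrich true
    simpa using this
  have hQperf : IsPerfectTree (HLK.Tr (HLK.QJ Sb i t0 Nf)) := by
    have := HLK.tree_perfect (Nf := Nf) hrich false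
    simpa using this
  have hLP := hbad _ hPperf i
  have hLQ := hbad _ hQperf i
  -- covering of X₀
  have hcover : X₀ ⊆ ({n : ℕ | ∀ s ∈ HLK.Tr (HLK.PJ Sb i t0 Nf), s.length = n → c s = i} ∪
      {n : ℕ | ∀ s ∈ HLK.Tr (HLK.QJ Sb i t0 Nf), s.length = n → c s = i}) ∪
      Iio (HLK.GJ Sb i t0 Nf 0) := by
    intro n hn
    by_cases hsmall : n < HLK.GJ Sb i t0 Nf 0
    · exact Or.inr hsmall
    · push_neg at hsmall
      left
      set Pr : ℕ → Prop := fun j => HLK.GJ Sb i t0 Nf j ≤ n with hPr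
      have hP0 : Pr 0 := hsmall
      set j := Nat.findGreatest Pr n with hjdef
      have hPj : Pr j := Nat.findGreatest_spec (Nat.zero_le n) hP0
      have hj2 : n < HLK.GJ Sb i t0 Nf (j+1) := by
        by_contra hcon
        push_neg at hcon
        have hge := HLK.GJ_ge Sb i t0 Nf (j+1)
        have hj1n : j + 1 ≤ n := by omega
        have : j + 1 ≤ Nat.findGreatest Pr n := Nat.le_findGreatest (P := Pr) hj1n hcon
        omega
      have hn1 : ∀ v : List Bool, HLK.wt Nf v ≤ n → c (HLK.pad v (n - v.length)) = Sb v := by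
        intro v hv
        exact hNf2 v n hn (le_trans (le_max_left _ _) hv)
      by_cases hpar : Even j
      · exact Or.inr (fun s hs hsl => HLK.level_mono_Q hrich c hn1 hPj hj2 hpar s hs hsl)
      · exact Or.inl (fun s hs hsl => HLK.level_mono_P hrich c hn1 hPj hj2 hpar s hs hsl)
  exact hX₀ (hI.2.2.1 _ _ hcover
    (hI.2.2.2 _ _ (hI.2.2.2 _ _ hLP hLQ) (hI.1 _ (finite_Iio _))))
end
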